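/- arXiv:1406.3408 — 9 statements merged into one kernel-verified Lean document; each statement's English description precedes it below -/
import Mathlib

section
/- Let 0 < R ≤ ∞, set I = [0,R), and let f : I → [0,∞). Let G be a tree with at least 3 vertices. Then the following are equivalent: (1) f_G[A] ∈ P_G for every A ∈ P_G(I); (2) f_T[A] ∈ P_T for every tree T and every A ∈ P_T(I); (3) f_{A_3}[A] ∈ P_{A_3} for every A ∈ P_{A_3}(I), where A_3 is the path graph on 3 vertices; (4) f satisfies f(√(xy))² ≤ f(x)·f(y) for all x,y ∈ I, and f is superadditive on I, i.e. f(x+y) ≥ f(x) + f(y) whenever x, y, x+y ∈ I. -/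
open Matrix
open scoped Classical ENNReal

/-- `A` has zeros according to the graph `G`: off-diagonal entries at non-edges vanish. -/
def sparsePattern {n : ℕ} (G : SimpleGraph (Fin n)) (A : Matrix (Fin n) (Fin n) ℝ) : Prop :=
  ∀ i j, i ≠ j → ¬ G.Adj i j → A i j = 0

/-- `A ∈ P_G(I)`: `A` is positive semidefinite, has entries in `I`,
and has zeros according to `G`. -/
def memPG {n : ℕ} (G : SimpleGraph (Fin n)) (I : Set ℝ) (A : Matrix (Fin n) (Fin n) ℝ) : Prop :=
  A.PosSemidef ∧ (∀ i j, A i j ∈ I) ∧ sparsePattern G A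

/-- The entrywise application `f_G[A]` of `f` to `A` according to the graph `G`. -/
noncomputable def applyG {n : ℕ} (G : SimpleGraph (Fin n)) (f : ℝ → ℝ)
    (A : Matrix (Fin n) (Fin n) ℝ) : Matrix (Fin n) (Fin n) ℝ :=
  Matrix.of fun i j => if i = j ∨ G.Adj i j then f (A i j) else 0

open SimpleGraph


lemma linear_coeff_zero {c d : ℝ} (h : ∀ t : ℝ, 0 ≤ c * t + d) : c = 0 := by
  by_contra hc
  have := h ((-(d+1))/c)
  rw [mul_div_cancel₀ _ hc] at this
  linarith

lemma quad_nonneg {a b d x y : ℝ} (ha : 0 ≤ a) (hd : 0 ≤ d) (hb : b^2 ≤ a*d) :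
    0 ≤ a*x^2 + 2*(b*(x*y)) + d*y^2 := by
  rcases ha.eq_or_lt with h | h
  · have hb2 : b^2 = 0 := le_antisymm (by rw [← h] at hb; linarith) (sq_nonneg b)
    have hb0 : b = 0 := by
      have := sq_eq_zero_iff.mp hb2; exact this
    rw [← h, hb0]
    have := sq_nonneg y
    nlinarith
  · have h1 : 0 ≤ (a*x + b*y)^2 + (a*d - b^2)*y^2 :=
      add_nonneg (sq_nonneg _) (mul_nonneg (by linarith) (sq_nonneg _))
    have h2 : (a*x+b*y)^2 + (a*d-b^2)*y^2 = a*(a*x^2 + 2*(b*(x*y)) + d*y^2) := by ring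
    rw [h2] at h1
    exact nonneg_of_mul_nonneg_right h1 h

lemma discrim_le {p q r : ℝ} (h : ∀ a b : ℝ, 0 ≤ p*a^2 + 2*(q*(a*b)) + r*b^2) :
    q^2 ≤ p*r := by
  have hp : 0 ≤ p := by have := h 1 0; nlinarith
  rcases hp.eq_or_lt with hp0 | hp0
  · have h2q : 2*q = 0 := by
      refine linear_coeff_zero (c := 2*q) (d := r) ?_
      intro t
      have := h t 1
      rw [← hp0] at this
      nlinarith
    have hq : q = 0 := by linarith
    rw [hq, ← hp0]
    nlinarith
  · have := h q (-p)
    have h2 : p*q^2 + 2*(q*(q*(-p))) + r*(-p)^2 = p*(p*r - q^2) := by ring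
    rw [h2] at this
    nlinarith

section Iset
variable {R : ℝ≥0∞} {I : Set ℝ}

lemma I_zero (hI : I = {x : ℝ | 0 ≤ x ∧ ENNReal.ofReal x < R}) (hR : 0 < R) : (0:ℝ) ∈ I := by
  rw [hI]; exact ⟨le_refl _, by simpa using hR⟩

lemma I_down (hI : I = {x : ℝ | 0 ≤ x ∧ ENNReal.ofReal x < R}) {a b : ℝ}
    (ha : a ∈ I) (hb : 0 ≤ b) (hba : b ≤ a) : b ∈ I := by
  rw [hI] at ha ⊢
  exact ⟨hb, lt_of_le_of_lt (ENNReal.ofReal_le_ofReal hba) ha.2⟩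

lemma I_nonneg (hI : I = {x : ℝ | 0 ≤ x ∧ ENNReal.ofReal x < R}) {a : ℝ} (ha : a ∈ I) :
    0 ≤ a := by rw [hI] at ha; exact ha.1

lemma I_sqrt (hI : I = {x : ℝ | 0 ≤ x ∧ ENNReal.ofReal x < R}) {x y : ℝ}
    (hx : x ∈ I) (hy : y ∈ I) : Real.sqrt (x*y) ∈ I := by
  have hx0 := I_nonneg hI hx
  have hy0 := I_nonneg hI hy
  rcases le_total x y with h | h
  · refine I_down hI hy (Real.sqrt_nonneg _) ?_
    calc Real.sqrt (x*y) ≤ Real.sqrt (y*y) := Real.sqrt_le_sqrt (by nlinarith)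
    _ = y := by rw [Real.sqrt_mul_self hy0]
  · refine I_down hI hx (Real.sqrt_nonneg _) ?_
    calc Real.sqrt (x*y) ≤ Real.sqrt (x*x) := Real.sqrt_le_sqrt (by nlinarith)
    _ = x := by rw [Real.sqrt_mul_self hx0]

/-- superadditive sum bound -/
lemma sum_f_le {f : ℝ → ℝ} (hI' : I = {x : ℝ | 0 ≤ x ∧ ENNReal.ofReal x < R})
    (hf : ∀ x ∈ I, 0 ≤ f x)
    (hsuper : ∀ x ∈ I, ∀ y ∈ I, x + y ∈ I → f x + f y ≤ f (x + y))
    {ι : Type*} (s : Finset ι) (g : ι → ℝ) (hg : ∀ i ∈ s, 0 ≤ g i)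
    {t : ℝ} (ht : t ∈ I) (hle : ∑ i ∈ s, g i ≤ t) :
    ∑ i ∈ s, f (g i) ≤ f t := by
  classical
  induction s using Finset.induction_on generalizing t with
  | empty => simpa using hf t ht
  | @insert a s ha ih =>
    rw [Finset.sum_insert ha] at hle ⊢
    have hga : 0 ≤ g a := hg a (Finset.mem_insert_self a s)
    have hS : 0 ≤ ∑ i ∈ s, g i := Finset.sum_nonneg fun i hi => hg i (Finset.mem_insert_of_mem hi)
    have hgaI : g a ∈ I := I_down hI' ht hga (by linarith)
    have htga : t - g a ∈ I := I_down hI' ht (by linarith) (by linarith)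
    have h1 : ∑ i ∈ s, f (g i) ≤ f (t - g a) :=
      ih (fun i hi => hg i (Finset.mem_insert_of_mem hi)) htga (by linarith)
    have h2 : f (g a) + f (t - g a) ≤ f t := by
      have := hsuper (g a) hgaI (t - g a) htga (by simpa using ht)
      simpa using this
    linarith
end Iset

section PSD
variable {m : ℕ}

lemma form_eq (A : Matrix (Fin m) (Fin m) ℝ) (x : Fin m → ℝ) :
    star x ⬝ᵥ A *ᵥ x = ∑ i, ∑ j, x i * A i j * x j := by
  simp [dotProduct, mulVec, Finset.mul_sum, mul_assoc]

lemma psd_form {A : Matrix (Fin m) (Fin m) ℝ} (hA : A.PosSemidef) (x : Fin m → ℝ) :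
    0 ≤ ∑ i, ∑ j, x i * A i j * x j := by
  rw [← form_eq]; exact hA.dotProduct_mulVec_nonneg x

lemma psd_of_form {A : Matrix (Fin m) (Fin m) ℝ} (hsym : ∀ i j, A i j = A j i)
    (h : ∀ x : Fin m → ℝ, 0 ≤ ∑ i, ∑ j, x i * A i j * x j) : A.PosSemidef := by
  rw [posSemidef_iff_dotProduct_mulVec]; constructor
  · ext i j
    simp [conjTranspose_apply, hsym i j]
  · intro x
    rw [form_eq]; exact h x

lemma psd_symm {A : Matrix (Fin m) (Fin m) ℝ} (hA : A.PosSemidef) (i j : Fin m) :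
    A i j = A j i := by
  have := congrFun (congrFun hA.1 j) i
  simpa [conjTranspose_apply] using this

lemma psd_two_form {A : Matrix (Fin m) (Fin m) ℝ} (hA : A.PosSemidef) (i j : Fin m)
    (α β : ℝ) :
    0 ≤ α^2 * A i i + α*β*(A i j + A j i) + β^2 * A j j := by
  have := hA.dotProduct_mulVec_nonneg (Pi.single i α + Pi.single j β)
  simp only [star_trivial, mulVec_add, mulVec_single, dotProduct_add, add_dotProduct,
    dotProduct_single, single_dotProduct, Pi.smul_apply, col_apply, op_smul_eq_mul] at this
  calc (0:ℝ) ≤ _ := this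
  _ = α^2 * A i i + α*β*(A i j + A j i) + β^2 * A j j := by ring

lemma psd_diag {A : Matrix (Fin m) (Fin m) ℝ} (hA : A.PosSemidef) (i : Fin m) :
    0 ≤ A i i := by
  have := psd_two_form hA i i 1 0
  nlinarith

lemma psd_three_form {A : Matrix (Fin m) (Fin m) ℝ} (hA : A.PosSemidef) (i j k : Fin m)
    (α β γ : ℝ) :
    0 ≤ α^2 * A i i + β^2 * A j j + γ^2 * A k k + α*β*(A i j + A j i)
      + α*γ*(A i k + A k i) + β*γ*(A j k + A k j) := by
  have := hA.dotProduct_mulVec_nonneg (Pi.single i α + Pi.single j β + Pi.single k γ)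
  simp only [star_trivial, mulVec_add, mulVec_single, dotProduct_add, add_dotProduct,
    dotProduct_single, single_dotProduct, Pi.smul_apply, col_apply, op_smul_eq_mul] at this
  calc (0:ℝ) ≤ _ := this
  _ = _ := by ring

lemma psd_row_zero {A : Matrix (Fin m) (Fin m) ℝ} (hA : A.PosSemidef) (i : Fin m)
    (h0 : A i i = 0) (j : Fin m) : A i j = 0 := by
  have hc : A i j + A j i = 0 := by
    refine linear_coeff_zero (c := A i j + A j i) (d := A j j) ?_
    intro t
    have := psd_two_form hA i j t 1
    rw [h0] at this
    calc (0:ℝ) ≤ _ := this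
    _ = (A i j + A j i) * t + A j j := by ring
  have := psd_symm hA i j
  linarith
end PSD

section Graph
variable {V : Type*} {G : SimpleGraph V}

lemma triangle_isCycle {a b c : V} (h1 : G.Adj a b) (h2 : G.Adj b c) (h3 : G.Adj c a) :
    (Walk.cons h1 (Walk.cons h2 (Walk.cons h3 Walk.nil))).IsCycle := by
  have hab := h1.ne
  have hbc := h2.ne
  have hca := h3.ne
  simp [Walk.isCycle_def, Walk.isTrail_cons, Sym2.eq_iff, List.Nodup, hab, hbc, hca,
    hab.symm, hbc.symm, hca.symm, Ne.symm]

lemma acyclic_no_triangle (hG : G.IsAcyclic) {a b c : V} (h1 : G.Adj a b) (h2 : G.Adj b c)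
    (h3 : G.Adj a c) : False :=
  hG _ (triangle_isCycle h1 h2 h3.symm)

lemma acyclic_of_triangle_free {m : ℕ} (hm : m ≤ 3) {G : SimpleGraph (Fin m)}
    (h : ∀ a b c : Fin m, G.Adj a b → G.Adj b c → G.Adj c a → False) : G.IsAcyclic := by
  intro v c hc
  have h3 : 3 ≤ c.length := hc.three_le_length
  have hle : c.length ≤ m := by
    have hnd : c.support.tail.Nodup := hc.support_nodup
    have := List.Nodup.length_le_card hnd
    have hlen : c.support.tail.length = c.length := by
      have := c.length_support
      simp [List.length_tail, this]
    simp [hlen, Fintype.card_fin] at this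
    exact this
  have hlen3 : c.length = 3 := le_antisymm (le_trans hle hm) h3
  clear hc hle h3
  cases c with
  | nil => simp at hlen3
  | cons h1 p =>
    cases p with
    | nil => simp at hlen3
    | cons h2 q =>
      cases q with
      | nil => simp at hlen3
      | cons h3 r =>
        cases r with
        | nil => exact h _ _ _ h1 h2 h3
        | cons h4 s => simp [Walk.length_cons] at hlen3

lemma exists_leaf {m : ℕ} {G : SimpleGraph (Fin m)} (hG : G.IsAcyclic)
    (hne : ∃ a b, G.Adj a b) :
    ∃ v u, G.Adj v u ∧ ∀ w, G.Adj v w → w = u := by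
  obtain ⟨a, b, hab⟩ := hne
  set P : ℕ → Prop := fun l => ∃ (x y : Fin m) (p : G.Walk x y), p.IsPath ∧ p.length = l with hP
  have hm1 : 1 ≤ m := a.pos
  have hP1 : P 1 := ⟨a, b, Walk.cons hab Walk.nil, (Path.singleton hab).2, by simp⟩
  set L := Nat.findGreatest P m with hLdef
  have hPL : P L := Nat.findGreatest_spec hm1 hP1
  have hL1 : 1 ≤ L := Nat.le_findGreatest hm1 hP1
  obtain ⟨x, y, p, hp, hlen⟩ := hPL
  cases p with
  | nil => simp at hlen; omega
  | @cons _ s _ h q =>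
    refine ⟨x, s, h, ?_⟩
    intro w hw
    by_contra hws
    rcases Classical.em (w ∈ (Walk.cons h q).support) with hin | hout
    · have hq' : ((Walk.cons h q).takeUntil w hin).IsPath := hp.takeUntil hin
      have hedge : s(w, x) ∉ ((Walk.cons h q).takeUntil w hin).edges := by
        intro hmem
        have hmem' : s(x, w) ∈ (Walk.cons h q).edges := by
          apply Walk.edges_takeUntil_subset _ hin
          rwa [Sym2.eq_swap] at hmem
        rw [Walk.edges_cons] at hmem'
        rcases List.mem_cons.mp hmem' with heq | hmem2
        · rcases Sym2.eq_iff.mp heq with ⟨-, h2⟩ | ⟨h1, -⟩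
          · exact hws h2
          · exact h.ne h1
        · have hxs : x ∈ q.support := Walk.fst_mem_support_of_mem_edges q hmem2
          exact ((Walk.cons_isPath_iff _ _).mp hp).2 hxs
      have hcyc := SimpleGraph.Path.cons_isCycle ⟨_, hq'⟩ hw.symm hedge
      exact hG _ hcyc
    · have hext : (Walk.cons hw.symm (Walk.cons h q)).IsPath := hp.cons hout
      have hlt : (Walk.cons hw.symm (Walk.cons h q)).length < m := by
        simpa using hext.length_lt
      have : L + 1 ≤ L := by
        refine Nat.le_findGreatest ?_ ⟨w, y, _, hext, by simp [Walk.length_cons, hlen]⟩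
        simp only [Walk.length_cons, hlen] at hlt
        omega
      omega

lemma crux_noedge {m : ℕ} (G : SimpleGraph (Fin m)) (h : ∀ a b, ¬ G.Adj a b)
    (A : Matrix (Fin m) (Fin m) ℝ) (hA : A.PosSemidef) :
    ∃ c : Fin m → Fin m → ℝ, (∀ i j, 0 ≤ c i j) ∧
      (∀ i j, G.Adj i j → c i j * c j i = (A i j)^2) ∧
      (∀ i, ∑ j ∈ G.neighborFinset i, c i j ≤ A i i) := by
  refine ⟨fun _ _ => 0, fun i j => le_refl _, fun i j hadj => absurd hadj (h i j), fun i => ?_⟩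
  have : G.neighborFinset i = ∅ := by
    ext w; simp [mem_neighborFinset, h]
  rw [this]
  simpa using psd_diag hA i

lemma crux (k : ℕ) : ∀ {m : ℕ} (G : SimpleGraph (Fin m)), G.edgeFinset.card ≤ k →
    G.IsAcyclic → ∀ A : Matrix (Fin m) (Fin m) ℝ, A.PosSemidef → sparsePattern G A →
    ∃ c : Fin m → Fin m → ℝ, (∀ i j, 0 ≤ c i j) ∧
      (∀ i j, G.Adj i j → c i j * c j i = (A i j)^2) ∧
      (∀ i, ∑ j ∈ G.neighborFinset i, c i j ≤ A i i) := by
  induction k with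
  | zero =>
    intro m G hcard hG A hA hsp
    refine crux_noedge G (fun a b hadj => ?_) A hA
    have hmem : s(a, b) ∈ G.edgeFinset := by
      rw [mem_edgeFinset, mem_edgeSet]; exact hadj
    have : G.edgeFinset = ∅ := Finset.card_eq_zero.mp (Nat.le_zero.mp hcard)
    rw [this] at hmem
    simp at hmem
  | succ k ih =>
    intro m G hcard hG A hA hsp
    by_cases hne : ∃ a b, G.Adj a b
    swap
    · push_neg at hne
      exact crux_noedge G hne A hA
    obtain ⟨v, u, hvu, hleaf⟩ := exists_leaf hG hne
    have hvune : v ≠ u := hvu.ne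
    have hAsym : ∀ i j, A i j = A j i := psd_symm hA
    set G' := G.deleteEdges {s(v,u)} with hG'def
    have hG'le : G' ≤ G := deleteEdges_le _
    have hG'acyc : G'.IsAcyclic := fun z c hc => hG _ (hc.mapLe hG'le)
    have hG'adj : ∀ a b, G'.Adj a b ↔ (G.Adj a b ∧ ¬ s(a,b) = s(v,u)) := by
      intro a b; rw [hG'def, deleteEdges_adj]; simp
    have hG'adj' : ∀ a b, a ≠ v → b ≠ v → G.Adj a b → G'.Adj a b := by
      intro a b hav hbv hadj
      rw [hG'adj]
      refine ⟨hadj, fun h => ?_⟩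
      rcases Sym2.eq_iff.mp h with ⟨h1, -⟩ | ⟨-, h2⟩
      · exact hav h1
      · exact hbv h2
    -- edge count decreases
    have hcard' : G'.edgeFinset.card ≤ k := by
      have hss : G'.edgeFinset ⊂ G.edgeFinset := by
        refine Finset.ssubset_iff_of_subset ?_ |>.mpr ?_
        · intro e he
          rw [mem_edgeFinset] at he ⊢
          exact edgeSet_mono hG'le he
        · refine ⟨s(v,u), ?_, ?_⟩
          · rw [mem_edgeFinset, mem_edgeSet]; exact hvu
          · rw [mem_edgeFinset, mem_edgeSet, hG'adj]
            simp
      have := Finset.card_lt_card hss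
      omega
    -- neighborhood facts
    have hNv : G.neighborFinset v = {u} := by
      ext z; simp only [mem_neighborFinset, Finset.mem_singleton]
      exact ⟨fun h => hleaf z h, fun h => h ▸ hvu⟩
    have hN' : ∀ i, i ≠ v → G'.neighborFinset i = (G.neighborFinset i).erase v := by
      intro i hiv
      ext z
      simp only [mem_neighborFinset, Finset.mem_erase]
      constructor
      · intro h
        have hadj : G.Adj i z := hG'le h
        refine ⟨fun hzv => ?_, hadj⟩
        subst hzv
        have hiu : i = u := hleaf i hadj.symm
        rw [hG'adj] at h
        exact h.2 (by rw [Sym2.eq_swap, hiu])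
      · rintro ⟨hzv, hadj⟩
        exact hG'adj' i z hiv hzv hadj
    rcases (psd_diag hA v).eq_or_lt with hvv0 | hvv0
    · -- A v v = 0
      have hAv : ∀ j, A v j = 0 := psd_row_zero hA v hvv0.symm
      have hsp' : sparsePattern G' A := by
        intro i j hij hnadj
        by_cases hadj : G.Adj i j
        · have heq : s(i,j) = s(v,u) := by
            by_contra hne2
            exact hnadj ((hG'adj i j).mpr ⟨hadj, hne2⟩)
          rcases Sym2.eq_iff.mp heq with ⟨rfl, rfl⟩ | ⟨rfl, rfl⟩
          · exact hAv _
          · rw [hAsym]; exact hAv _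
        · exact hsp i j hij hadj
      obtain ⟨c', hc'0, hc'prod, hc'sum⟩ := ih G' (by convert hcard') hG'acyc A hA hsp'
      refine ⟨fun i j => if i = v ∨ j = v then 0 else c' i j, ?_, ?_, ?_⟩
      · intro i j; dsimp only; split
        · exact le_refl _
        · exact hc'0 i j
      · intro i j hadj
        dsimp only
        by_cases hiv : i = v
        · rw [if_pos (Or.inl hiv), hiv, hAv]
          ring
        by_cases hjv : j = v
        · rw [if_pos (Or.inr hjv), hjv, hAsym, hAv]
          ring
        · rw [if_neg (by tauto), if_neg (by tauto)]
          exact hc'prod i j (hG'adj' i j hiv hjv hadj)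
      · intro i
        dsimp only
        by_cases hiv : i = v
        · rw [Finset.sum_congr rfl (fun j _ => if_pos (Or.inl hiv)), Finset.sum_const_zero, hiv]
          exact psd_diag hA v
        · have hsum' : ∑ j ∈ (G.neighborFinset i).erase v, c' i j ≤ A i i := by
            convert hc'sum i using 2; convert (hN' i hiv).symm
          by_cases hvmem : v ∈ G.neighborFinset i
          · rw [← Finset.sum_erase_add _ _ hvmem, if_pos (Or.inr rfl), add_zero,
              Finset.sum_congr rfl (fun j hj => if_neg ?_)]
            · exact hsum'
            · have := (Finset.mem_erase.mp hj).1
              tauto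
          · rw [Finset.erase_eq_of_notMem hvmem] at hsum'
            rw [Finset.sum_congr rfl (fun j hj => if_neg ?_)]
            · exact hsum'
            · have : j ≠ v := fun h => hvmem (h ▸ hj)
              tauto
    · -- 0 < A v v
      have hvvne : A v v ≠ 0 := ne_of_gt hvv0
      set sq := Real.sqrt (A v v) with hsqdef
      have hsq0 : 0 < sq := Real.sqrt_pos.mpr hvv0
      have hsqne : sq ≠ 0 := ne_of_gt hsq0
      have hsq2 : sq * sq = A v v := Real.mul_self_sqrt (le_of_lt hvv0)
      set w : Fin m → ℝ := fun z => if z = v then sq else if z = u then A u v / sq else 0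
        with hwdef
      have hwv : w v = sq := by rw [hwdef]; simp
      have hwu : w u = A u v / sq := by rw [hwdef]; simp [hvune.symm]
      have hw0 : ∀ z, z ≠ v → z ≠ u → w z = 0 := by
        intro z h1 h2; rw [hwdef]; simp [h1, h2]
      set B : Matrix (Fin m) (Fin m) ℝ := Matrix.of (fun i j => A i j - w i * w j) with hBdef
      have hB : ∀ a b, B a b = A a b - w a * w b := fun _ _ => rfl
      have hrow : ∀ j, B v j = 0 := by
        intro j
        rw [hB, hwv]
        by_cases hjv : j = v
        · rw [hjv, hwv, hsq2]; ring
        by_cases hju : j = u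
        · rw [hju, hwu, hAsym]
          field_simp
          ring
        · rw [hw0 j hjv hju, hsp v j (fun h => hjv h.symm) (fun h => hju (hleaf j h))]
          ring
      have hcol : ∀ j, B j v = 0 := by
        intro j
        have := hrow j
        rw [hB] at this ⊢
        rw [hAsym j v, mul_comm]
        exact this
      have hBpsd : B.PosSemidef := by
        apply psd_of_form
        · intro i j; rw [hB, hB, hAsym i j, mul_comm (w i)]
        · intro x
          set t : ℝ := -((A u v / sq) * x u) / sq with htdef
          set x' := Function.update x v t with hx'def
          have hx'ne : ∀ z, z ≠ v → x' z = x z := fun z hz => Function.update_of_ne hz _ _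
          have hx'v : x' v = t := Function.update_self _ _ _
          have hterm : ∀ i j : Fin m, x i * B i j * x j = x' i * B i j * x' j := by
            intro i j
            by_cases hiv : i = v
            · rw [hiv, hrow j]; ring
            by_cases hjv : j = v
            · rw [hjv, hcol i]; ring
            · rw [hx'ne i hiv, hx'ne j hjv]
          have hw0' : ∑ i, w i * x' i = 0 := by
            rw [Finset.sum_eq_add_of_mem v u (Finset.mem_univ v) (Finset.mem_univ u) hvune
              (fun z _ hz => by rw [hw0 z hz.1 hz.2]; ring)]
            rw [hwv, hwu, hx'v, hx'ne u (fun h => hvune h.symm), htdef]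
            field_simp
            ring
          calc (0:ℝ)
              ≤ ∑ i, ∑ j, x' i * A i j * x' j := psd_form hA x'
            _ = (∑ i, ∑ j, x' i * A i j * x' j) - (∑ i, w i * x' i) * (∑ j, w j * x' j) := by
                rw [hw0']; ring
            _ = ∑ i, ∑ j, x' i * B i j * x' j := by
                rw [Finset.sum_mul_sum]
                rw [← Finset.sum_sub_distrib]
                refine Finset.sum_congr rfl fun i _ => ?_
                rw [← Finset.sum_sub_distrib]
                refine Finset.sum_congr rfl fun j _ => ?_
                rw [hB]; ring
            _ = ∑ i, ∑ j, x i * B i j * x j := by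
                refine Finset.sum_congr rfl fun i _ => Finset.sum_congr rfl fun j _ => ?_
                rw [hterm]
      have hsp' : sparsePattern G' B := by
        intro i j hij hnadj
        by_cases hiv : i = v
        · rw [hiv]; exact hrow j
        by_cases hjv : j = v
        · rw [hjv]; exact hcol i
        · rw [hB]
          have hAij : A i j = 0 :=
            hsp i j hij (fun hadj => hnadj (hG'adj' i j hiv hjv hadj))
          rw [hAij]
          by_cases hiu : i = u
          · rw [hw0 j hjv (fun h => hij (by rw [hiu, h]))]; ring
          · rw [hw0 i hiv hiu]; ring
      obtain ⟨c', hc'0, hc'prod, hc'sum⟩ := ih G' (by convert hcard') hG'acyc B hBpsd hsp'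
      have hBoff : ∀ i j : Fin m, i ≠ j → i ≠ v → j ≠ v → B i j = A i j := by
        intro i j hij hiv hjv
        rw [hB]
        by_cases hiu : i = u
        · rw [hw0 j hjv (fun h => hij (by rw [hiu, h]))]; ring
        · rw [hw0 i hiv hiu]; ring
      set q : ℝ := (A u v)^2 / (A v v) with hqdef
      have hq0 : 0 ≤ q := div_nonneg (sq_nonneg _) (le_of_lt hvv0)
      refine ⟨fun i j => if i = v then (if j = u then A v v else 0)
        else if j = v then (if i = u then q else 0) else c' i j, ?_, ?_, ?_⟩
      · intro i j; dsimp only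
        split_ifs <;> first | exact le_of_lt hvv0 | exact hq0 | exact hc'0 i j | exact le_refl _
      · intro i j hadj
        dsimp only
        have hijne : i ≠ j := hadj.ne
        by_cases hiv : i = v
        · have hju : j = u := hleaf j (hiv ▸ hadj)
          have hjv : j ≠ v := by
            intro h
            rw [h] at hju
            exact hvune hju
          rw [if_pos hiv, if_pos hju, if_neg hjv, if_pos hiv, if_pos hju]
          rw [hiv, hju, hAsym v u, hqdef, mul_comm, div_mul_cancel₀ _ hvvne]
        by_cases hjv : j = v
        · have hiu : i = u := hleaf i (hjv ▸ hadj.symm)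
          rw [if_neg hiv, if_pos hjv, if_pos hiu, if_pos hjv, if_pos hiu]
          rw [hiu, hjv, hqdef, div_mul_cancel₀ _ hvvne]
        · rw [if_neg hiv, if_neg hjv, if_neg hjv, if_neg hiv]
          rw [← hBoff i j hijne hiv hjv]
          exact hc'prod i j (hG'adj' i j hiv hjv hadj)
      · intro i
        dsimp only
        by_cases hiv : i = v
        · rw [hiv, hNv, Finset.sum_singleton, if_pos rfl, if_pos rfl]
        · have hsum' : ∑ j ∈ (G.neighborFinset i).erase v, c' i j ≤ B i i := by
            convert hc'sum i using 2; convert (hN' i hiv).symm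
          rw [Finset.sum_congr rfl (fun j _ => if_neg hiv)]
          have hBii : B i i = A i i - w i * w i := hB i i
          by_cases hvmem : v ∈ G.neighborFinset i
          · rw [← Finset.sum_erase_add _ _ hvmem, if_pos rfl]
            have herase : ∑ j ∈ (G.neighborFinset i).erase v,
                (if j = v then (if i = u then q else 0) else c' i j)
                = ∑ j ∈ (G.neighborFinset i).erase v, c' i j :=
              Finset.sum_congr rfl (fun j hj => if_neg (Finset.mem_erase.mp hj).1)
            rw [herase]
            by_cases hiu : i = u
            · rw [if_pos hiu]
              have hwii : w i * w i = q := by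
                rw [hiu, hwu, hqdef, div_mul_div_comm, hsq2, ← pow_two]
              rw [hBii, hwii] at hsum'
              linarith
            · rw [if_neg hiu]
              have hwi : w i = 0 := hw0 i hiv hiu
              rw [hBii, hwi] at hsum'
              linarith
          · have herase := Finset.erase_eq_of_notMem hvmem
            rw [herase] at hsum'
            rw [Finset.sum_congr rfl (fun j hj => if_neg (fun h => hvmem (by rw [← h]; exact hj)))]
            rw [hBii] at hsum'
            have := mul_self_nonneg (w i)
            linarith

lemma master {R : ℝ≥0∞} {I : Set ℝ} (hI : I = {x : ℝ | 0 ≤ x ∧ ENNReal.ofReal x < R})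
    {f : ℝ → ℝ} (hf : ∀ x ∈ I, 0 ≤ f x)
    (hsqrt : ∀ x ∈ I, ∀ y ∈ I, (f (Real.sqrt (x*y)))^2 ≤ f x * f y)
    (hsuper : ∀ x ∈ I, ∀ y ∈ I, x + y ∈ I → f x + f y ≤ f (x+y))
    {m : ℕ} (G : SimpleGraph (Fin m)) (hG : G.IsAcyclic)
    (A : Matrix (Fin m) (Fin m) ℝ) (hA : memPG G I A) :
    memPG G Set.univ (applyG G f A) := by
  obtain ⟨hpsd, hent, hsp⟩ := hA
  obtain ⟨c, hc0, hcprod, hcsum⟩ := crux (G.edgeFinset.card) G (le_refl _) hG A hpsd hsp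
  have hAsym := psd_symm hpsd
  set M := applyG G f A with hMdef
  have hM : ∀ i j, M i j = if i = j ∨ G.Adj i j then f (A i j) else 0 := fun _ _ => rfl
  have hMsym : ∀ i j, M i j = M j i := by
    intro i j
    rw [hM, hM, hAsym i j, if_congr (or_congr eq_comm (G.adj_comm i j)) rfl rfl]
  refine ⟨psd_of_form hMsym ?_, fun i j => Set.mem_univ _, ?_⟩
  swap
  · intro i j hij hnadj
    rw [hM, if_neg (not_or.mpr ⟨hij, hnadj⟩)]
  intro x
  have hcI : ∀ i j, G.Adj i j → c i j ∈ I := by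
    intro i j hadj
    refine I_down hI (hent i i) (hc0 i j) ?_
    calc c i j ≤ ∑ z ∈ G.neighborFinset i, c i z :=
          Finset.single_le_sum (fun z _ => hc0 i z) ((G.mem_neighborFinset i j).mpr hadj)
      _ ≤ A i i := hcsum i
  have hdiag : ∀ i, ∑ j ∈ G.neighborFinset i, f (c i j) ≤ f (A i i) :=
    fun i => sum_f_le hI hf hsuper _ _ (fun j _ => hc0 i j) (hent i i) (hcsum i)
  have hpair : ∀ i j, G.Adj i j →
      0 ≤ f (c i j) * x i^2 + 2*(f (A i j)*(x i * x j)) + f (c j i) * x j^2 := by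
    intro i j hadj
    refine quad_nonneg (hf _ (hcI i j hadj)) (hf _ (hcI j i hadj.symm)) ?_
    have h1 := hsqrt _ (hcI i j hadj) _ (hcI j i hadj.symm)
    rw [hcprod i j hadj, Real.sqrt_sq (I_nonneg hI (hent i j))] at h1
    exact h1
  have hsplit : ∀ i j : Fin m, x i * M i j * x j
      = (if i = j then f (A i i) * x i^2 else 0)
        + (if G.Adj i j then x i * f (A i j) * x j else 0) := by
    intro i j
    rw [hM]
    by_cases hij : i = j
    · subst hij
      rw [if_pos (Or.inl rfl), if_pos rfl, if_neg (fun h => h.ne rfl)]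
      ring
    · rw [if_neg hij]
      by_cases hadj : G.Adj i j
      · rw [if_pos (Or.inr hadj), if_pos hadj]
        ring
      · rw [if_neg (not_or.mpr ⟨hij, hadj⟩), if_neg hadj]
        ring
  have e1 : ∑ i, ∑ j, x i * M i j * x j
      = (∑ i, f (A i i) * x i^2)
        + ∑ i, ∑ j, (if G.Adj i j then x i * f (A i j) * x j else 0) := by
    have h1 : ∀ i : Fin m, ∑ j, x i * M i j * x j
        = f (A i i) * x i^2 + ∑ j, (if G.Adj i j then x i * f (A i j) * x j else 0) := by
      intro i
      rw [Finset.sum_congr rfl (fun j _ => hsplit i j), Finset.sum_add_distrib,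
        Finset.sum_ite_eq Finset.univ i (fun _ => f (A i i) * x i^2),
        if_pos (Finset.mem_univ i)]
    rw [Finset.sum_congr rfl (fun i _ => h1 i), Finset.sum_add_distrib]
  have hnb : ∀ (i : Fin m) (g : Fin m → ℝ),
      ∑ j ∈ G.neighborFinset i, g j = ∑ j, (if G.Adj i j then g j else 0) := by
    intro i g
    rw [neighborFinset_eq_filter, Finset.sum_filter]
  have e2 : ∑ i, (∑ j, (if G.Adj i j then f (c i j) else 0)) * x i^2
      ≤ ∑ i, f (A i i) * x i^2 := by
    refine Finset.sum_le_sum fun i _ => mul_le_mul_of_nonneg_right ?_ (sq_nonneg _)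
    rw [← hnb i (fun j => f (c i j))]
    exact hdiag i
  -- the pairing argument
  set T : Fin m → Fin m → ℝ := fun i j =>
    if G.Adj i j then f (c i j) * x i^2 + x i * f (A i j) * x j else 0 with hTdef
  have hT : ∀ i j, T i j = if G.Adj i j then f (c i j) * x i^2 + x i * f (A i j) * x j else 0 :=
    fun _ _ => rfl
  have hTT : ∀ i j, 0 ≤ T i j + T j i := by
    intro i j
    rw [hT, hT]
    by_cases hadj : G.Adj i j
    · rw [if_pos hadj, if_pos hadj.symm, hAsym j i]
      have := hpair i j hadj
      nlinarith [hpair i j hadj]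
    · rw [if_neg hadj, if_neg (fun h => hadj h.symm)]
      norm_num
  have e3 : 0 ≤ ∑ i, ∑ j, (T i j + T j i) :=
    Finset.sum_nonneg fun i _ => Finset.sum_nonneg fun j _ => hTT i j
  have e4 : ∑ i, ∑ j, (T i j + T j i) = (∑ i, ∑ j, T i j) + (∑ i, ∑ j, T i j) := by
    have : ∀ i : Fin m, ∑ j, (T i j + T j i) = (∑ j, T i j) + (∑ j, T j i) :=
      fun i => Finset.sum_add_distrib
    rw [Finset.sum_congr rfl (fun i _ => this i), Finset.sum_add_distrib]
    congr 1
    exact Finset.sum_comm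
  have e5 : 0 ≤ ∑ i, ∑ j, T i j := by linarith
  have e6 : ∑ i, ∑ j, T i j
      = (∑ i, (∑ j, (if G.Adj i j then f (c i j) else 0)) * x i^2)
        + ∑ i, ∑ j, (if G.Adj i j then x i * f (A i j) * x j else 0) := by
    have h1 : ∀ i j, T i j = (if G.Adj i j then f (c i j) else 0) * x i^2
        + (if G.Adj i j then x i * f (A i j) * x j else 0) := by
      intro i j
      rw [hT]
      by_cases hadj : G.Adj i j
      · rw [if_pos hadj, if_pos hadj, if_pos hadj]
      · rw [if_neg hadj, if_neg hadj, if_neg hadj]; ring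
    have h2 : ∀ i, ∑ j, T i j = (∑ j, (if G.Adj i j then f (c i j) else 0)) * x i^2
        + ∑ j, (if G.Adj i j then x i * f (A i j) * x j else 0) := by
      intro i
      rw [Finset.sum_congr rfl (fun j _ => h1 i j), Finset.sum_add_distrib, Finset.sum_mul]
    rw [Finset.sum_congr rfl (fun i _ => h2 i), Finset.sum_add_distrib]
  rw [e1]
  rw [e6] at e5
  linarith

lemma key_sqrt {R : ℝ≥0∞} {I : Set ℝ} (hI : I = {x : ℝ | 0 ≤ x ∧ ENNReal.ofReal x < R})
    (hR : 0 < R) {f : ℝ → ℝ} {n : ℕ} {G : SimpleGraph (Fin n)} {i j : Fin n} (hij : G.Adj i j)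
    (H : ∀ A : Matrix (Fin n) (Fin n) ℝ, memPG G I A → memPG G Set.univ (applyG G f A))
    {x y : ℝ} (hx : x ∈ I) (hy : y ∈ I) :
    (f (Real.sqrt (x * y))) ^ 2 ≤ f x * f y := by
  have hx0 : 0 ≤ x := I_nonneg hI hx
  have hy0 : 0 ≤ y := I_nonneg hI hy
  have hijne : i ≠ j := hij.ne
  set w : Fin n → ℝ := fun a => if a = i then Real.sqrt x else if a = j then Real.sqrt y else 0
    with hwdef
  have hwi : w i = Real.sqrt x := by rw [hwdef]; simp
  have hwj : w j = Real.sqrt y := by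
    rw [hwdef]; dsimp only; rw [if_neg (fun h => hijne h.symm), if_pos rfl]
  have hw0 : ∀ a, a ≠ i → a ≠ j → w a = 0 := by intro a h1 h2; rw [hwdef]; simp [h1, h2]
  set A : Matrix (Fin n) (Fin n) ℝ := Matrix.of (fun a b => w a * w b) with hAdef
  have hA : ∀ a b, A a b = w a * w b := fun _ _ => rfl
  have hApsd : A.PosSemidef := by
    apply psd_of_form
    · intro a b; rw [hA, hA]; ring
    · intro z
      have e : ∑ a, ∑ b, z a * A a b * z b = (∑ a, z a * w a) * (∑ b, z b * w b) := by
        rw [Finset.sum_mul_sum]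
        exact Finset.sum_congr rfl fun a _ => Finset.sum_congr rfl fun b _ => by rw [hA]; ring
      rw [e]
      exact mul_self_nonneg _
  have hent : ∀ a b, A a b ∈ I := by
    intro a b
    rw [hA]
    by_cases ha1 : a = i
    · by_cases hb1 : b = i
      · rw [ha1, hb1, hwi, Real.mul_self_sqrt hx0]; exact hx
      by_cases hb2 : b = j
      · rw [ha1, hb2, hwi, hwj, ← Real.sqrt_mul hx0]; exact I_sqrt hI hx hy
      · rw [hw0 b hb1 hb2, mul_zero]; exact I_zero hI hR
    by_cases ha2 : a = j
    · by_cases hb1 : b = i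
      · rw [ha2, hb1, hwi, hwj, mul_comm, ← Real.sqrt_mul hx0]; exact I_sqrt hI hx hy
      by_cases hb2 : b = j
      · rw [ha2, hb2, hwj, Real.mul_self_sqrt hy0]; exact hy
      · rw [hw0 b hb1 hb2, mul_zero]; exact I_zero hI hR
    · rw [hw0 a ha1 ha2, zero_mul]; exact I_zero hI hR
  have hsp : sparsePattern G A := by
    intro a b hab hnadj
    rw [hA]
    by_cases ha1 : a = i
    · have hb2 : b ≠ j := fun h => hnadj (by rw [ha1, h]; exact hij)
      have hb1 : b ≠ i := fun h => hab (by rw [ha1, h])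
      rw [hw0 b hb1 hb2, mul_zero]
    by_cases ha2 : a = j
    · have hb1 : b ≠ i := fun h => hnadj (by rw [ha2, h]; exact hij.symm)
      have hb2 : b ≠ j := fun h => hab (by rw [ha2, h])
      rw [hw0 b hb1 hb2, mul_zero]
    · rw [hw0 a ha1 ha2, zero_mul]
  obtain ⟨hMpsd, -, -⟩ := H A ⟨hApsd, hent, hsp⟩
  set M := applyG G f A with hMdef
  have hMii : M i i = f x := by
    show (if i = i ∨ G.Adj i i then f (A i i) else 0) = f x
    rw [if_pos (Or.inl rfl), hA, hwi, Real.mul_self_sqrt hx0]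
  have hMjj : M j j = f y := by
    show (if j = j ∨ G.Adj j j then f (A j j) else 0) = f y
    rw [if_pos (Or.inl rfl), hA, hwj, Real.mul_self_sqrt hy0]
  have hMij : M i j = f (Real.sqrt (x*y)) := by
    show (if i = j ∨ G.Adj i j then f (A i j) else 0) = f (Real.sqrt (x*y))
    rw [if_pos (Or.inr hij), hA, hwi, hwj, ← Real.sqrt_mul hx0]
  have hMji : M j i = f (Real.sqrt (x*y)) := by
    show (if j = i ∨ G.Adj j i then f (A j i) else 0) = f (Real.sqrt (x*y))
    rw [if_pos (Or.inr hij.symm), hA, hwi, hwj, mul_comm, ← Real.sqrt_mul hx0]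
  refine discrim_le (fun α β => ?_)
  have h2 := psd_two_form hMpsd i j α β
  rw [hMii, hMjj, hMij, hMji] at h2
  calc (0:ℝ) ≤ _ := h2
    _ = f x * α^2 + 2*(f (Real.sqrt (x*y))*(α*β)) + f y * β^2 := by ring

lemma key_super {R : ℝ≥0∞} {I : Set ℝ} (hI : I = {x : ℝ | 0 ≤ x ∧ ENNReal.ofReal x < R})
    (hR : 0 < R) {f : ℝ → ℝ} {n : ℕ} {G : SimpleGraph (Fin n)} {i j k : Fin n}
    (hij : G.Adj i j) (hjk : G.Adj j k) (hik : ¬ G.Adj i k) (hikne : i ≠ k)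
    (H : ∀ A : Matrix (Fin n) (Fin n) ℝ, memPG G I A → memPG G Set.univ (applyG G f A))
    {x y : ℝ} (hx : x ∈ I) (hy : y ∈ I) (hxy : x + y ∈ I) :
    f x + f y ≤ f (x + y) := by
  have hx0 : 0 ≤ x := I_nonneg hI hx
  have hy0 : 0 ≤ y := I_nonneg hI hy
  have hijne : i ≠ j := hij.ne
  have hjkne : j ≠ k := hjk.ne
  set w1 : Fin n → ℝ := fun a => if a = i ∨ a = j then 1 else 0 with hw1def
  set w2 : Fin n → ℝ := fun a => if a = j ∨ a = k then 1 else 0 with hw2def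
  have hw1i : w1 i = 1 := by rw [hw1def]; simp
  have hw1j : w1 j = 1 := by rw [hw1def]; simp
  have hw1k : w1 k = 0 := by
    rw [hw1def]; dsimp only
    rw [if_neg (not_or.mpr ⟨fun h => hikne h.symm, fun h => hjkne h.symm⟩)]
  have hw2i : w2 i = 0 := by
    rw [hw2def]; dsimp only; rw [if_neg (not_or.mpr ⟨hijne, hikne⟩)]
  have hw2j : w2 j = 1 := by rw [hw2def]; simp
  have hw2k : w2 k = 1 := by rw [hw2def]; simp
  have hw1mem : ∀ a, w1 a ≠ 0 → (a = i ∨ a = j) := by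
    intro a h; by_contra hc; exact h (by rw [hw1def]; simp only []; rw [if_neg hc])
  have hw2mem : ∀ a, w2 a ≠ 0 → (a = j ∨ a = k) := by
    intro a h; by_contra hc; exact h (by rw [hw2def]; simp only []; rw [if_neg hc])
  have hw1cases : ∀ a b, w1 a * w1 b = 0 ∨ w1 a * w1 b = 1 := by
    intro a b; rw [hw1def]; dsimp only; split_ifs <;> norm_num
  have hw2cases : ∀ a b, w2 a * w2 b = 0 ∨ w2 a * w2 b = 1 := by
    intro a b; rw [hw2def]; dsimp only; split_ifs <;> norm_num
  set A : Matrix (Fin n) (Fin n) ℝ :=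
    Matrix.of (fun a b => x * (w1 a * w1 b) + y * (w2 a * w2 b)) with hAdef
  have hA : ∀ a b, A a b = x * (w1 a * w1 b) + y * (w2 a * w2 b) := fun _ _ => rfl
  have hApsd : A.PosSemidef := by
    apply psd_of_form
    · intro a b; rw [hA, hA]; ring
    · intro z
      have e : ∑ a, ∑ b, z a * A a b * z b
          = x * ((∑ a, z a * w1 a) * (∑ b, z b * w1 b))
            + y * ((∑ a, z a * w2 a) * (∑ b, z b * w2 b)) := by
        rw [Finset.sum_mul_sum, Finset.sum_mul_sum, Finset.mul_sum, Finset.mul_sum,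
          ← Finset.sum_add_distrib]
        refine Finset.sum_congr rfl fun a _ => ?_
        rw [Finset.mul_sum, Finset.mul_sum, ← Finset.sum_add_distrib]
        refine Finset.sum_congr rfl fun b _ => ?_
        rw [hA]; ring
      rw [e]
      exact add_nonneg (mul_nonneg hx0 (mul_self_nonneg _)) (mul_nonneg hy0 (mul_self_nonneg _))
  have hent : ∀ a b, A a b ∈ I := by
    intro a b
    rw [hA]
    rcases hw1cases a b with h1 | h1 <;> rcases hw2cases a b with h2 | h2 <;>
      rw [h1, h2] <;> norm_num
    · exact I_zero hI hR
    · exact hy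
    · exact hx
    · exact hxy
  have hsp : sparsePattern G A := by
    intro a b hab hnadj
    rw [hA]
    have hz1 : w1 a * w1 b = 0 := by
      rcases hw1cases a b with h | h
      · exact h
      · exfalso
        have ha : w1 a ≠ 0 := fun hz => by rw [hz, zero_mul] at h; norm_num at h
        have hb : w1 b ≠ 0 := fun hz => by rw [hz, mul_zero] at h; norm_num at h
        rcases hw1mem a ha with rfl | rfl <;> rcases hw1mem b hb with rfl | rfl
        · exact hab rfl
        · exact hnadj hij
        · exact hnadj hij.symm
        · exact hab rfl
    have hz2 : w2 a * w2 b = 0 := by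
      rcases hw2cases a b with h | h
      · exact h
      · exfalso
        have ha : w2 a ≠ 0 := fun hz => by rw [hz, zero_mul] at h; norm_num at h
        have hb : w2 b ≠ 0 := fun hz => by rw [hz, mul_zero] at h; norm_num at h
        rcases hw2mem a ha with rfl | rfl <;> rcases hw2mem b hb with rfl | rfl
        · exact hab rfl
        · exact hnadj hjk
        · exact hnadj hjk.symm
        · exact hab rfl
    rw [hz1, hz2]
    ring
  obtain ⟨hMpsd, -, -⟩ := H A ⟨hApsd, hent, hsp⟩
  set M := applyG G f A with hMdef
  have hMii : M i i = f x := by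
    show (if i = i ∨ G.Adj i i then f (A i i) else 0) = f x
    rw [if_pos (Or.inl rfl), hA, hw1i, hw2i]
    norm_num
  have hMjj : M j j = f (x + y) := by
    show (if j = j ∨ G.Adj j j then f (A j j) else 0) = f (x + y)
    rw [if_pos (Or.inl rfl), hA, hw1j, hw2j]
    norm_num
  have hMkk : M k k = f y := by
    show (if k = k ∨ G.Adj k k then f (A k k) else 0) = f y
    rw [if_pos (Or.inl rfl), hA, hw1k, hw2k]
    norm_num
  have hMij : M i j = f x := by
    show (if i = j ∨ G.Adj i j then f (A i j) else 0) = f x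
    rw [if_pos (Or.inr hij), hA, hw1i, hw1j, hw2i]
    norm_num
  have hMji : M j i = f x := by
    show (if j = i ∨ G.Adj j i then f (A j i) else 0) = f x
    rw [if_pos (Or.inr hij.symm), hA, hw1i, hw1j, hw2i]
    norm_num
  have hMjk : M j k = f y := by
    show (if j = k ∨ G.Adj j k then f (A j k) else 0) = f y
    rw [if_pos (Or.inr hjk), hA, hw1k, hw2j, hw2k]
    norm_num
  have hMkj : M k j = f y := by
    show (if k = j ∨ G.Adj k j then f (A k j) else 0) = f y
    rw [if_pos (Or.inr hjk.symm), hA, hw1k, hw2j, hw2k]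
    norm_num
  have hMik : M i k = 0 := by
    show (if i = k ∨ G.Adj i k then f (A i k) else 0) = 0
    rw [if_neg (not_or.mpr ⟨hikne, hik⟩)]
  have hMki : M k i = 0 := by
    show (if k = i ∨ G.Adj k i then f (A k i) else 0) = 0
    rw [if_neg (not_or.mpr ⟨fun h => hikne h.symm, fun h => hik h.symm⟩)]
  have h3 := psd_three_form hMpsd i j k (-1) 1 (-1)
  rw [hMii, hMjj, hMkk, hMij, hMji, hMik, hMki, hMjk, hMkj] at h3
  nlinarith [h3]

theorem stmt0 (R : ℝ≥0∞) (hR : 0 < R) (I : Set ℝ)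
    (hI : I = {x : ℝ | 0 ≤ x ∧ ENNReal.ofReal x < R})
    (f : ℝ → ℝ) (hf : ∀ x ∈ I, 0 ≤ f x)
    {n : ℕ} (hn : 3 ≤ n) (G : SimpleGraph (Fin n)) (hG : G.IsTree) :
    List.TFAE
      [ ∀ A : Matrix (Fin n) (Fin n) ℝ, memPG G I A → memPG G Set.univ (applyG G f A),
        ∀ (m : ℕ) (T : SimpleGraph (Fin m)), T.IsTree →
          ∀ A : Matrix (Fin m) (Fin m) ℝ, memPG T I A → memPG T Set.univ (applyG T f A),
        ∀ A : Matrix (Fin 3) (Fin 3) ℝ, memPG (SimpleGraph.pathGraph 3) I A →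
          memPG (SimpleGraph.pathGraph 3) Set.univ (applyG (SimpleGraph.pathGraph 3) f A),
        (∀ x ∈ I, ∀ y ∈ I, (f (Real.sqrt (x * y))) ^ 2 ≤ f x * f y) ∧
          (∀ x ∈ I, ∀ y ∈ I, x + y ∈ I → f x + f y ≤ f (x + y)) ] := by
  have hptri : ∀ a b c : Fin 3, (pathGraph 3).Adj a b → (pathGraph 3).Adj b c →
      (pathGraph 3).Adj c a → False := by
    intro a b c h1 h2 h3
    rw [pathGraph_adj] at h1 h2 h3
    omega
  have hptree : (pathGraph 3).IsTree :=
    ⟨pathGraph_connected 2, acyclic_of_triangle_free (le_refl 3) hptri⟩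
  have hp01 : (pathGraph 3).Adj 0 1 := by rw [pathGraph_adj]; decide
  have hp12 : (pathGraph 3).Adj 1 2 := by rw [pathGraph_adj]; decide
  have hp02 : ¬ (pathGraph 3).Adj 0 2 := by rw [pathGraph_adj]; decide
  have h02ne : (0 : Fin 3) ≠ 2 := by decide
  obtain ⟨i, j, k, hij, hjk, hiknadj, hikne⟩ :
      ∃ i j k : Fin n, G.Adj i j ∧ G.Adj j k ∧ ¬ G.Adj i k ∧ i ≠ k := by
    have hcard : G.edgeFinset.card + 1 = n := by
      have := hG.card_edgeFinset
      rwa [Fintype.card_fin] at this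
    have hdeg : ∃ v, 2 ≤ G.degree v := by
      by_contra hc
      push_neg at hc
      have hsum := G.sum_degrees_eq_twice_card_edges
      have hle : ∑ v, G.degree v ≤ ∑ _v : Fin n, 1 :=
        Finset.sum_le_sum fun v _ => by have := hc v; omega
      simp only [Finset.sum_const, Finset.card_univ, Fintype.card_fin, smul_eq_mul,
        mul_one] at hle
      omega
    obtain ⟨v, hv⟩ := hdeg
    have h1 : 1 < (G.neighborFinset v).card := hv
    obtain ⟨a, ha, b, hb, hab⟩ := Finset.one_lt_card.mp h1
    refine ⟨a, v, b, ((G.mem_neighborFinset v a).mp ha).symm,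
      (G.mem_neighborFinset v b).mp hb, ?_, hab⟩
    intro h
    exact acyclic_no_triangle hG.2 ((G.mem_neighborFinset v a).mp ha).symm
      ((G.mem_neighborFinset v b).mp hb) h
  tfae_have 2 → 1 := fun h => h n G hG
  tfae_have 2 → 3 := fun h => h 3 (pathGraph 3) hptree
  tfae_have 4 → 2 := by
    rintro ⟨h1, h2⟩ m T hT A hA
    exact master hI hf h1 h2 T hT.2 A hA
  tfae_have 1 → 4 := by
    intro h
    exact ⟨fun x hx y hy => key_sqrt hI hR hij h hx hy,
      fun x hx y hy hxy => key_super hI hR hij hjk hiknadj hikne h hx hy hxy⟩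
  tfae_have 3 → 4 := by
    intro h
    exact ⟨fun x hx y hy => key_sqrt hI hR hp01 h hx hy,
      fun x hx y hy hxy => key_super hI hR hp01 hp12 hp02 h02ne h hx hy hxy⟩
  tfae_finish
end Graph
end

section
/- There exists a sequence of finite simple graphs (G_n)_{n ≥ 1} with sup_{n ≥ 1} Δ(G_n) = ∞, and a function f : ℝ → ℝ given by an everywhere-convergent power series f(x) = Σ_{k=0}^∞ a_k x^k that is not absolutely monotonic (i.e. a_k < 0 for at least one k), such that f_{G_n}[A] ∈ P_{G_n} for every n ≥ 1 and every A ∈ P_{G_n}([0,∞)). -/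
open Matrix
open scoped Classical ENNReal

/-! ### Auxiliary constructions for the proof -/

/-- The polynomial `h(u) = (1+u)^4 - 10 u^2 = 1 + 4u - 4u^2 + 4u^3 + u^4`. -/
def hhp (u : ℝ) : ℝ := (1+u)^4 - 10*u^2

/-- The odd polynomial `f(x) = x * h(x^2) = x + 4x^3 - 4x^5 + 4x^7 + x^9`.
It has a negative coefficient, but preserves positivity on star graphs. -/
def ffp (x : ℝ) : ℝ := x * hhp (x^2)

/-- Coefficient sequence of `ffp`. -/
def ap : ℕ → ℝ := fun k =>
  if k = 1 then 1 else if k = 3 then 4 else if k = 5 then -4 else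
  if k = 7 then 4 else if k = 9 then 1 else 0

lemma ap_supp (k : ℕ) (hk : k ∉ ({1,3,5,7,9} : Finset ℕ)) : ap k = 0 := by
  simp only [Finset.mem_insert, Finset.mem_singleton, not_or] at hk
  obtain ⟨h1,h3,h5,h7,h9⟩ := hk
  simp [ap, h1, h3, h5, h7, h9]

lemma ap_summable (x : ℝ) : Summable fun k => ap k * x ^ k :=
  summable_of_ne_finset_zero (s := {1,3,5,7,9})
    (fun k hk => by rw [ap_supp k hk, zero_mul])

lemma ap_tsum (x : ℝ) : ∑' k : ℕ, ap k * x ^ k = ffp x := by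
  rw [tsum_eq_sum (s := {1,3,5,7,9}) (fun k hk => by rw [ap_supp k hk, zero_mul])]
  have h : ({1,3,5,7,9} : Finset ℕ).sum (fun k => ap k * x ^ k)
      = ap 1 * x^1 + ap 3 * x^3 + ap 5 * x^5 + ap 7 * x^7 + ap 9 * x^9 := by
    norm_num [Finset.sum_insert, Finset.mem_insert]
    ring
  rw [h]
  simp only [ap, ffp, hhp]
  norm_num
  ring

lemma hh_nonneg (v : ℝ) (hv : 0 ≤ v) : 0 ≤ hhp v := by
  unfold hhp
  nlinarith [sq_nonneg ((1-v)*(1+v)), mul_nonneg hv (sq_nonneg (1-v)), sq_nonneg v]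

lemma hh_mono {v w : ℝ} (hv : 0 ≤ v) (hw : v ≤ w) : hhp v ≤ hhp w := by
  have h0w : 0 ≤ w := hv.trans hw
  have key : 0 ≤ (w - v) * ((w^3+w^2*v+w*v^2+v^3) + 4*(w^2+w*v+v^2) - 4*(w+v) + 4) :=
    mul_nonneg (by linarith)
      (by nlinarith [sq_nonneg (2*w-1), sq_nonneg (2*v-1), mul_nonneg hv h0w,
            pow_nonneg hv 3, pow_nonneg h0w 3,
            mul_nonneg (mul_nonneg h0w h0w) hv, mul_nonneg (mul_nonneg hv hv) h0w])
  unfold hhp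
  nlinarith [key]

lemma ff_nonneg (x : ℝ) (hx : 0 ≤ x) : 0 ≤ ffp x :=
  mul_nonneg hx (hh_nonneg _ (sq_nonneg x))

lemma ffp_zero : ffp 0 = 0 := by simp [ffp]

lemma Qp_nonneg (W y : ℝ) (hW : 0 ≤ W) (hy : 0 ≤ y) :
    0 ≤ 4 - 4*y + 4*y^2 + y^3 - 16*W + 24*W*y + 8*W*y^2 + 20*W^2 + 36*W^2*y + 4*W^2*y^2
      + 80*W^3 + 24*W^3*y + 20*W^4 - 4*W^4*y - 16*W^5 + 4*W^6 := by
  nlinarith [sq_nonneg (2*W*y - W^3 + 2*W^2), sq_nonneg (y-1), sq_nonneg (W^3 - 2*W^2),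
    sq_nonneg (W^2), mul_nonneg hW (sq_nonneg (4*W-1)), sq_nonneg (120*W-21),
    mul_nonneg hy hW, mul_nonneg (mul_nonneg hy hW) hW,
    mul_nonneg (mul_nonneg (mul_nonneg hy hW) hW) hW,
    mul_nonneg (mul_nonneg hy hy) hW, mul_nonneg hy hy, mul_nonneg (mul_nonneg hy hy) hy]

/-- The key "geometric convexity" inequality for `hhp`:
if `v² ≤ ab` then `h(v)² ≤ h(a) h(b)`. -/
lemma key_ineq (v a b : ℝ) (hv : 0 ≤ v) (ha : 0 ≤ a) (hb : 0 ≤ b) (h : v^2 ≤ a*b) :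
    hhp v ^ 2 ≤ hhp a * hhp b := by
  set W := Real.sqrt (a*b) with hWdef
  have hW0 : 0 ≤ W := Real.sqrt_nonneg _
  have hW2 : W^2 = a*b := Real.sq_sqrt (by positivity)
  have hvW : v ≤ W := by nlinarith [hW2, h, sq_nonneg (v - W), sq_nonneg (v + W)]
  have h1 : hhp v ≤ hhp W := hh_mono hv hvW
  have h1' : 0 ≤ hhp v := hh_nonneg v hv
  have h2 : hhp v ^ 2 ≤ hhp W ^ 2 := by nlinarith [h1, h1']
  refine h2.trans ?_
  have hy0 : 0 ≤ a + b - 2*W := by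
    have h3 : a*b ≤ ((a+b)/2)^2 := by nlinarith [sq_nonneg (a-b)]
    have h4 : W ≤ (a+b)/2 := by
      calc W ≤ Real.sqrt (((a+b)/2)^2) := Real.sqrt_le_sqrt h3
        _ = (a+b)/2 := Real.sqrt_sq (by positivity)
    linarith
  have hQ := Qp_nonneg W (a + b - 2*W) hW0 hy0
  have hid : hhp a * hhp b - hhp W ^ 2 =
      (a + b - 2*W) * (4 - 4*(a+b-2*W) + 4*(a+b-2*W)^2 + (a+b-2*W)^3 - 16*W
        + 24*W*(a+b-2*W) + 8*W*(a+b-2*W)^2 + 20*W^2 + 36*W^2*(a+b-2*W)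
        + 4*W^2*(a+b-2*W)^2 + 80*W^3 + 24*W^3*(a+b-2*W) + 20*W^4 - 4*W^4*(a+b-2*W)
        - 16*W^5 + 4*W^6) := by
    unfold hhp
    linear_combination (- 24 + 14*W^2 - 24*W^4 - W^6 + 28*b + 28*b*W^2 - 4*b*W^4
      - 12*b^2 + 4*b^2*W^2 - 4*b^3 + 28*a + 28*a*W^2 - 4*a*W^4 - 10*a*b - 16*a*b*W^2
      - a*b*W^4 + 16*a*b^2 - 4*a*b^2*W^2 + 4*a*b^3 - 12*a^2 + 4*a^2*W^2 + 16*a^2*b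
      - 4*a^2*b*W^2 - 16*a^2*b^2 - a^2*b^2*W^2 - 4*a^2*b^3 - 4*a^3 + 4*a^3*b
      - 4*a^3*b^2 - a^3*b^3) * hW2
  nlinarith [mul_nonneg hy0 hQ, hid]

/-- The star graph on `n+1` vertices, centred at `0`. -/
def starG (n : ℕ) : SimpleGraph (Fin (n+1)) where
  Adj i j := i ≠ j ∧ (i = 0 ∨ j = 0)
  symm := ⟨fun i j h => ⟨h.1.symm, h.2.symm⟩⟩
  loopless := ⟨fun i h => h.1 rfl⟩

/-- quadratic form of a star-pattern symmetric matrix -/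
lemma quadForm (n : ℕ) (B : Matrix (Fin (n+1)) (Fin (n+1)) ℝ)
    (hsym : ∀ i j, B i j = B j i)
    (hpat : ∀ i j : Fin (n+1), i ≠ j → i ≠ 0 → j ≠ 0 → B i j = 0)
    (x : Fin (n+1) → ℝ) :
    x ⬝ᵥ B.mulVec x = B 0 0 * x 0 * x 0
      + ∑ i ∈ Finset.univ.erase 0, (2 * B 0 i * x 0 * x i + B i i * x i * x i) := by
  have expand : x ⬝ᵥ B.mulVec x = ∑ i, x i * ∑ j, B i j * x j := by
    simp [dotProduct, Matrix.mulVec, Finset.mul_sum]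
  rw [expand]
  rw [← Finset.add_sum_erase _ _ (Finset.mem_univ (0 : Fin (n+1)))]
  have inner0 : ∑ j, B 0 j * x j = B 0 0 * x 0 + ∑ j ∈ Finset.univ.erase 0, B 0 j * x j :=
    (Finset.add_sum_erase _ _ (Finset.mem_univ (0 : Fin (n+1)))).symm
  have innerI : ∀ i ∈ Finset.univ.erase (0 : Fin (n+1)),
      x i * ∑ j, B i j * x j = B 0 i * x 0 * x i + B i i * x i * x i := by
    intro i hi
    have hi0 : i ≠ 0 := (Finset.mem_erase.1 hi).1
    have hinner : ∑ j, B i j * x j = B i 0 * x 0 + B i i * x i := by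
      rw [← Finset.add_sum_erase _ _ (Finset.mem_univ (0 : Fin (n+1)))]
      congr 1
      refine Finset.sum_eq_single_of_mem i (Finset.mem_erase.2 ⟨hi0, Finset.mem_univ _⟩) ?_
      intro j hj hne
      rw [hpat i j (Ne.symm hne) hi0 (Finset.mem_erase.1 hj).1, zero_mul]
    rw [hinner, hsym i 0]; ring
  rw [Finset.sum_congr rfl innerI, inner0]
  rw [mul_add, Finset.mul_sum, add_assoc, ← Finset.sum_add_distrib]
  rw [show x 0 * (B 0 0 * x 0) = B 0 0 * x 0 * x 0 from by ring]
  congr 1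
  exact Finset.sum_congr rfl (fun i _ => by ring)

lemma quadnn (p q r a b : ℝ) (hp : 0 ≤ p) (hr : 0 ≤ r) (hq : q^2 ≤ p*r) :
    0 ≤ p*(a*a) + 2*q*a*b + r*(b*b) := by
  rcases eq_or_lt_of_le hp with h|h
  · have hq2 : q^2 ≤ 0 := by rw [← h] at hq; simpa using hq
    have hq0 : q = 0 := by nlinarith [sq_nonneg q]
    rw [hq0, ← h]
    have := mul_nonneg hr (mul_self_nonneg b)
    nlinarith [this]
  · nlinarith [sq_nonneg (p*a + q*b), mul_nonneg (sub_nonneg.2 hq) (mul_self_nonneg b), h]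
lemma star_main (n : ℕ) (A : Matrix (Fin (n+1)) (Fin (n+1)) ℝ)
    (hA : memPG (starG n) (Set.Ici 0) A) :
    memPG (starG n) Set.univ (applyG (starG n) ffp A) := by
  classical
  obtain ⟨hPSD, hEnt, hPat⟩ := hA
  have hEnt' : ∀ i j, 0 ≤ A i j := fun i j => hEnt i j
  have hsymA : ∀ i j, A i j = A j i := by
    intro i j
    simpa using hPSD.1.apply j i
  have hpatA : ∀ i j : Fin (n+1), i ≠ j → i ≠ 0 → j ≠ 0 → A i j = 0 := by
    intro i j hij hi hj
    refine hPat i j hij ?_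
    intro hadj
    rcases hadj.2 with h|h
    · exact hi h
    · exact hj h
  set M := applyG (starG n) ffp A with hMdef
  have hM00 : M 0 0 = ffp (A 0 0) := by simp [hMdef, applyG]
  have hM0i : ∀ i : Fin (n+1), i ≠ 0 → M 0 i = ffp (A 0 i) := by
    intro i hi
    have hadj : (starG n).Adj 0 i := ⟨Ne.symm hi, Or.inl rfl⟩
    simp [hMdef, applyG, hadj]
  have hMii : ∀ i, M i i = ffp (A i i) := by intro i; simp [hMdef, applyG]
  have hMsym : ∀ i j, M i j = M j i := by
    intro i j
    by_cases hij : i = j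
    · subst hij; rfl
    · by_cases hadj : (starG n).Adj i j
      · simp [hMdef, applyG, hadj, hadj.symm, hsymA i j]
      · have hadj' : ¬ (starG n).Adj j i := fun hc => hadj hc.symm
        simp [hMdef, applyG, hij, Ne.symm hij, hadj, hadj']
  have hpatM : ∀ i j : Fin (n+1), i ≠ j → i ≠ 0 → j ≠ 0 → M i j = 0 := by
    intro i j hij hi hj
    have hadj : ¬ (starG n).Adj i j := by
      intro hadj; rcases hadj.2 with h|h; exacts [hi h, hj h]
    simp [hMdef, applyG, hij, hadj]
  -- quadratic form of A at special vectors
  have hq0 : ∀ x : Fin (n+1) → ℝ, 0 ≤ x ⬝ᵥ A.mulVec x := by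
    intro x
    have := hPSD.dotProduct_mulVec_nonneg x
    simpa using this
  have quad2 : ∀ i : Fin (n+1), i ≠ 0 → ∀ t s : ℝ,
      0 ≤ A 0 0 * t^2 + 2*(A 0 i)*t*s + A i i * s^2 := by
    intro i hi t s
    set x : Fin (n+1) → ℝ := fun j => if j = 0 then t else if j = i then s else 0 with hx
    have hq := hq0 x
    rw [quadForm n A hsymA hpatA x] at hq
    have hx0 : x 0 = t := by simp [hx]
    have hxi : x i = s := by simp [hx, hi]
    have hsum : ∑ j ∈ Finset.univ.erase (0 : Fin (n+1)),
        (2 * A 0 j * x 0 * x j + A j j * x j * x j)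
        = 2 * A 0 i * t * s + A i i * s * s := by
      rw [Finset.sum_eq_single_of_mem i (Finset.mem_erase.2 ⟨hi, Finset.mem_univ _⟩)]
      · rw [hx0, hxi]
      · intro j hj hne
        have hj0 : j ≠ 0 := (Finset.mem_erase.1 hj).1
        have hxj : x j = 0 := by simp [hx, hj0, hne]
        rw [hxj]; ring
    rw [hsum, hx0] at hq
    nlinarith [hq]
  have hd0 : 0 ≤ A 0 0 := hEnt' 0 0
  have hkey : ∀ i : Fin (n+1), i ≠ 0 → (A 0 i)^2 ≤ A 0 0 * A i i := by
    intro i hi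
    by_cases hd : A i i = 0
    · have h1 := quad2 i hi (A 0 i) (-(A 0 0 + 1))
      rw [hd] at h1
      have hc2 : (A 0 i)^2 ≤ 0 := by nlinarith [h1, hd0]
      have hc : (A 0 i)^2 = 0 := le_antisymm hc2 (sq_nonneg _)
      rw [hc, hd]; nlinarith [hd0]
    · have hdpos : 0 < A i i := lt_of_le_of_ne (hEnt' i i) (Ne.symm hd)
      have h1 := quad2 i hi (A i i) (-(A 0 i))
      nlinarith [h1, hdpos]
  set sfun : Fin (n+1) → ℝ := fun i => if A i i = 0 then 0 else (A 0 i)^2 / A i i with hsfun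
  have hs_nonneg : ∀ i, 0 ≤ sfun i := by
    intro i
    by_cases hd : A i i = 0
    · simp [hsfun, hd]
    · simp only [hsfun, if_neg hd]
      exact div_nonneg (sq_nonneg _) (hEnt' i i)
  have hssum : ∑ i ∈ Finset.univ.erase (0 : Fin (n+1)), sfun i ≤ A 0 0 := by
    set x : Fin (n+1) → ℝ :=
      fun j => if j = 0 then 1 else if A j j = 0 then 0 else -(A 0 j)/(A j j) with hx
    have hq := hq0 x
    rw [quadForm n A hsymA hpatA x] at hq
    have hx0 : x 0 = 1 := by simp [hx]
    have hterm : ∀ i ∈ Finset.univ.erase (0 : Fin (n+1)),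
        (2 * A 0 i * x 0 * x i + A i i * x i * x i) = - sfun i := by
      intro i hi
      have hi0 : i ≠ 0 := (Finset.mem_erase.1 hi).1
      by_cases hd : A i i = 0
      · have hxi : x i = 0 := by simp [hx, hi0, hd]
        simp [hxi, hsfun, hd]
      · have hxi : x i = -(A 0 i)/(A i i) := by simp [hx, hi0, hd]
        rw [hxi, hx0]
        simp only [hsfun, if_neg hd]
        field_simp
        ring
    rw [Finset.sum_congr rfl hterm, hx0] at hq
    rw [Finset.sum_neg_distrib] at hq
    linarith [hq]
  -- build memPG for M
  refine ⟨Matrix.posSemidef_iff_dotProduct_mulVec.mpr ⟨?_, ?_⟩, fun i j => Set.mem_univ _, ?_⟩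
  · -- IsHermitian
    ext i j
    simp only [Matrix.conjTranspose_apply, star_trivial]
    exact hMsym j i
  · -- quadratic form nonneg
    intro x
    rw [star_trivial]
    rw [quadForm n M hMsym hpatM x, hM00]
    have hrw : ∀ i ∈ Finset.univ.erase (0 : Fin (n+1)),
        (2 * M 0 i * x 0 * x i + M i i * x i * x i)
        = 2 * ffp (A 0 i) * x 0 * x i + ffp (A i i) * x i * x i := by
      intro i hi
      rw [hM0i i (Finset.mem_erase.1 hi).1, hMii]
    rw [Finset.sum_congr rfl hrw]
    by_cases hd0z : A 0 0 = 0
    · -- degenerate case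
      have hczero : ∀ i : Fin (n+1), i ≠ 0 → A 0 i = 0 := by
        intro i hi
        have := hkey i hi
        rw [hd0z] at this
        have h2 : (A 0 i)^2 = 0 := le_antisymm (by linarith [this]) (sq_nonneg _)
        exact (pow_eq_zero_iff two_ne_zero).mp h2
      rw [hd0z, ffp_zero]
      have hsum0 : 0 ≤ ∑ i ∈ Finset.univ.erase (0 : Fin (n+1)),
          (2 * ffp (A 0 i) * x 0 * x i + ffp (A i i) * x i * x i) := by
        refine Finset.sum_nonneg ?_
        intro i hi
        rw [hczero i (Finset.mem_erase.1 hi).1, ffp_zero]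
        have h3 := mul_nonneg (ff_nonneg _ (hEnt' i i)) (mul_self_nonneg (x i))
        nlinarith [h3]
      nlinarith [hsum0]
    · have hd0p : 0 < A 0 0 := lt_of_le_of_ne hd0 (Ne.symm hd0z)
      set tfun : Fin (n+1) → ℝ := fun i => sfun i * ffp (A 0 0) / A 0 0 with htfun
      have ht_nonneg : ∀ i, 0 ≤ tfun i := fun i =>
        div_nonneg (mul_nonneg (hs_nonneg i) (ff_nonneg _ hd0)) hd0
      have htsum : ∑ i ∈ Finset.univ.erase (0 : Fin (n+1)), tfun i ≤ ffp (A 0 0) := by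
        have e : ∑ i ∈ Finset.univ.erase (0 : Fin (n+1)), tfun i
            = (∑ i ∈ Finset.univ.erase (0 : Fin (n+1)), sfun i) * ffp (A 0 0) / A 0 0 := by
          rw [← Finset.sum_div, ← Finset.sum_mul]
        rw [e, div_le_iff₀ hd0p]
        have h2 := mul_le_mul_of_nonneg_right hssum (ff_nonneg _ hd0)
        nlinarith [h2]
      have hquad : ∀ i ∈ Finset.univ.erase (0 : Fin (n+1)),
          (ffp (A 0 i))^2 ≤ tfun i * ffp (A i i) := by
        intro i hi
        have hi0 : i ≠ 0 := (Finset.mem_erase.1 hi).1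
        by_cases hd : A i i = 0
        · have hc : A 0 i = 0 := by
            have hk := hkey i hi0
            rw [hd, mul_zero] at hk
            have h2 : (A 0 i)^2 = 0 := le_antisymm hk (sq_nonneg _)
            exact (pow_eq_zero_iff two_ne_zero).mp h2
          rw [hc, hd, ffp_zero]
          simp
        · have hdpos : 0 < A i i := lt_of_le_of_ne (hEnt' i i) (Ne.symm hd)
          have hkey2 : ((A 0 i)^2)^2 ≤ (A 0 0)^2 * (A i i)^2 := by
            nlinarith [hkey i hi0, sq_nonneg (A 0 i), hd0, hEnt' i i]
          have hk := key_ineq ((A 0 i)^2) ((A 0 0)^2) ((A i i)^2)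
            (sq_nonneg _) (sq_nonneg _) (sq_nonneg _) hkey2
          have e1 : tfun i * ffp (A i i) = (A 0 i)^2 * (hhp ((A 0 0)^2) * hhp ((A i i)^2)) := by
            simp only [htfun, hsfun, if_neg hd, ffp]
            field_simp
          have e2 : (ffp (A 0 i))^2 = (A 0 i)^2 * (hhp ((A 0 i)^2))^2 := by
            simp only [ffp]; ring
          rw [e1, e2]
          exact mul_le_mul_of_nonneg_left (by nlinarith [hk]) (sq_nonneg _)
      have hterms : ∀ i ∈ Finset.univ.erase (0 : Fin (n+1)),
          0 ≤ tfun i * (x 0 * x 0) + (2 * ffp (A 0 i) * x 0 * x i + ffp (A i i) * x i * x i) := by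
        intro i hi
        have h4 := quadnn (tfun i) (ffp (A 0 i)) (ffp (A i i)) (x 0) (x i)
          (ht_nonneg i) (ff_nonneg _ (hEnt' i i)) (hquad i hi)
        nlinarith [h4]
      have hsum2 : 0 ≤ ∑ i ∈ Finset.univ.erase (0 : Fin (n+1)),
          (tfun i * (x 0 * x 0) + (2 * ffp (A 0 i) * x 0 * x i + ffp (A i i) * x i * x i)) :=
        Finset.sum_nonneg hterms
      have hsplit : ∑ i ∈ Finset.univ.erase (0 : Fin (n+1)),
          (tfun i * (x 0 * x 0) + (2 * ffp (A 0 i) * x 0 * x i + ffp (A i i) * x i * x i))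
          = (∑ i ∈ Finset.univ.erase (0 : Fin (n+1)), tfun i) * (x 0 * x 0)
            + ∑ i ∈ Finset.univ.erase (0 : Fin (n+1)),
                (2 * ffp (A 0 i) * x 0 * x i + ffp (A i i) * x i * x i) := by
        rw [Finset.sum_add_distrib, ← Finset.sum_mul]
      have hmul := mul_le_mul_of_nonneg_right htsum (mul_self_nonneg (x 0))
      linarith [hsum2, hsplit, hmul]
  · -- sparsePattern
    intro i j hij hadj
    have hi0 : i ≠ 0 ∨ j ≠ 0 := by
      by_contra hcon
      push_neg at hcon
      exact hij (hcon.1.trans hcon.2.symm)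
    simp [hMdef, applyG, hij, hadj]

theorem stmt2 :
    ∃ (V : ℕ → ℕ) (G : ∀ n : ℕ, SimpleGraph (Fin (V n))) (a : ℕ → ℝ),
      (∀ c : ℕ, ∃ n : ℕ, 1 ≤ n ∧ ∃ v : Fin (V n), c ≤ ((G n).neighborSet v).ncard) ∧
      (∀ x : ℝ, Summable fun k => a k * x ^ k) ∧
      (∃ k : ℕ, a k < 0) ∧
      (∀ n : ℕ, 1 ≤ n → ∀ A : Matrix (Fin (V n)) (Fin (V n)) ℝ,
        memPG (G n) (Set.Ici 0) A →
          memPG (G n) Set.univ (applyG (G n) (fun x => ∑' k : ℕ, a k * x ^ k) A)) := by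
  refine ⟨fun n => n + 1, fun n => starG n, ap, ?_, ap_summable, ⟨5, by norm_num [ap]⟩, ?_⟩
  · intro c
    refine ⟨c + 1, by omega, 0, ?_⟩
    have hset : (starG (c+1)).neighborSet 0 = {(0 : Fin (c+2))}ᶜ := by
      ext j
      simp [starG, SimpleGraph.neighborSet, ne_comm]
    rw [hset]
    rw [Set.ncard_eq_toFinset_card']
    simp [Set.toFinset_compl, Finset.card_compl]
  · intro n _ A hA
    have hfe : (fun x : ℝ => ∑' (k : ℕ), ap k * x ^ k) = ffp := funext ap_tsum
    rw [hfe]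
    exact star_main n A hA
end

section
/- Let (G_n)_{n ≥ 1} be a sequence of finite simple graphs with sup_{n ≥ 1} Δ(G_n) = ∞. Let I = [0,R) for some 0 < R ≤ ∞, and let f : I → ℝ be a function such that for every n ≥ 1, every symmetric matrix M ∈ S_{G_n}(I), and every vector β ∈ ℝ^{|G_n|} with βᵀ M β ≥ 0, one has βᵀ f_{G_n}[M] β ≥ 0. Then f is absolutely monotonic on I, i.e. f equals a power series Σ_{k=0}^∞ a_k x^k converging on [0,R) with all a_k ≥ 0. -/
open Matrix
open scoped Classical ENNReal

set_option maxHeartbeats 1600000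

lemma quad_eval {N : ℕ} (M : Matrix (Fin N) (Fin N) ℝ) (β : Fin N → ℝ) (s : Finset (Fin N))
    (hs : ∀ i, i ∉ s → β i = 0) :
    β ⬝ᵥ M.mulVec β = ∑ i ∈ s, ∑ j ∈ s, β i * M i j * β j := by
  have h1 : β ⬝ᵥ M.mulVec β = ∑ i : Fin N, ∑ j : Fin N, β i * M i j * β j := by
    simp [dotProduct, mulVec, Finset.mul_sum, mul_assoc]
  rw [h1]
  rw [← Finset.sum_subset (Finset.subset_univ s)]
  · apply Finset.sum_congr rfl
    intro i _
    rw [← Finset.sum_subset (Finset.subset_univ s)]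
    intro j _ hj
    simp [hs j hj]
  · intro i _ hi
    simp [hs i hi]

lemma two_point {N : ℕ} (G : SimpleGraph (Fin N)) (f : ℝ → ℝ) (I : Set ℝ) (h0 : (0:ℝ) ∈ I)
    (hf : ∀ M : Matrix (Fin N) (Fin N) ℝ, M.IsSymm → (∀ i j, M i j ∈ I) → sparsePattern G M →
        ∀ β, 0 ≤ β ⬝ᵥ M.mulVec β → 0 ≤ β ⬝ᵥ (applyG G f M).mulVec β)
    (p q : Fin N) (hadj : G.Adj p q) (a y z : ℝ) (ha : a ∈ I) (hy : y ∈ I) (hz : z ∈ I)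
    (s t : ℝ) (hQ : 0 ≤ s*a*s + s*y*t + t*y*s + t*z*t) :
    0 ≤ s*(f a)*s + s*(f y)*t + t*(f y)*s + t*(f z)*t := by
  have hpq : p ≠ q := G.ne_of_adj hadj
  have hqp : q ≠ p := hpq.symm
  set M : Matrix (Fin N) (Fin N) ℝ :=
    Matrix.of (fun i j => if i = p ∧ j = p then a else if i = q ∧ j = q then z
      else if (i = p ∧ j = q) ∨ (i = q ∧ j = p) then y else 0) with hM
  set β : Fin N → ℝ := fun i => if i = p then s else if i = q then t else 0 with hβ
  have hsupp : ∀ i, i ∉ ({p, q} : Finset (Fin N)) → β i = 0 := by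
    intro i hi
    simp only [Finset.mem_insert, Finset.mem_singleton, not_or] at hi
    simp [hβ, hi.1, hi.2]
  have hsym : M.IsSymm := by
    ext i j
    simp only [Matrix.transpose_apply, hM, Matrix.of_apply]
    split_ifs <;> tauto
  have hmem : ∀ i j, M i j ∈ I := by
    intro i j
    simp only [hM, Matrix.of_apply]
    split_ifs <;> assumption
  have hsp : sparsePattern G M := by
    intro i j hij hnadj
    simp only [hM, Matrix.of_apply]
    split_ifs with h1 h2 h3
    · exact absurd (h1.1.trans h1.2.symm) hij
    · exact absurd (h2.1.trans h2.2.symm) hij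
    · rcases h3 with ⟨hi, hj⟩ | ⟨hi, hj⟩
      · subst hi; subst hj; exact absurd hadj hnadj
      · subst hi; subst hj; exact absurd hadj.symm hnadj
    · rfl
  have hQ' : 0 ≤ β ⬝ᵥ M.mulVec β := by
    rw [quad_eval M β {p, q} hsupp, Finset.sum_pair hpq]
    simp only [Finset.sum_pair hpq]
    simp only [hβ, hM, Matrix.of_apply, if_pos rfl, hpq, hqp]
    simp [hpq, hqp]
    linarith [hQ]
  have := hf M hsym hmem hsp β hQ'
  rw [quad_eval _ β {p, q} hsupp, Finset.sum_pair hpq] at this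
  simp only [Finset.sum_pair hpq] at this
  simp only [hβ, applyG, hM, Matrix.of_apply] at this
  simp [hpq, hqp, hadj, hadj.symm] at this
  linarith [this]

lemma p3_constraint {N : ℕ} (G : SimpleGraph (Fin N)) (f : ℝ → ℝ) (I : Set ℝ) (h0 : (0:ℝ) ∈ I)
    (hf : ∀ M : Matrix (Fin N) (Fin N) ℝ, M.IsSymm → (∀ i j, M i j ∈ I) → sparsePattern G M →
        ∀ β, 0 ≤ β ⬝ᵥ M.mulVec β → 0 ≤ β ⬝ᵥ (applyG G f M).mulVec β)
    (p q r : Fin N) (hqp : G.Adj q p) (hqr : G.Adj q r) (hpr : p ≠ r) (hnpr : ¬ G.Adj p r) :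
    f 0 ≤ 0 := by
  have hpq : p ≠ q := (G.ne_of_adj hqp).symm
  have hqr' : q ≠ r := G.ne_of_adj hqr
  set β : Fin N → ℝ := fun i => if i = p then 1 else if i = q then -2 else if i = r then 1 else 0
    with hβ
  have hsupp : ∀ i, i ∉ ({p, q, r} : Finset (Fin N)) → β i = 0 := by
    intro i hi
    simp only [Finset.mem_insert, Finset.mem_singleton, not_or] at hi
    simp [hβ, hi.1, hi.2.1, hi.2.2]
  have hQ' : (0:ℝ) ≤ β ⬝ᵥ (0 : Matrix (Fin N) (Fin N) ℝ).mulVec β := by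
    simp [Matrix.mulVec_zero]
  have h := hf 0 (by simp [Matrix.IsSymm]) (by intro i j; simpa using h0)
    (by intro i j _ _; rfl) β hQ'
  rw [quad_eval _ β {p, q, r} hsupp] at h
  have e1 : p ∉ ({q, r} : Finset (Fin N)) := by simp [hpq, hpr]
  have e2 : q ∉ ({r} : Finset (Fin N)) := by simp [hqr']
  simp only [Finset.sum_insert e1, Finset.sum_insert e2, Finset.sum_singleton] at h
  simp only [hβ, applyG, Matrix.of_apply] at h
  have hnrp : ¬ G.Adj r p := fun h' => hnpr h'.symm
  simp [hpq, hpq.symm, hpr, hpr.symm, hqr', hqr'.symm, hqp, hqp.symm, hqr, hqr.symm, hnpr,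
    hnrp] at h
  linarith [h]

lemma four_point {N : ℕ} (G : SimpleGraph (Fin N)) (f : ℝ → ℝ) (I : Set ℝ) (h0 : (0:ℝ) ∈ I)
    (hf : ∀ M : Matrix (Fin N) (Fin N) ℝ, M.IsSymm → (∀ i j, M i j ∈ I) → sparsePattern G M →
        ∀ β, 0 ≤ β ⬝ᵥ M.mulVec β → 0 ≤ β ⬝ᵥ (applyG G f M).mulVec β)
    (p q r w : Fin N) (hpq : G.Adj p q) (hpr : G.Adj p r) (hpw : G.Adj p w)
    (hqr : G.Adj q r) (hqw : G.Adj q w) (hrw : G.Adj r w)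
    (x y m : ℝ) (hx : x ∈ I) (hy : y ∈ I) (hm : m ∈ I) (hsum : x + y = 2*m) :
    f x + f y = 2 * f m := by
  have npq : p ≠ q := G.ne_of_adj hpq
  have npr : p ≠ r := G.ne_of_adj hpr
  have npw : p ≠ w := G.ne_of_adj hpw
  have nqr : q ≠ r := G.ne_of_adj hqr
  have nqw : q ≠ w := G.ne_of_adj hqw
  have nrw : r ≠ w := G.ne_of_adj hrw
  set val : Fin N → Fin N → ℝ := fun i j =>
      if i = p ∧ j = r then x
      else if i = q ∧ j = w then y
      else if (i = p ∧ j = w) ∨ (i = q ∧ j = r) then m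
      else 0 with hval
  set M : Matrix (Fin N) (Fin N) ℝ := Matrix.of (fun i j => val i j + val j i) with hM
  have hval_ne : ∀ i j, val i j ≠ 0 → (i = p ∨ i = q) ∧ (j = r ∨ j = w) := by
    intro i j hne
    simp only [hval] at hne
    split_ifs at hne with h1 h2 h3
    · exact ⟨Or.inl h1.1, Or.inl h1.2⟩
    · exact ⟨Or.inr h2.1, Or.inr h2.2⟩
    · rcases h3 with ⟨hi, hj⟩ | ⟨hi, hj⟩
      · exact ⟨Or.inl hi, Or.inr hj⟩
      · exact ⟨Or.inr hi, Or.inl hj⟩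
    · exact absurd rfl hne
  have hval_or : ∀ i j, val i j = 0 ∨ val j i = 0 := by
    intro i j
    by_contra hc
    push_neg at hc
    obtain ⟨hi1, -⟩ := hval_ne i j hc.1
    obtain ⟨-, hi2⟩ := hval_ne j i hc.2
    rcases hi1 with h | h <;> rcases hi2 with h' | h' <;> subst h <;>
      first
        | exact npr h'
        | exact npw h'
        | exact nqr h'
        | exact nqw h'
  have hvalI : ∀ i j, val i j ∈ I := by
    intro i j
    simp only [hval]
    split_ifs <;> assumption
  have hvalAdj : ∀ i j, ¬ G.Adj i j → val i j = 0 := by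
    intro i j hna
    simp only [hval]
    split_ifs with h1 h2 h3
    · obtain ⟨hi, hj⟩ := h1; subst hi; subst hj; exact absurd hpr hna
    · obtain ⟨hi, hj⟩ := h2; subst hi; subst hj; exact absurd hqw hna
    · rcases h3 with ⟨hi, hj⟩ | ⟨hi, hj⟩ <;> subst hi <;> subst hj
      · exact absurd hpw hna
      · exact absurd hqr hna
    · rfl
  have hsym : M.IsSymm := by
    ext i j
    simp only [hM, Matrix.transpose_apply, Matrix.of_apply]
    exact add_comm _ _
  have hmem : ∀ i j, M i j ∈ I := by
    intro i j
    simp only [hM, Matrix.of_apply]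
    rcases hval_or i j with h | h
    · rw [h, zero_add]; exact hvalI j i
    · rw [h, add_zero]; exact hvalI i j
  have hsp : sparsePattern G M := by
    intro i j _ hna
    simp only [hM, Matrix.of_apply]
    rw [hvalAdj i j hna, hvalAdj j i (fun h => hna h.symm), add_zero]
  have nes : p ≠ q ∧ q ≠ p ∧ p ≠ r ∧ r ≠ p ∧ p ≠ w ∧ w ≠ p ∧ q ≠ r ∧ r ≠ q ∧ q ≠ w ∧ w ≠ q ∧ r ≠ w ∧ w ≠ r :=
    ⟨npq, npq.symm, npr, npr.symm, npw, npw.symm, nqr, nqr.symm, nqw, nqw.symm, nrw, nrw.symm⟩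
  obtain ⟨e01, e02, e03, e04, e05, e06, e07, e08, e09, e10, e11, e12⟩ := nes
  have Mpr : M p r = x := by simp [hM, hval, e01, e02, e03, e04, e05, e06, e07, e08, e09, e10, e11, e12]
  have Mrp : M r p = x := by simp [hM, hval, e01, e02, e03, e04, e05, e06, e07, e08, e09, e10, e11, e12]
  have Mqw : M q w = y := by simp [hM, hval, e01, e02, e03, e04, e05, e06, e07, e08, e09, e10, e11, e12]
  have Mwq : M w q = y := by simp [hM, hval, e01, e02, e03, e04, e05, e06, e07, e08, e09, e10, e11, e12]
  have Mpw : M p w = m := by simp [hM, hval, e01, e02, e03, e04, e05, e06, e07, e08, e09, e10, e11, e12]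
  have Mwp : M w p = m := by simp [hM, hval, e01, e02, e03, e04, e05, e06, e07, e08, e09, e10, e11, e12]
  have Mqr : M q r = m := by simp [hM, hval, e01, e02, e03, e04, e05, e06, e07, e08, e09, e10, e11, e12]
  have Mrq : M r q = m := by simp [hM, hval, e01, e02, e03, e04, e05, e06, e07, e08, e09, e10, e11, e12]
  have Mpq : M p q = 0 := by simp [hM, hval, e01, e02, e03, e04, e05, e06, e07, e08, e09, e10, e11, e12]
  have Mqp : M q p = 0 := by simp [hM, hval, e01, e02, e03, e04, e05, e06, e07, e08, e09, e10, e11, e12]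
  have Mrw : M r w = 0 := by simp [hM, hval, e01, e02, e03, e04, e05, e06, e07, e08, e09, e10, e11, e12]
  have Mwr : M w r = 0 := by simp [hM, hval, e01, e02, e03, e04, e05, e06, e07, e08, e09, e10, e11, e12]
  have Mpp : M p p = 0 := by simp [hM, hval, e01, e02, e03, e04, e05, e06, e07, e08, e09, e10, e11, e12]
  have Mqq : M q q = 0 := by simp [hM, hval, e01, e02, e03, e04, e05, e06, e07, e08, e09, e10, e11, e12]
  have Mrr : M r r = 0 := by simp [hM, hval, e01, e02, e03, e04, e05, e06, e07, e08, e09, e10, e11, e12]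
  have Mww : M w w = 0 := by simp [hM, hval, e01, e02, e03, e04, e05, e06, e07, e08, e09, e10, e11, e12]
  have e1 : p ∉ ({q, r, w} : Finset (Fin N)) := by simp [e01, e03, e05]
  have e2 : q ∉ ({r, w} : Finset (Fin N)) := by simp [e07, e09]
  have e3 : r ∉ ({w} : Finset (Fin N)) := by simp [e11]
  have key : ∀ e : ℝ, e = 1 ∨ e = -1 → 0 ≤ e * (f x + f y - 2 * f m) := by
    intro e he
    set β : Fin N → ℝ := fun i => if i = p then 1 else if i = q then -1 else
      if i = r then e else if i = w then -e else 0 with hβ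
    have hβp : β p = 1 := by simp [hβ]
    have hβq : β q = -1 := by simp [hβ, e02]
    have hβr : β r = e := by simp [hβ, e04, e08]
    have hβw : β w = -e := by simp [hβ, e06, e10, e12]
    have hsupp : ∀ i, i ∉ ({p, q, r, w} : Finset (Fin N)) → β i = 0 := by
      intro i hi
      simp only [Finset.mem_insert, Finset.mem_singleton, not_or] at hi
      simp [hβ, hi.1, hi.2.1, hi.2.2.1, hi.2.2.2]
    have hexp : ∀ A : Matrix (Fin N) (Fin N) ℝ, β ⬝ᵥ A.mulVec β =
        β p * A p p * β p + β p * A p q * β q + β p * A p r * β r + β p * A p w * β w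
        + (β q * A q p * β p + β q * A q q * β q + β q * A q r * β r + β q * A q w * β w)
        + (β r * A r p * β p + β r * A r q * β q + β r * A r r * β r + β r * A r w * β w)
        + (β w * A w p * β p + β w * A w q * β q + β w * A w r * β r + β w * A w w * β w) := by
      intro A
      rw [quad_eval A β {p, q, r, w} hsupp]
      rw [Finset.sum_insert e1, Finset.sum_insert e2, Finset.sum_insert e3, Finset.sum_singleton]
      simp only [Finset.sum_insert e1, Finset.sum_insert e2, Finset.sum_insert e3,
        Finset.sum_singleton]
      ring
    have hQ' : 0 ≤ β ⬝ᵥ M.mulVec β := by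
      rw [hexp M, hβp, hβq, hβr, hβw, Mpp, Mpq, Mpr, Mpw, Mqp, Mqq, Mqr, Mqw,
        Mrp, Mrq, Mrr, Mrw, Mwp, Mwq, Mwr, Mww]
      rcases he with rfl | rfl <;> nlinarith [hsum]
    have h := hf M hsym hmem hsp β hQ'
    rw [hexp (applyG G f M)] at h
    have Fdef : ∀ a b : Fin N, (a = b ∨ G.Adj a b) → (applyG G f M) a b = f (M a b) := by
      intro a b hab
      simp only [applyG, Matrix.of_apply, if_pos hab]
    rw [Fdef p p (Or.inl rfl), Fdef q q (Or.inl rfl), Fdef r r (Or.inl rfl),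
      Fdef w w (Or.inl rfl), Fdef p q (Or.inr hpq), Fdef q p (Or.inr hpq.symm),
      Fdef p r (Or.inr hpr), Fdef r p (Or.inr hpr.symm), Fdef p w (Or.inr hpw),
      Fdef w p (Or.inr hpw.symm), Fdef q r (Or.inr hqr), Fdef r q (Or.inr hqr.symm),
      Fdef q w (Or.inr hqw), Fdef w q (Or.inr hqw.symm), Fdef r w (Or.inr hrw),
      Fdef w r (Or.inr hrw.symm)] at h
    rw [hβp, hβq, hβr, hβw, Mpp, Mpq, Mpr, Mpw, Mqp, Mqq, Mqr, Mqw,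
      Mrp, Mrq, Mrr, Mrw, Mwp, Mwq, Mwr, Mww] at h
    rcases he with rfl | rfl <;> nlinarith [h]
  have k1 := key 1 (Or.inl rfl)
  have k2 := key (-1) (Or.inr rfl)
  linarith

lemma cauchy_linear (S : Set ℝ) (hS0 : (0:ℝ) ∈ S) (hnonneg : ∀ x ∈ S, 0 ≤ x)
    (hdown : ∀ x ∈ S, ∀ z : ℝ, 0 ≤ z → z ≤ x → z ∈ S)
    (hroom : ∀ x ∈ S, ∃ δ : ℝ, 0 < δ ∧ x + δ ∈ S)
    (g : ℝ → ℝ) (hg0 : g 0 = 0)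
    (hadd : ∀ x ∈ S, ∀ y ∈ S, x + y ∈ S → g (x + y) = g x + g y)
    (hmono : ∀ x ∈ S, ∀ y ∈ S, x ≤ y → g x ≤ g y) :
    ∀ x ∈ S, ∀ y ∈ S, g x * y = g y * x := by
  have gnonneg : ∀ x ∈ S, 0 ≤ g x := by
    intro x hx
    have := hmono 0 hS0 x hx (hnonneg x hx)
    linarith
  have hsmul : ∀ k : ℕ, ∀ t : ℝ, 0 ≤ t → ((k:ℝ) * t) ∈ S → g ((k:ℝ) * t) = k * g t := by
    intro k
    induction k with
    | zero => intro t _ _; simpa using hg0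
    | succ k ih =>
      intro t ht0 hktS
      have hcast : ((k+1:ℕ):ℝ) * t = (k:ℝ) * t + t := by push_cast; ring
      have hle : (k:ℝ) * t ≤ ((k+1:ℕ):ℝ) * t := by push_cast; nlinarith
      have hkS : (k:ℝ) * t ∈ S := hdown _ hktS _ (by positivity) hle
      have htS : t ∈ S := hdown _ hktS _ ht0 (by push_cast; nlinarith)
      have hsumS : (k:ℝ) * t + t ∈ S := by rw [← hcast]; exact hktS
      rw [hcast, hadd _ hkS _ htS hsumS, ih t ht0 hkS]
      push_cast; ring
  intro x hx y hy
  rcases eq_or_lt_of_le (hnonneg x hx) with hx0 | hx0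
  · rw [← hx0, hg0]; ring
  rcases eq_or_lt_of_le (hnonneg y hy) with hy0 | hy0
  · rw [← hy0, hg0]; ring
  obtain ⟨δ, hδ, hxδS⟩ := hroom x hx
  have key : ∀ n : ℕ, 1 ≤ n → y / δ ≤ n → |g x * y - g y * x| ≤ g y * y / n := by
    intro n h1 h2
    have hn0 : (0:ℝ) < n := by exact_mod_cast Nat.pos_of_ne_zero (by omega)
    have hn1 : (1:ℝ) ≤ n := by exact_mod_cast h1
    obtain ⟨t, htdef⟩ : ∃ t : ℝ, t = y / n := ⟨_, rfl⟩
    have ht0 : 0 < t := htdef ▸ div_pos hy0 hn0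
    have hty : (n:ℝ) * t = y := by rw [htdef]; field_simp
    have htS : t ∈ S := by
      apply hdown y hy t ht0.le
      rw [htdef, div_le_iff₀ hn0]
      nlinarith
    have htδ : t ≤ δ := by
      have hyd : y ≤ (n:ℝ) * δ := by
        have := (div_le_iff₀ hδ).mp h2
        linarith
      rw [htdef, div_le_iff₀ hn0]
      linarith
    obtain ⟨k, hkdef⟩ : ∃ k : ℕ, k = ⌊x / t⌋₊ := ⟨_, rfl⟩
    have hk1 : (k:ℝ) * t ≤ x := by
      have h := Nat.floor_le (le_of_lt (div_pos hx0 ht0))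
      rw [← hkdef] at h
      calc (k:ℝ) * t ≤ (x / t) * t := by nlinarith
        _ = x := by field_simp
    have hk2 : x < ((k:ℝ) + 1) * t := by
      have h := Nat.lt_floor_add_one (x / t)
      rw [← hkdef] at h
      calc x = (x / t) * t := by field_simp
        _ < ((k:ℝ) + 1) * t := by nlinarith
    have hktS : (k:ℝ) * t ∈ S := hdown x hx _ (by positivity) hk1
    have hk1tS : ((k:ℝ) + 1) * t ∈ S := by
      apply hdown _ hxδS _ (by positivity)
      nlinarith
    have g1 : g ((k:ℝ) * t) = k * g t := hsmul k t ht0.le hktS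
    have g2 : g (((k:ℝ) + 1) * t) = ((k:ℝ) + 1) * g t := by
      have h := hsmul (k+1) t ht0.le (by push_cast; exact hk1tS)
      push_cast at h
      exact h
    have g3 : (n:ℝ) * g t = g y := by
      rw [← hsmul n t ht0.le (by rw [hty]; exact hy), hty]
    have gb1 : (k:ℝ) * g t ≤ g x := by
      rw [← g1]; exact hmono _ hktS x hx hk1
    have gb2 : g x ≤ ((k:ℝ) + 1) * g t := by
      rw [← g2]; exact hmono x hx _ hk1tS hk2.le
    have gt0 : 0 ≤ g t := gnonneg t htS
    have low : -(g t * t) ≤ g x * t - g t * x := by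
      nlinarith [mul_le_mul_of_nonneg_left hk2.le gt0, mul_le_mul_of_nonneg_right gb1 ht0.le]
    have high : g x * t - g t * x ≤ g t * t := by
      nlinarith [mul_le_mul_of_nonneg_right gb2 ht0.le, mul_le_mul_of_nonneg_left hk1 gt0]
    have hdd : g x * y - g y * x = (n:ℝ) * (g x * t - g t * x) := by
      rw [← g3, ← hty]; ring
    have heq : (n:ℝ) * (g t * t) = g y * y / n := by
      rw [← g3, ← hty]; field_simp
    rw [abs_le]
    constructor
    · rw [hdd, ← heq]; nlinarith
    · rw [hdd, ← heq]; nlinarith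
  by_contra hne
  have hd : 0 < |g x * y - g y * x| := abs_pos.mpr (sub_ne_zero.mpr hne)
  have hgy : 0 ≤ g y * y := mul_nonneg (gnonneg y hy) hy0.le
  obtain ⟨n, hn⟩ := exists_nat_gt (max (max (y / δ) 1) (g y * y / |g x * y - g y * x|))
  have hn1 : 1 ≤ n := by
    have : (1:ℝ) ≤ max (max (y / δ) 1) (g y * y / |g x * y - g y * x|) :=
      le_max_of_le_left (le_max_right _ _)
    exact_mod_cast lt_of_le_of_lt this hn |>.le
  have hn2 : y / δ ≤ n := by
    have : (y / δ) ≤ max (max (y / δ) 1) (g y * y / |g x * y - g y * x|) :=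
      le_max_of_le_left (le_max_left _ _)
    linarith [lt_of_le_of_lt this hn]
  have hkey := key n hn1 hn2
  have hn0 : (0:ℝ) < n := by exact_mod_cast hn1
  have : g y * y / n < |g x * y - g y * x| := by
    rw [div_lt_iff₀ hn0]
    have h3 : g y * y / |g x * y - g y * x| < n :=
      lt_of_le_of_lt (le_max_right _ _) hn
    rw [div_lt_iff₀ hd] at h3
    linarith
  linarith

lemma affine_hasSum (c b x : ℝ) :
    HasSum (fun k : ℕ => (if k = 0 then c else if k = 1 then b else 0) * x ^ k) (c + b * x) := by
  have h0 : HasSum (fun k : ℕ => if k = 0 then c else 0) c := hasSum_ite_eq 0 c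
  have h1 : HasSum (fun k : ℕ => if k = 1 then b * x else 0) (b * x) := hasSum_ite_eq 1 _
  have h := h0.add h1
  convert h using 1
  funext k
  match k with
  | 0 => simp
  | 1 => simp
  | (k+2) => simp

theorem stmt4 (V : ℕ → ℕ) (G : ∀ n : ℕ, SimpleGraph (Fin (V n)))
    (hdeg : ∀ c : ℕ, ∃ n : ℕ, 1 ≤ n ∧ ∃ v : Fin (V n), c ≤ ((G n).neighborSet v).ncard)
    (R : ℝ≥0∞) (hR : 0 < R) (I : Set ℝ)
    (hI : I = {x : ℝ | 0 ≤ x ∧ ENNReal.ofReal x < R})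
    (f : ℝ → ℝ)
    (hf : ∀ n : ℕ, 1 ≤ n → ∀ M : Matrix (Fin (V n)) (Fin (V n)) ℝ,
      M.IsSymm → (∀ i j, M i j ∈ I) → sparsePattern (G n) M →
        ∀ β : Fin (V n) → ℝ, 0 ≤ β ⬝ᵥ M.mulVec β →
          0 ≤ β ⬝ᵥ (applyG (G n) f M).mulVec β) :
    ∃ a : ℕ → ℝ, (∀ k : ℕ, 0 ≤ a k) ∧ ∀ x ∈ I, HasSum (fun k : ℕ => a k * x ^ k) (f x) := by
  -- basic properties of I
  have h0I : (0:ℝ) ∈ I := by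
    rw [hI]; exact ⟨le_refl 0, by simpa using hR⟩
  have hInonneg : ∀ x ∈ I, 0 ≤ x := by
    intro x hx; rw [hI] at hx; exact hx.1
  have hdown : ∀ x ∈ I, ∀ z : ℝ, 0 ≤ z → z ≤ x → z ∈ I := by
    intro x hx z hz0 hzx
    rw [hI] at hx ⊢
    exact ⟨hz0, lt_of_le_of_lt (ENNReal.ofReal_le_ofReal hzx) hx.2⟩
  have hroom : ∀ x ∈ I, ∃ δ : ℝ, 0 < δ ∧ x + δ ∈ I := by
    intro x hx
    rw [hI] at hx
    by_cases hRtop : R = ⊤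
    · refine ⟨1, one_pos, ?_⟩
      rw [hI]
      exact ⟨by linarith [hx.1], by rw [hRtop]; exact ENNReal.ofReal_lt_top⟩
    · have hxR : x < R.toReal := (ENNReal.ofReal_lt_iff_lt_toReal hx.1 hRtop).mp hx.2
      refine ⟨(R.toReal - x)/2, by linarith, ?_⟩
      rw [hI]
      refine ⟨by linarith [hx.1], ?_⟩
      rw [ENNReal.ofReal_lt_iff_lt_toReal (by linarith [hx.1]) hRtop]
      linarith
  obtain ⟨y₀, hy₀pos, hy₀I⟩ : ∃ y₀ : ℝ, 0 < y₀ ∧ y₀ ∈ I := by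
    obtain ⟨δ, hδ, hδI⟩ := hroom 0 h0I
    exact ⟨δ, hδ, by simpa using hδI⟩
  -- an edge in some graph
  obtain ⟨n₁, hn₁, v₁, hv₁⟩ := hdeg 1
  obtain ⟨u₁, hu₁⟩ : ∃ u, (G n₁).Adj v₁ u := by
    have hne : ((G n₁).neighborSet v₁).Nonempty := by
      apply Set.nonempty_of_ncard_ne_zero; omega
    obtain ⟨u, hu⟩ := hne
    exact ⟨u, hu⟩
  have hf₁ := hf n₁ hn₁
  have fnonneg : ∀ x ∈ I, 0 ≤ f x := by
    intro x hx
    have := two_point (G n₁) f I h0I hf₁ v₁ u₁ hu₁ x x x hx hx hx 1 1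
      (by nlinarith [hInonneg x hx])
    linarith
  have fmono : ∀ x ∈ I, ∀ y ∈ I, y ≤ x → f y ≤ f x := by
    intro x hx y hy hyx
    have := two_point (G n₁) f I h0I hf₁ v₁ u₁ hu₁ x y x hx hy hx 1 (-1) (by nlinarith)
    linarith
  by_cases hcase : ∃ n, 1 ≤ n ∧ ∃ p q r : Fin (V n),
      (G n).Adj q p ∧ (G n).Adj q r ∧ p ≠ r ∧ ¬ (G n).Adj p r
  · -- Case 1 : an induced path of length two exists, so f 0 = 0 and f is linear
    obtain ⟨n₂, hn₂, p, q, r, hqp, hqr, hpr, hnpr⟩ := hcase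
    have hf0le := p3_constraint (G n₂) f I h0I (hf n₂ hn₂) p q r hqp hqr hpr hnpr
    have hf00 : f 0 = 0 := le_antisymm hf0le (fnonneg 0 h0I)
    have hlin : ∀ x ∈ I, ∀ y ∈ I, 0 ≤ 4*y^2*(f x) - 4*x*y*(f y) := by
      intro x hx y hy
      have h := two_point (G n₁) f I h0I hf₁ v₁ u₁ hu₁ x y 0 hx hy h0I (2*y) (-x)
        (by
          have h0 : (2*y)*x*(2*y) + (2*y)*y*(-x) + (-x)*y*(2*y) + (-x)*0*(-x) = 0 := by ring
          linarith)
      rw [hf00] at h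
      nlinarith [h]
    have hb : ∀ x ∈ I, f x * y₀ = f y₀ * x := by
      intro x hx
      rcases eq_or_lt_of_le (hInonneg x hx) with h0x | h0x
      · rw [← h0x, hf00]; ring
      · have h1 := hlin x hx y₀ hy₀I
        have h2 := hlin y₀ hy₀I x hx
        apply le_antisymm
        · nlinarith [h2, h0x]
        · nlinarith [h1, hy₀pos]
    refine ⟨fun k => if k = 0 then f 0 else if k = 1 then f y₀ / y₀ else 0, ?_, ?_⟩
    · intro k
      dsimp only
      split_ifs
      · exact fnonneg 0 h0I
      · exact div_nonneg (fnonneg y₀ hy₀I) hy₀pos.le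
      · exact le_refl 0
    · intro x hx
      have hfx : f x = f 0 + (f y₀ / y₀) * x := by
        rw [hf00, zero_add]
        have := hb x hx
        field_simp
        linarith [this]
      rw [hfx]
      exact affine_hasSum (f 0) (f y₀ / y₀) x
  · -- Case 2 : every graph is a disjoint union of cliques; get a K₄ and midpoint affinity
    push_neg at hcase
    obtain ⟨n₃, hn₃, v₃, hv₃⟩ := hdeg 3
    have hfin : ((G n₃).neighborSet v₃).Finite := Set.toFinite _
    have h3 : 3 ≤ hfin.toFinset.card := by
      rwa [← Set.ncard_eq_toFinset_card _ hfin]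
    obtain ⟨t, hts, htc⟩ := Finset.exists_subset_card_eq h3
    obtain ⟨a, b, c, hab, hac, hbc, rfl⟩ := Finset.card_eq_three.mp htc
    have haN : (G n₃).Adj v₃ a := by
      have := hts (by simp : a ∈ ({a,b,c} : Finset (Fin (V n₃))))
      rwa [Set.Finite.mem_toFinset, SimpleGraph.mem_neighborSet] at this
    have hbN : (G n₃).Adj v₃ b := by
      have := hts (by simp : b ∈ ({a,b,c} : Finset (Fin (V n₃))))
      rwa [Set.Finite.mem_toFinset, SimpleGraph.mem_neighborSet] at this
    have hcN : (G n₃).Adj v₃ c := by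
      have := hts (by simp : c ∈ ({a,b,c} : Finset (Fin (V n₃))))
      rwa [Set.Finite.mem_toFinset, SimpleGraph.mem_neighborSet] at this
    have hAab : (G n₃).Adj a b := hcase n₃ hn₃ a v₃ b haN hbN hab
    have hAac : (G n₃).Adj a c := hcase n₃ hn₃ a v₃ c haN hcN hac
    have hAbc : (G n₃).Adj b c := hcase n₃ hn₃ b v₃ c hbN hcN hbc
    have hmid : ∀ x ∈ I, ∀ y ∈ I, ∀ m ∈ I, x + y = 2*m → f x + f y = 2 * f m := by
      intro x hx y hy m hm hsum
      exact four_point (G n₃) f I h0I (hf n₃ hn₃) v₃ a b c haN hbN hcN hAab hAac hAbc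
        x y m hx hy hm hsum
    set g : ℝ → ℝ := fun z => f z - f 0 with hg
    have hg0 : g 0 = 0 := by simp [hg]
    have hgadd : ∀ x ∈ I, ∀ y ∈ I, x + y ∈ I → g (x+y) = g x + g y := by
      intro x hx y hy hxy
      have hmI : (x+y)/2 ∈ I := by
        have h1 := hInonneg x hx
        have h2 := hInonneg y hy
        exact hdown (x+y) hxy _ (by linarith) (by linarith)
      have h1 := hmid x hx y hy ((x+y)/2) hmI (by ring)
      have h2 := hmid (x+y) hxy 0 h0I ((x+y)/2) hmI (by ring)
      simp only [hg]
      linarith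
    have hgmono : ∀ x ∈ I, ∀ y ∈ I, x ≤ y → g x ≤ g y := by
      intro x hx y hy hxy
      simp only [hg]
      have := fmono y hy x hx hxy
      linarith
    have hcau := cauchy_linear I h0I hInonneg hdown hroom g hg0 hgadd hgmono
    have hgy₀ : 0 ≤ g y₀ := by
      have := fmono y₀ hy₀I 0 h0I (hInonneg y₀ hy₀I)
      simp only [hg]
      linarith
    refine ⟨fun k => if k = 0 then f 0 else if k = 1 then g y₀ / y₀ else 0, ?_, ?_⟩
    · intro k
      dsimp only
      split_ifs
      · exact fnonneg 0 h0I
      · exact div_nonneg hgy₀ hy₀pos.le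
      · exact le_refl 0
    · intro x hx
      have hgx : g x * y₀ = g y₀ * x := hcau x hx y₀ hy₀I
      have hfx : f x = f 0 + (g y₀ / y₀) * x := by
        have hgval : g x = g y₀ / y₀ * x := by
          field_simp
          linarith [hgx]
        simp only [hg] at hgval
        linarith
      rw [hfx]
      exact affine_hasSum (f 0) (g y₀ / y₀) x
end

section
/- Let I ⊆ ℝ be an interval with 0 ∈ I, sup I ∉ I, and |inf I| ≤ sup I. Let G be a connected finite simple graph that is not complete, and let f : I → ℝ. If f_G[A] ∈ P_G for every A ∈ P_G(I), then f(0) = 0 and f is superadditive on I ∩ (0,∞), i.e. f(x+y) ≥ f(x) + f(y) whenever x, y, x+y ∈ I ∩ (0,∞). -/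
open Matrix
open scoped Classical ENNReal

/-- In a graph with a walk between distinct nonadjacent vertices, there are two distinct
nonadjacent vertices with a common neighbor. -/
lemma exists_P3_aux {V : Type*} {G : SimpleGraph V} {i j : V} (p : G.Walk i j) :
    i ≠ j → ¬ G.Adj i j →
    ∃ u v w, u ≠ v ∧ ¬ G.Adj u v ∧ G.Adj w u ∧ G.Adj w v := by
  induction p with
  | nil => intro h _; exact absurd rfl h
  | @cons a b c hab p ih =>
    intro hne hnadj
    by_cases hbc : G.Adj b c
    · exact ⟨a, c, b, hne, hnadj, hab.symm, hbc⟩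
    · rcases eq_or_ne b c with rfl | hbc'
      · exact absurd hab hnadj
      · exact ih hbc' hbc

/-- A nonnegative multiple of a rank-one symmetric matrix is PSD. -/
lemma psd_rank_one_aux {n : ℕ} (v : Fin n → ℝ) (c : ℝ) (hc : 0 ≤ c) :
    (Matrix.of fun i j => c * v i * v j : Matrix (Fin n) (Fin n) ℝ).PosSemidef := by
  refine Matrix.PosSemidef.of_dotProduct_mulVec_nonneg ?_ ?_
  · ext i j
    simp only [conjTranspose_apply, of_apply, star_trivial]
    ring
  · intro z
    have key : star z ⬝ᵥ ((Matrix.of fun i j => c * v i * v j) *ᵥ z)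
        = c * ((v ⬝ᵥ z) * (v ⬝ᵥ z)) := by
      simp only [dotProduct, mulVec, of_apply, star_trivial, Finset.mul_sum,
        Finset.sum_mul]
      rw [Finset.sum_comm]
      exact Finset.sum_congr rfl fun i _ => Finset.sum_congr rfl fun j _ => by ring
    rw [key]
    exact mul_nonneg hc (mul_self_nonneg _)

/-- The quadratic form of a PSD matrix at `e_u + e_v - e_w` is nonnegative. -/
lemma psd_quad_aux {n : ℕ} {B : Matrix (Fin n) (Fin n) ℝ} (hB : B.PosSemidef) (u v w : Fin n) :
    0 ≤ (B u u + B u v - B u w) + (B v u + B v v - B v w) - (B w u + B w v - B w w) := by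
  have h := hB.dotProduct_mulVec_nonneg (Pi.single u 1 + Pi.single v 1 - Pi.single w 1)
  simp only [mulVec_add, mulVec_sub, mulVec_single, dotProduct_add, dotProduct_sub,
    add_dotProduct, sub_dotProduct, single_dotProduct, star_add, star_sub, star_trivial,
    mul_one, one_mul, Pi.add_apply, Pi.sub_apply, MulOpposite.op_one, one_smul,
    Matrix.col_apply] at h
  linarith

/-- Diagonal entries of a PSD matrix are nonnegative. -/
lemma psd_diag_aux {n : ℕ} {B : Matrix (Fin n) (Fin n) ℝ} (hB : B.PosSemidef) (u : Fin n) :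
    0 ≤ B u u := by
  have h := hB.dotProduct_mulVec_nonneg (Pi.single u 1)
  simpa using h

/-- Indicator vector of the pair `{u, w}`. -/
noncomputable def indVec {n : ℕ} (u w : Fin n) : Fin n → ℝ :=
  fun a => if a = u ∨ a = w then 1 else 0

lemma indVec_left {n : ℕ} (u w : Fin n) : indVec u w u = 1 := by simp [indVec]

lemma indVec_right {n : ℕ} (u w : Fin n) : indVec u w w = 1 := by simp [indVec]

lemma indVec_zero {n : ℕ} {u w a : Fin n} (h1 : a ≠ u) (h2 : a ≠ w) : indVec u w a = 0 := by
  simp [indVec, h1, h2]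

lemma indVec_mul_eq_zero {n : ℕ} {G : SimpleGraph (Fin n)} {u w a b : Fin n}
    (hadj : G.Adj u w) (hab : a ≠ b) (hnadj : ¬ G.Adj a b) :
    indVec u w a * indVec u w b = 0 := by
  by_cases h1 : a = u ∨ a = w
  · by_cases h2 : b = u ∨ b = w
    · exfalso
      rcases h1 with rfl | rfl <;> rcases h2 with rfl | rfl
      exacts [hab rfl, hnadj hadj, hnadj hadj.symm, hab rfl]
    · simp [indVec, h2]
  · simp [indVec, h1]

theorem stmt9 (I : Set ℝ) (hI : I.OrdConnected) (h0 : (0 : ℝ) ∈ I)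
    (hsup : sSup ((fun x : ℝ => (x : EReal)) '' I) ∉ (fun x : ℝ => (x : EReal)) '' I)
    (hinf : -sInf ((fun x : ℝ => (x : EReal)) '' I) ≤ sSup ((fun x : ℝ => (x : EReal)) '' I))
    {n : ℕ} (G : SimpleGraph (Fin n)) (hGconn : G.Connected)
    (hGnc : ∃ i j : Fin n, i ≠ j ∧ ¬ G.Adj i j)
    (f : ℝ → ℝ)
    (hpres : ∀ A : Matrix (Fin n) (Fin n) ℝ, memPG G I A → memPG G Set.univ (applyG G f A)) :
    f 0 = 0 ∧
      ∀ x y : ℝ, x ∈ I ∩ Set.Ioi 0 → y ∈ I ∩ Set.Ioi 0 → x + y ∈ I ∩ Set.Ioi 0 →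
        f x + f y ≤ f (x + y) := by
  obtain ⟨i, j, hij, hijn⟩ := hGnc
  obtain ⟨p⟩ := hGconn.preconnected i j
  obtain ⟨u, v, w, huv, hunadj, hwu, hwv⟩ := exists_P3_aux p hij hijn
  have huw : u ≠ w := hwu.ne'
  have hvw : v ≠ w := hwv.ne'
  have hvu : v ≠ u := huv.symm
  have hvunadj : ¬ G.Adj v u := fun h => hunadj h.symm
  have hadjuw : G.Adj u w := hwu.symm
  have hadjvw : G.Adj v w := hwv.symm
  -- Part 1 : f 0 = 0
  have hmem0 : memPG G I (0 : Matrix (Fin n) (Fin n) ℝ) :=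
    ⟨Matrix.PosSemidef.zero, fun i j => by simpa using h0, fun i j _ _ => rfl⟩
  have hB0 := hpres 0 hmem0
  have hBuu0 : applyG G f 0 u u = f 0 := by simp [applyG]
  have hBvv0 : applyG G f 0 v v = f 0 := by simp [applyG]
  have hBww0 : applyG G f 0 w w = f 0 := by simp [applyG]
  have hBuv0 : applyG G f 0 u v = 0 := by simp [applyG, huv, hunadj]
  have hBvu0 : applyG G f 0 v u = 0 := by simp [applyG, hvu, hvunadj]
  have hBuw0 : applyG G f 0 u w = f 0 := by simp [applyG, hadjuw]
  have hBwu0 : applyG G f 0 w u = f 0 := by simp [applyG, hwu]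
  have hBvw0 : applyG G f 0 v w = f 0 := by simp [applyG, hadjvw]
  have hBwv0 : applyG G f 0 w v = f 0 := by simp [applyG, hwv]
  have hd := psd_diag_aux hB0.1 u
  have hq := psd_quad_aux hB0.1 u v w
  rw [hBuu0] at hd
  rw [hBuu0, hBvv0, hBww0, hBuv0, hBvu0, hBuw0, hBwu0, hBvw0, hBwv0] at hq
  have hf0 : f 0 = 0 := by linarith
  refine ⟨hf0, ?_⟩
  -- Part 2 : superadditivity
  rintro x y ⟨hxI, hx⟩ ⟨hyI, hy⟩ ⟨hxyI, -⟩
  simp only [Set.mem_Ioi] at hx hy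
  set A : Matrix (Fin n) (Fin n) ℝ :=
    (Matrix.of fun a b => x * indVec u w a * indVec u w b) +
    (Matrix.of fun a b => y * indVec v w a * indVec v w b) with hAdef
  have hAapp : ∀ a b, A a b = x * indVec u w a * indVec u w b + y * indVec v w a * indVec v w b :=
    fun a b => rfl
  have hmem : memPG G I A := by
    refine ⟨(psd_rank_one_aux _ x hx.le).add (psd_rank_one_aux _ y hy.le), ?_, ?_⟩
    · intro a b
      rw [hAapp]
      unfold indVec
      split_ifs <;>
        simp only [mul_one, mul_zero, zero_add, add_zero] <;>
        first | exact hxyI | exact hxI | exact hyI | exact h0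
    · intro a b hab hnadj
      rw [hAapp, mul_assoc, mul_assoc, indVec_mul_eq_zero hadjuw hab hnadj,
        indVec_mul_eq_zero hadjvw hab hnadj, mul_zero, mul_zero, add_zero]
  have hB := hpres A hmem
  have hAuu : A u u = x := by
    rw [hAapp, indVec_left, indVec_zero hvu.symm huw]; ring
  have hAvv : A v v = y := by
    rw [hAapp, indVec_left, indVec_zero hvu hvw]; ring
  have hAww : A w w = x + y := by
    rw [hAapp, indVec_right, indVec_right]; ring
  have hAuw : A u w = x := by
    rw [hAapp, indVec_left, indVec_right, indVec_right, indVec_zero hvu.symm huw]; ring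
  have hAwu : A w u = x := by
    rw [hAapp, indVec_left, indVec_right, indVec_right, indVec_zero hvu.symm huw]; ring
  have hAvw : A v w = y := by
    rw [hAapp, indVec_left, indVec_right, indVec_right, indVec_zero hvu hvw]; ring
  have hAwv : A w v = y := by
    rw [hAapp, indVec_left, indVec_right, indVec_right, indVec_zero hvu hvw]; ring
  have hBuu : applyG G f A u u = f x := by simp [applyG, hAuu]
  have hBvv : applyG G f A v v = f y := by simp [applyG, hAvv]
  have hBww : applyG G f A w w = f (x + y) := by simp [applyG, hAww]
  have hBuv : applyG G f A u v = 0 := by simp [applyG, huv, hunadj]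
  have hBvu : applyG G f A v u = 0 := by simp [applyG, hvu, hvunadj]
  have hBuw : applyG G f A u w = f x := by simp [applyG, hadjuw, hAuw]
  have hBwu : applyG G f A w u = f x := by simp [applyG, hwu, hAwu]
  have hBvw : applyG G f A v w = f y := by simp [applyG, hadjvw, hAvw]
  have hBwv : applyG G f A w v = f y := by simp [applyG, hwv, hAwv]
  have hq2 := psd_quad_aux hB.1 u v w
  rw [hBuu, hBvv, hBww, hBuv, hBvu, hBuw, hBwu, hBvw, hBwv] at hq2
  linarith
end

section
/- Let I = [0,R) for some 0 < R ≤ ∞, and let f : I → ℝ. Suppose there exists a connected, non-complete finite simple graph G with at least 3 vertices such that f_G[A] ∈ P_G for every A ∈ P_G(I). Then f is superadditive on I (f(x+y) ≥ f(x) + f(y) whenever x, y, x+y ∈ I) and multiplicatively midpoint-convex on I (f(√(xy))² ≤ f(x)·f(y) for all x,y ∈ I). -/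
open Matrix
open scoped Classical ENNReal

/-- From a walk between distinct nonadjacent vertices, extract a 2-path with
nonadjacent endpoints. -/
lemma auxTriple {n : ℕ} {G : SimpleGraph (Fin n)} :
    ∀ (k : ℕ) (i j : Fin n), ∀ W : G.Walk i j, W.length ≤ k → i ≠ j → ¬ G.Adj i j →
    ∃ p q r : Fin n, G.Adj p q ∧ G.Adj q r ∧ p ≠ r ∧ ¬ G.Adj p r := by
  intro k
  induction k with
  | zero =>
    intro i j W hW hij _
    cases W with
    | nil => exact absurd rfl hij
    | cons h W' => simp at hW
  | succ k ih =>
    intro i j W hW hij hna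
    cases W with
    | nil => exact absurd rfl hij
    | cons h W' =>
      rename_i a
      cases W' with
      | nil => exact absurd h hna
      | cons h2 W'' =>
        rename_i b
        by_cases hib : i = b
        · subst hib
          exact ih i j W'' (by simp [SimpleGraph.Walk.length_cons] at hW; omega) hij hna
        · by_cases hadj2 : G.Adj i b
          · exact ih i j (SimpleGraph.Walk.cons hadj2 W'')
              (by simp [SimpleGraph.Walk.length_cons] at hW ⊢; omega) hij hna
          · exact ⟨i, a, b, h, h2, hib, hadj2⟩

lemma quad3 {n : ℕ} (M : Matrix (Fin n) (Fin n) ℝ) (hM : M.PosSemidef)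
    (p q r : Fin n) :
    0 ≤ (M p p - M p q + M p r) - (M q p - M q q + M q r) + (M r p - M r q + M r r) := by
  set v : Fin n → ℝ := fun i =>
    (if i = p then (1:ℝ) else 0) + (if i = q then (-1:ℝ) else 0) + (if i = r then (1:ℝ) else 0)
    with hv
  have hdot : ∀ g : Fin n → ℝ, g ⬝ᵥ v = g p - g q + g r := by
    intro g
    simp [dotProduct, hv, mul_add, Finset.sum_add_distrib, mul_ite, mul_one, mul_neg, mul_zero,
      Finset.sum_ite_eq']
    ring
  have h := hM.dotProduct_mulVec_nonneg v
  rw [star_trivial] at h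
  have hmv : ∀ i, (M *ᵥ v) i = M i p - M i q + M i r := fun i => hdot (fun j => M i j)
  have : v ⬝ᵥ (M *ᵥ v) =
      (M p p - M p q + M p r) - (M q p - M q q + M q r) + (M r p - M r q + M r r) := by
    have := hdot (M *ᵥ v)
    rw [dotProduct_comm] at this
    rw [this, hmv p, hmv q, hmv r]
  linarith [h, this.symm ▸ h]

lemma quad2 {n : ℕ} (M : Matrix (Fin n) (Fin n) ℝ) (hM : M.PosSemidef)
    (p q : Fin n) (t : ℝ) :
    0 ≤ M p p * (t * t) + (M p q + M q p) * t + M q q := by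
  set v : Fin n → ℝ := fun i => (if i = p then t else 0) + (if i = q then (1:ℝ) else 0) with hv
  have hdot : ∀ g : Fin n → ℝ, g ⬝ᵥ v = g p * t + g q := by
    intro g
    simp [dotProduct, hv, mul_add, Finset.sum_add_distrib, mul_ite, mul_one, mul_zero,
      Finset.sum_ite_eq']
  have h := hM.dotProduct_mulVec_nonneg v
  rw [star_trivial] at h
  have hmv : ∀ i, (M *ᵥ v) i = M i p * t + M i q := fun i => hdot (fun j => M i j)
  have heq : v ⬝ᵥ (M *ᵥ v) = M p p * (t * t) + (M p q + M q p) * t + M q q := by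
    have h1 := hdot (M *ᵥ v)
    rw [dotProduct_comm] at h1
    rw [h1, hmv p, hmv q]
    ring
  linarith [heq ▸ h]

lemma psd_two_outer {n : ℕ} (u w : Fin n → ℝ) :
    (Matrix.of fun i j => u i * u j + w i * w j : Matrix (Fin n) (Fin n) ℝ).PosSemidef := by
  have key : (Matrix.of fun i j => u i * u j + w i * w j : Matrix (Fin n) (Fin n) ℝ)
      = (Matrix.of ![u, w] : Matrix (Fin 2) (Fin n) ℝ)ᴴ * (Matrix.of ![u, w]) := by
    ext i j
    simp [Matrix.mul_apply, Matrix.conjTranspose_apply, Fin.sum_univ_two, Matrix.cons_val_zero,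
      Matrix.cons_val_one, Matrix.head_cons]
  rw [key]
  exact Matrix.posSemidef_conjTranspose_mul_self _

lemma psd_one_outer {n : ℕ} (u : Fin n → ℝ) :
    (Matrix.of fun i j => u i * u j : Matrix (Fin n) (Fin n) ℝ).PosSemidef := by
  have := psd_two_outer u (fun _ => 0)
  simpa using this

theorem stmt10 (R : ℝ≥0∞) (hR : 0 < R) (I : Set ℝ)
    (hI : I = {x : ℝ | 0 ≤ x ∧ ENNReal.ofReal x < R})
    (f : ℝ → ℝ)
    (h : ∃ (n : ℕ) (G : SimpleGraph (Fin n)), 3 ≤ n ∧ G.Connected ∧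
      (∃ i j : Fin n, i ≠ j ∧ ¬ G.Adj i j) ∧
      ∀ A : Matrix (Fin n) (Fin n) ℝ, memPG G I A → memPG G Set.univ (applyG G f A)) :
    (∀ x ∈ I, ∀ y ∈ I, x + y ∈ I → f x + f y ≤ f (x + y)) ∧
    (∀ x ∈ I, ∀ y ∈ I, (f (Real.sqrt (x * y))) ^ 2 ≤ f x * f y) := by
  obtain ⟨n, G, hn3, hconn, ⟨i0, j0, hij0, hna0⟩, hpres⟩ := h
  obtain ⟨W⟩ := hconn.preconnected i0 j0
  obtain ⟨p, q, r, hpq, hqr, hprne, hpr⟩ := auxTriple W.length i0 j0 W le_rfl hij0 hna0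
  have hpqne : p ≠ q := hpq.ne
  have hqrne : q ≠ r := hqr.ne
  have h0I : (0:ℝ) ∈ I := by rw [hI]; exact ⟨le_refl 0, by simpa using hR⟩
  constructor
  · -- superadditivity
    intro x hx y hy hxy
    have hx0 : 0 ≤ x := by rw [hI] at hx; exact hx.1
    have hy0 : 0 ≤ y := by rw [hI] at hy; exact hy.1
    set u : Fin n → ℝ := fun i => if i = p ∨ i = q then Real.sqrt x else 0 with hu
    set w : Fin n → ℝ := fun i => if i = q ∨ i = r then Real.sqrt y else 0 with hw
    set A : Matrix (Fin n) (Fin n) ℝ := Matrix.of fun i j => u i * u j + w i * w j with hA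
    have hApsd : A.PosSemidef := by rw [hA]; exact psd_two_outer u w
    have huval : ∀ i j, u i * u j = 0 ∨ u i * u j = x := by
      intro i j
      by_cases h1 : i = p ∨ i = q <;> by_cases h2 : j = p ∨ j = q <;>
        simp [hu, h1, h2, Real.mul_self_sqrt hx0]
    have hwval : ∀ i j, w i * w j = 0 ∨ w i * w j = y := by
      intro i j
      by_cases h1 : i = q ∨ i = r <;> by_cases h2 : j = q ∨ j = r <;>
        simp [hw, h1, h2, Real.mul_self_sqrt hy0]
    have hmem : ∀ i j, A i j ∈ I := by
      intro i j
      have hij : A i j = u i * u j + w i * w j := by rw [hA]; rfl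
      rcases huval i j with h1 | h1 <;> rcases hwval i j with h2 | h2 <;>
        rw [hij, h1, h2]
      · simpa using h0I
      · simpa using hy
      · simpa using hx
      · exact hxy
    have hsparse : sparsePattern G A := by
      intro i j hij hna
      have hu0 : u i * u j = 0 := by
        by_contra hne
        have hi : i = p ∨ i = q := by
          by_contra hc; simp only [hu] at hne; rw [if_neg hc] at hne; simp at hne
        have hj : j = p ∨ j = q := by
          by_contra hc; simp only [hu] at hne; rw [if_neg hc, mul_zero] at hne; exact hne rfl
        rcases hi with rfl | rfl <;> rcases hj with rfl | rfl
        · exact hij rfl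
        · exact hna hpq
        · exact hna hpq.symm
        · exact hij rfl
      have hw0 : w i * w j = 0 := by
        by_contra hne
        have hi : i = q ∨ i = r := by
          by_contra hc; simp only [hw] at hne; rw [if_neg hc] at hne; simp at hne
        have hj : j = q ∨ j = r := by
          by_contra hc; simp only [hw] at hne; rw [if_neg hc, mul_zero] at hne; exact hne rfl
        rcases hi with rfl | rfl <;> rcases hj with rfl | rfl
        · exact hij rfl
        · exact hna hqr
        · exact hna hqr.symm
        · exact hij rfl
      show A i j = 0
      rw [hA]; show u i * u j + w i * w j = 0
      rw [hu0, hw0, add_zero]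
    have hMG := hpres A ⟨hApsd, hmem, hsparse⟩
    set M : Matrix (Fin n) (Fin n) ℝ := applyG G f A with hM
    have epp : A p p = x := by
      rw [hA]; show u p * u p + w p * w p = x
      simp [hu, hw, hpqne, hprne, Real.mul_self_sqrt hx0]
    have epq : A p q = x := by
      rw [hA]; show u p * u q + w p * w q = x
      simp [hu, hw, hpqne, hprne, Real.mul_self_sqrt hx0]
    have eqp : A q p = x := by
      rw [hA]; show u q * u p + w q * w p = x
      simp [hu, hw, hpqne, hprne, Real.mul_self_sqrt hx0]
    have eqq : A q q = x + y := by
      rw [hA]; show u q * u q + w q * w q = x + y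
      simp [hu, hw, Real.mul_self_sqrt hx0, Real.mul_self_sqrt hy0]
    have eqr : A q r = y := by
      rw [hA]; show u q * u r + w q * w r = y
      simp [hu, hw, hprne.symm, hqrne.symm, Real.mul_self_sqrt hy0]
    have erq : A r q = y := by
      rw [hA]; show u r * u q + w r * w q = y
      simp [hu, hw, hprne.symm, hqrne.symm, Real.mul_self_sqrt hy0]
    have err : A r r = y := by
      rw [hA]; show u r * u r + w r * w r = y
      simp [hu, hw, hprne.symm, hqrne.symm, Real.mul_self_sqrt hy0]
    have Mpp : M p p = f x := by rw [hM]; show applyG G f A p p = f x; simp [applyG, epp]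
    have Mpq : M p q = f x := by
      rw [hM]; show applyG G f A p q = f x; simp [applyG, hpq, epq]
    have Mqp : M q p = f x := by
      rw [hM]; show applyG G f A q p = f x; simp [applyG, hpq.symm, eqp]
    have Mqq : M q q = f (x + y) := by
      rw [hM]; show applyG G f A q q = f (x + y); simp [applyG, eqq]
    have Mqr : M q r = f y := by
      rw [hM]; show applyG G f A q r = f y; simp [applyG, hqr, eqr]
    have Mrq : M r q = f y := by
      rw [hM]; show applyG G f A r q = f y; simp [applyG, hqr.symm, erq]
    have Mrr : M r r = f y := by rw [hM]; show applyG G f A r r = f y; simp [applyG, err]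
    have Mpr : M p r = 0 := by
      rw [hM]; show applyG G f A p r = 0; simp [applyG, hprne, hpr]
    have Mrp : M r p = 0 := by
      have hrp : ¬ G.Adj r p := fun hh => hpr (G.adj_symm hh)
      rw [hM]; show applyG G f A r p = 0
      simp [applyG, hprne.symm, hrp]
    have hq := quad3 M hMG.1 p q r
    rw [Mpp, Mpq, Mpr, Mqp, Mqq, Mqr, Mrp, Mrq, Mrr] at hq
    linarith
  · -- multiplicative midpoint convexity
    intro x hx y hy
    rw [hI] at hx hy
    obtain ⟨hx0, hxR⟩ := hx
    obtain ⟨hy0, hyR⟩ := hy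
    set s : ℝ := Real.sqrt (x * y) with hs
    have hsI : s ∈ I := by
      have hs0 : 0 ≤ s := Real.sqrt_nonneg _
      have hsle : s ≤ max x y := by
        rw [hs, show max x y = Real.sqrt (max x y * max x y) from
          (Real.sqrt_mul_self (le_trans hx0 (le_max_left x y))).symm]
        exact Real.sqrt_le_sqrt (by nlinarith [le_max_left x y, le_max_right x y])
      have hmax : ENNReal.ofReal (max x y) < R := by
        rcases max_cases x y with ⟨h1, _⟩ | ⟨h1, _⟩ <;> rw [h1]
        exacts [hxR, hyR]
      rw [hI]
      exact ⟨hs0, lt_of_le_of_lt (ENNReal.ofReal_le_ofReal hsle) hmax⟩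
    have hxI : x ∈ I := by rw [hI]; exact ⟨hx0, hxR⟩
    have hyI : y ∈ I := by rw [hI]; exact ⟨hy0, hyR⟩
    set z : Fin n → ℝ := fun i => if i = p then Real.sqrt x else if i = q then Real.sqrt y else 0
      with hz
    set B : Matrix (Fin n) (Fin n) ℝ := Matrix.of fun i j => z i * z j with hB
    have hBpsd : B.PosSemidef := by rw [hB]; exact psd_one_outer z
    have hzval : ∀ i, z i = 0 ∨ z i = Real.sqrt x ∨ z i = Real.sqrt y := by
      intro i; rw [hz]; dsimp only; split_ifs <;> tauto
    have hmem : ∀ i j, B i j ∈ I := by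
      intro i j
      have hij : B i j = z i * z j := by rw [hB]; rfl
      rw [hij]
      rcases hzval i with h1 | h1 | h1 <;> rcases hzval j with h2 | h2 | h2 <;> rw [h1, h2] <;>
        first
          | simpa using h0I
          | simpa [Real.mul_self_sqrt hx0] using hxI
          | simpa [Real.mul_self_sqrt hy0] using hyI
          | simpa [← Real.sqrt_mul hx0, mul_comm] using hsI
    have hsparse : sparsePattern G B := by
      intro i j hij hna
      show B i j = 0
      rw [hB]; show z i * z j = 0
      have hkey : ∀ k, z k ≠ 0 → k = p ∨ k = q := by
        intro k hk
        by_contra hc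
        push_neg at hc
        rw [hz] at hk
        simp only [if_neg hc.1, if_neg hc.2] at hk
        exact hk rfl
      by_contra hne
      have hi := hkey i fun h0 => hne (by rw [h0, zero_mul])
      have hj := hkey j fun h0 => hne (by rw [h0, mul_zero])
      rcases hi with rfl | rfl <;> rcases hj with rfl | rfl
      · exact hij rfl
      · exact hna hpq
      · exact hna hpq.symm
      · exact hij rfl
    have hMG := hpres B ⟨hBpsd, hmem, hsparse⟩
    set M : Matrix (Fin n) (Fin n) ℝ := applyG G f B with hM
    have epp : B p p = x := by
      rw [hB]; show z p * z p = x
      simp [hz, Real.mul_self_sqrt hx0]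
    have eqq : B q q = y := by
      rw [hB]; show z q * z q = y
      simp [hz, hpqne.symm, Real.mul_self_sqrt hy0]
    have epq : B p q = s := by
      rw [hB]; show z p * z q = s
      rw [hz]; simp [hpqne, hpqne.symm, hs, ← Real.sqrt_mul hx0]
    have eqp : B q p = s := by
      rw [hB]; show z q * z p = s
      rw [hz]; simp [hpqne, hpqne.symm, hs, ← Real.sqrt_mul hx0, mul_comm]
    have Mpp : M p p = f x := by rw [hM]; show applyG G f B p p = f x; simp [applyG, epp]
    have Mqq : M q q = f y := by rw [hM]; show applyG G f B q q = f y; simp [applyG, eqq]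
    have Mpq : M p q = f s := by
      rw [hM]; show applyG G f B p q = f s; simp [applyG, hpq, epq]
    have Mqp : M q p = f s := by
      rw [hM]; show applyG G f B q p = f s; simp [applyG, hpq.symm, eqp]
    have hquad : ∀ t : ℝ, 0 ≤ f x * (t * t) + (2 * f s) * t + f y := by
      intro t
      have hq := quad2 M hMG.1 p q t
      rw [Mpp, Mpq, Mqp, Mqq] at hq
      linarith
    have hd := discrim_le_zero hquad
    rw [discrim] at hd
    nlinarith [hd]
end

section
/- Let G be a tree with n ≥ 3 vertices. (a) For every α ≥ 1 and every A ∈ P_G([0,∞)), the entrywise power A^{∘α} := (a_{ij}^α) belongs to P_G. (b) For every 0 < α < 1 and every 0 < R ≤ ∞, there exists a matrix A_R ∈ P_G([0,R)) such that A_R^{∘α} is not positive semidefinite. -/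
open Matrix
open scoped Classical ENNReal

open SimpleGraph
open scoped NNReal

variable {n : ℕ}

lemma real_superadd {x y p : ℝ} (hx : 0 ≤ x) (hy : 0 ≤ y) (hp : 1 ≤ p) :
    x ^ p + y ^ p ≤ (x + y) ^ p := by
  lift x to ℝ≥0 using hx
  lift y to ℝ≥0 using hy
  exact_mod_cast NNReal.add_rpow_le_rpow_add x y hp




lemma symm_of_psd (A : Matrix (Fin n) (Fin n) ℝ) (h : A.IsHermitian) (i j : Fin n) :
    A i j = A j i := by
  have := congrFun (congrFun h.symm i) j
  simpa [Matrix.conjTranspose_apply] using this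

lemma diag_nonneg_of_psd (A : Matrix (Fin n) (Fin n) ℝ) (h : A.PosSemidef) (i : Fin n) :
    0 ≤ A i i := by
  have := h.dotProduct_mulVec_nonneg (Pi.single i 1)
  simpa [Matrix.mulVec_single_one, single_dotProduct] using this

lemma quad_form_two (A : Matrix (Fin n) (Fin n) ℝ) {i j : Fin n} (hij : i ≠ j) (s t : ℝ) :
    star (s • (Pi.single i 1 : Fin n → ℝ) + t • (Pi.single j 1 : Fin n → ℝ)) ⬝ᵥ
      (A *ᵥ (s • (Pi.single i 1 : Fin n → ℝ) + t • (Pi.single j 1 : Fin n → ℝ)))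
      = s^2 * A i i + s*t*(A i j) + s*t*(A j i) + t^2 * A j j := by
  have hstar : ∀ z : Fin n → ℝ, star z = z := fun z => by simp
  rw [hstar, Matrix.mulVec_add, Matrix.mulVec_smul, Matrix.mulVec_smul, Matrix.mulVec_single_one,
    Matrix.mulVec_single_one, add_dotProduct, smul_dotProduct,
    smul_dotProduct, single_dotProduct, single_dotProduct]
  simp only [Pi.add_apply, Pi.smul_apply, smul_eq_mul, mul_one, Matrix.col_apply]
  ring

lemma minor_of_psd (A : Matrix (Fin n) (Fin n) ℝ) (h : A.PosSemidef) (i j : Fin n) :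
    (A i j)^2 ≤ A i i * A j j := by
  by_cases hij : i = j
  · subst hij
    have := diag_nonneg_of_psd A h i
    nlinarith
  · have hq : ∀ s t : ℝ, 0 ≤ s^2 * A i i + s*t*(A i j) + s*t*(A j i) + t^2 * A j j := by
      intro s t
      have := h.dotProduct_mulVec_nonneg (s • (Pi.single i 1 : Fin n → ℝ) + t • (Pi.single j 1 : Fin n → ℝ))
      rwa [quad_form_two A hij s t] at this
    have hsym : A j i = A i j := symm_of_psd A h.1 j i
    by_cases hjj : A j j = 0
    · rw [hjj, mul_zero]
      have hAii := diag_nonneg_of_psd A h i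
      have hp : (0:ℝ) < A i i + 1 := by linarith
      have h1 := hq (-(A i j)) (A i i + 1)
      rw [hsym, hjj] at h1
      nlinarith [sq_nonneg (A i j), hAii, h1]
    · have hjpos : 0 < A j j := lt_of_le_of_ne (diag_nonneg_of_psd A h j) (Ne.symm hjj)
      have h2 := hq (A j j) (-(A i j))
      rw [hsym] at h2
      nlinarith
lemma psd_two {u x : Fin n} (hux : u ≠ x) (K : Matrix (Fin n) (Fin n) ℝ)
    (h0 : ∀ i j, (i ≠ u ∧ i ≠ x) ∨ (j ≠ u ∧ j ≠ x) → K i j = 0)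
    (hsymm : ∀ i j, K i j = K j i)
    (ha : 0 ≤ K u u) (hb : 0 ≤ K x x) (hkey : K u x ^ 2 ≤ K u u * K x x) :
    K.PosSemidef := by
  refine Matrix.PosSemidef.of_dotProduct_mulVec_nonneg ?_ ?_
  · ext i j
    simp only [Matrix.conjTranspose_apply, star_trivial]
    exact hsymm j i
  · intro y
    have hstar : star y = y := by simp
    have hmv : ∀ i, (K *ᵥ y) i = K i u * y u + K i x * y x := by
      intro i
      show ∑ j, K i j * y j = _
      rw [← Finset.sum_subset (Finset.subset_univ ({u, x} : Finset (Fin n)))]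
      · rw [Finset.sum_pair hux]
      · intro j _ hj
        simp only [Finset.mem_insert, Finset.mem_singleton] at hj
        push_neg at hj
        rw [h0 i j (Or.inr hj), zero_mul]
    have hdp : star y ⬝ᵥ (K *ᵥ y)
        = y u * (K u u * y u + K u x * y x) + y x * (K x u * y u + K x x * y x) := by
      rw [hstar]
      show ∑ i, y i * (K *ᵥ y) i = _
      rw [← Finset.sum_subset (Finset.subset_univ ({u, x} : Finset (Fin n)))]
      · rw [Finset.sum_pair hux, hmv u, hmv x]
      · intro i _ hi
        simp only [Finset.mem_insert, Finset.mem_singleton] at hi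
        push_neg at hi
        rw [hmv i, h0 i u (Or.inl hi), h0 i x (Or.inl hi)]
        ring
    rw [hdp, hsymm x u]
    rcases eq_or_lt_of_le ha with ha0 | hapos
    · have hb0 : K u x = 0 := by nlinarith [sq_nonneg (K u x)]
      rw [hb0, ← ha0]
      nlinarith [sq_nonneg (y x), hb]
    · nlinarith [sq_nonneg (K u u * y u + K u x * y x),
        mul_nonneg (sub_nonneg.2 hkey) (sq_nonneg (y x))]

lemma vmv_mulVec (c : Fin n → ℝ) (y : Fin n → ℝ) :
    Matrix.vecMulVec c c *ᵥ y = (c ⬝ᵥ y) • c := by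
  ext i
  simp [Matrix.mulVec, Matrix.vecMulVec_apply, dotProduct, Finset.mul_sum, Finset.sum_mul,
    mul_comm, mul_left_comm]

lemma schur_psd (A : Matrix (Fin n) (Fin n) ℝ) (hA : A.PosSemidef) (u : Fin n)
    (hd : 0 < A u u) :
    (A - (A u u)⁻¹ • Matrix.vecMulVec (fun i => A i u) (fun i => A i u)).PosSemidef := by
  have hs : ∀ i j, A i j = A j i := symm_of_psd A hA.1
  set c : Fin n → ℝ := fun i => A i u with hc
  refine Matrix.PosSemidef.of_dotProduct_mulVec_nonneg ?_ ?_
  · ext i j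
    simp only [Matrix.conjTranspose_apply, star_trivial, Matrix.sub_apply, Matrix.smul_apply,
      Matrix.vecMulVec_apply, smul_eq_mul]
    rw [hs j i]
    ring
  · intro y
    have hstar : ∀ z : Fin n → ℝ, star z = z := fun z => by simp
    set s : ℝ := c ⬝ᵥ y with hsdef
    set y' : Fin n → ℝ := y - (s / A u u) • (Pi.single u 1 : Fin n → ℝ) with hy'
    have h0 := hA.dotProduct_mulVec_nonneg y'
    rw [hstar] at h0
    have hAy': A *ᵥ y' = A *ᵥ y - (s / A u u) • c := by
      rw [hy', Matrix.mulVec_sub, Matrix.mulVec_smul, Matrix.mulVec_single]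
      congr 1
      ext i
      simp [hc]
    have hyc : y ⬝ᵥ c = s := by rw [hsdef, dotProduct_comm]
    have hsingA : Pi.single u 1 ⬝ᵥ (A *ᵥ y) = s := by
      rw [single_dotProduct, one_mul]
      show (∑ j, A u j * y j) = s
      rw [hsdef]
      exact Finset.sum_congr rfl fun j _ => by rw [hs u j]
    have hsingc : Pi.single u (1:ℝ) ⬝ᵥ c = A u u := by
      rw [single_dotProduct, one_mul]
    have key : y' ⬝ᵥ (A *ᵥ y') = y ⬝ᵥ (A *ᵥ y) - s ^ 2 / A u u := by
      rw [hAy', hy']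
      rw [sub_dotProduct, smul_dotProduct, dotProduct_sub,
        dotProduct_smul, dotProduct_sub, dotProduct_smul,
        hyc, hsingA, hsingc]
      field_simp [hd.ne']
      linear_combination (s ^ 2 * (A u u * (A u u)⁻¹ - 1)) * mul_inv_cancel₀ hd.ne'
    rw [key] at h0
    have goal_eq : star y ⬝ᵥ ((A - (A u u)⁻¹ • Matrix.vecMulVec c c) *ᵥ y)
        = y ⬝ᵥ (A *ᵥ y) - s ^ 2 / A u u := by
      rw [hstar, Matrix.sub_mulVec, Matrix.smul_mulVec, vmv_mulVec,
        dotProduct_sub, dotProduct_smul, ← hsdef, dotProduct_smul, hyc]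
      field_simp [hd.ne']
      linear_combination (-s ^ 2) * mul_inv_cancel₀ hd.ne'
    rw [goal_eq]
    exact h0


lemma acyclic_mono {V : Type*} {G H : SimpleGraph V} (h : G ≤ H) (hH : H.IsAcyclic) :
    G.IsAcyclic := fun _ c hc => hH (c.mapLe h) (hc.mapLe h)

lemma exists_leaf_s11 (G : SimpleGraph (Fin n)) (hac : G.IsAcyclic) {a0 b0 : Fin n}
    (hab : G.Adj a0 b0) :
    ∃ u x, G.Adj u x ∧ ∀ w, G.Adj u w → w = x := by
  set P : ℕ → Prop := fun k => ∃ (u v : Fin n) (p : G.Walk u v), p.IsPath ∧ p.length = k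
    with hP
  have hP1 : P 1 := ⟨a0, b0, (SimpleGraph.Path.singleton hab).1,
    (SimpleGraph.Path.singleton hab).2, rfl⟩
  have hbound : ∀ k, P k → k ≤ n := by
    rintro k ⟨u, v, p, hp, hl⟩
    have := hp.length_lt
    rw [hl, Fintype.card_fin] at this
    omega
  have hk0 : P (Nat.findGreatest P n) := Nat.findGreatest_spec (hbound 1 hP1) hP1
  have h1 : 1 ≤ Nat.findGreatest P n := Nat.le_findGreatest (hbound 1 hP1) hP1
  obtain ⟨u, v, p, hp, hl⟩ := hk0
  cases p with
  | nil => simp at hl; omega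
  | @cons _ y _ h q =>
    have hq := (Walk.cons_isPath_iff h q).mp hp
    refine ⟨u, y, h, fun w hw => ?_⟩
    by_cases hmem : w ∈ (Walk.cons h q).support
    · have hpp : ((Walk.cons h q).takeUntil w hmem).IsPath := hp.takeUntil hmem
      have hsingle : (Walk.cons hw Walk.nil).IsPath := by
        simp [Walk.cons_isPath_iff]; exact hw.ne
      have huniq := hac.path_unique ⟨(Walk.cons h q).takeUntil w hmem, hpp⟩
        ⟨Walk.cons hw Walk.nil, hsingle⟩
      have hpe : (Walk.cons h q).takeUntil w hmem = Walk.cons hw Walk.nil :=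
        congrArg Subtype.val huniq
      have he : s(u, w) ∈ ((Walk.cons h q).takeUntil w hmem).edges := by
        rw [hpe]; simp
      have he2 : s(u, w) ∈ (Walk.cons h q).edges :=
        Walk.edges_takeUntil_subset _ hmem he
      rw [Walk.edges_cons] at he2
      rcases List.mem_cons.mp he2 with he3 | he3
      · rw [Sym2.eq_iff] at he3
        rcases he3 with ⟨-, rfl⟩ | ⟨rfl, rfl⟩
        · rfl
        · exact absurd rfl h.ne
      · exact absurd (Walk.fst_mem_support_of_mem_edges q he3) hq.2
    · have hext : (Walk.cons hw.symm (Walk.cons h q)).IsPath :=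
        (Walk.cons_isPath_iff _ _).mpr ⟨hp, hmem⟩
      have hPk : P ((Walk.cons h q).length + 1) := ⟨w, v, _, hext, by simp⟩
      have hle : (Walk.cons h q).length + 1 ≤ n := hbound _ hPk
      exact absurd hPk (Nat.findGreatest_is_greatest (by omega) hle)
lemma psd_vecMulVec (v : Fin n → ℝ) : (Matrix.vecMulVec v v).PosSemidef := by
  refine Matrix.PosSemidef.of_dotProduct_mulVec_nonneg ?_ ?_
  · ext i j
    simp [Matrix.conjTranspose_apply, Matrix.vecMulVec_apply, mul_comm]
  · intro y
    have hstar : star y = y := by simp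
    rw [hstar, vmv_mulVec, dotProduct_smul, smul_eq_mul, dotProduct_comm]
    exact mul_self_nonneg _

lemma walk_cherry (G : SimpleGraph (Fin n)) :
    ∀ {a d : Fin n} (_ : G.Walk a d), a ≠ d → ¬G.Adj a d →
      ∃ v u w, u ≠ w ∧ G.Adj v u ∧ G.Adj v w := by
  intro a d p
  induction p with
  | nil => intro h _; exact absurd rfl h
  | @cons a y d h q ih =>
    intro hne hnadj
    by_cases hyd : y = d
    · subst hyd; exact absurd h hnadj
    · by_cases hadj : G.Adj y d
      · exact ⟨y, a, d, hne, h.symm, hadj⟩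
      · exact ih hyd hadj

lemma exists_cherry (G : SimpleGraph (Fin n)) (hn : 3 ≤ n) (hc : G.Connected) :
    ∃ v u w, u ≠ w ∧ G.Adj v u ∧ G.Adj v w := by
  by_cases hall : ∀ a d : Fin n, a ≠ d → G.Adj a d
  · refine ⟨⟨0, by omega⟩, ⟨1, by omega⟩, ⟨2, by omega⟩, ?_, ?_, ?_⟩
    · exact Fin.ne_of_val_ne (by norm_num)
    · exact hall _ _ (Fin.ne_of_val_ne (by norm_num))
    · exact hall _ _ (Fin.ne_of_val_ne (by norm_num))
  · push_neg at hall
    obtain ⟨a, d, hne, hnadj⟩ := hall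
    obtain ⟨p⟩ := hc.preconnected a d
    exact walk_cherry G p hne hnadj

set_option maxHeartbeats 1000000 in
lemma part_b (G : SimpleGraph (Fin n)) {v u w : Fin n} (huw : u ≠ w)
    (huv : G.Adj v u) (hvw : G.Adj v w)
    (α : ℝ) (hα0 : 0 < α) (hα1 : α < 1) (R : ℝ≥0∞) (hR : 0 < R) :
    ∃ A : Matrix (Fin n) (Fin n) ℝ,
      (A.PosSemidef ∧ (∀ i j, A i j ∈ {x : ℝ | 0 ≤ x ∧ ENNReal.ofReal x < R}) ∧
        (∀ i j, i ≠ j → ¬ G.Adj i j → A i j = 0)) ∧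
      ¬ (Matrix.of fun i j => A i j ^ α : Matrix (Fin n) (Fin n) ℝ).PosSemidef := by
  have hnuv : u ≠ v := huv.ne'
  have hnvw : v ≠ w := hvw.ne
  obtain ⟨r, hr0, hrR⟩ := ENNReal.lt_iff_exists_nnreal_btwn.mp hR
  set ε : ℝ := (r : ℝ) with hεdef
  have hεpos : 0 < ε := by
    have : (0:ℝ≥0) < r := ENNReal.coe_pos.mp hr0
    exact_mod_cast this
  set s : ℝ := Real.sqrt (ε / 2) with hsdef
  have hs2 : s ^ 2 = ε / 2 := Real.sq_sqrt (by positivity)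
  have hspos : 0 < s := Real.sqrt_pos.mpr (by positivity)
  set y : Fin n → ℝ := Pi.single u s + Pi.single v s + Pi.single w s with hydef
  set z : Fin n → ℝ := Pi.single u s - Pi.single w s with hzdef
  set A : Matrix (Fin n) (Fin n) ℝ := Matrix.vecMulVec y y + Matrix.vecMulVec z z with hAdef
  have hA : ∀ i j, A i j = y i * y j + z i * z j := by
    intro i j
    rw [hAdef]
    simp [Matrix.add_apply, Matrix.vecMulVec_apply]
  have hy : ∀ i, y i = if i = u then s else if i = v then s else if i = w then s else 0 := by
    intro i
    rw [hydef]
    simp only [Pi.add_apply, Pi.single_apply]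
    split_ifs <;> simp_all
  have hz : ∀ i, z i = if i = u then s else if i = w then -s else 0 := by
    intro i
    rw [hzdef]
    simp only [Pi.sub_apply, Pi.single_apply]
    split_ifs <;> simp_all
  have hofR : ∀ x : ℝ, x ≤ ε → ENNReal.ofReal x < R := by
    intro x hx
    calc ENNReal.ofReal x ≤ ENNReal.ofReal ε := ENNReal.ofReal_le_ofReal hx
    _ = (r : ℝ≥0∞) := by rw [hεdef, ENNReal.ofReal_coe_nnreal]
    _ < R := hrR
  have hαne : α ≠ 0 := ne_of_gt hα0
  -- entries
  have hne' : v ≠ u := Ne.symm hnuv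
  have hne'' : w ≠ u := Ne.symm huw
  have hne''' : w ≠ v := Ne.symm hnvw
  have hAuu : A u u = 2 * s ^ 2 := by
    rw [hA u u, hy u, hz u]
    simp
    try ring
  have hAvv : A v v = s ^ 2 := by
    rw [hA v v, hy v, hz v]
    simp [hnuv, hnvw, huw, hne', hne'', hne''']
    try ring
  have hAww : A w w = 2 * s ^ 2 := by
    rw [hA w w, hy w, hz w]
    simp [hnuv, hnvw, huw, hne', hne'', hne''']
    try ring
  have hAuv : A u v = s ^ 2 := by
    rw [hA u v, hy u, hy v, hz u, hz v]
    simp [hnuv, hnvw, huw, hne', hne'', hne''']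
    try ring
  have hAvw : A v w = s ^ 2 := by
    rw [hA v w, hy v, hy w, hz v, hz w]
    simp [hnuv, hnvw, huw, hne', hne'', hne''']
    try ring
  have hAuw : A u w = 0 := by
    rw [hA u w, hy u, hy w, hz u, hz w]
    simp [hnuv, hnvw, huw, hne', hne'', hne''']
    try ring
  refine ⟨A, ⟨?_, ?_, ?_⟩, ?_⟩
  · exact (psd_vecMulVec y).add (psd_vecMulVec z)
  · intro i j
    refine ⟨?_, hofR _ ?_⟩ <;>
    · rw [hA i j, hy i, hy j, hz i, hz j]
      split_ifs <;> nlinarith [hs2, hεpos, sq_nonneg s, hspos]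
  · intro i j hij hnadj
    have haux1 : G.Adj u v := huv.symm
    have haux2 : G.Adj w v := hvw.symm
    have hcases : ∀ i, (y i = s ∧ z i = s ∧ i = u) ∨ (y i = s ∧ z i = 0 ∧ i = v) ∨
        (y i = s ∧ z i = -s ∧ i = w) ∨ (y i = 0 ∧ z i = 0 ∧ True) := by
      intro i
      by_cases h1 : i = u
      · exact Or.inl ⟨by rw [hy, if_pos h1], by rw [hz, if_pos h1], h1⟩
      · by_cases h2 : i = v
        · refine Or.inr (Or.inl ⟨?_, ?_, h2⟩)
          · rw [hy, if_neg h1, if_pos h2]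
          · rw [hz, if_neg h1, if_neg (fun h => hnvw (h2.symm.trans h))]
        · by_cases h3 : i = w
          · refine Or.inr (Or.inr (Or.inl ⟨?_, ?_, h3⟩))
            · rw [hy, if_neg h1, if_neg h2, if_pos h3]
            · rw [hz, if_neg h1, if_pos h3]
          · refine Or.inr (Or.inr (Or.inr ⟨?_, ?_, trivial⟩))
            · rw [hy, if_neg h1, if_neg h2, if_neg h3]
            · rw [hz, if_neg h1, if_neg h3]
    obtain ⟨hyi, hzi, hi⟩ | ⟨hyi, hzi, hi⟩ | ⟨hyi, hzi, hi⟩ | ⟨hyi, hzi, hi⟩ := hcases i <;>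
      obtain ⟨hyj, hzj, hj⟩ | ⟨hyj, hzj, hj⟩ | ⟨hyj, hzj, hj⟩ | ⟨hyj, hzj, hj⟩ := hcases j
    all_goals rw [hA i j, hyi, hyj, hzi, hzj]
    all_goals
      first
        | ring1
        | exact absurd (hi.trans hj.symm) hij
        | exact absurd (show G.Adj i j by rw [hi, hj]; exact haux1) hnadj
        | exact absurd (show G.Adj i j by rw [hi, hj]; exact huv) hnadj
        | exact absurd (show G.Adj i j by rw [hi, hj]; exact hvw) hnadj
        | exact absurd (show G.Adj i j by rw [hi, hj]; exact haux2) hnadj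
  · intro hPSD
    set x0 : Fin n → ℝ := (Pi.single u 1 : Fin n → ℝ) + (Pi.single w 1 : Fin n → ℝ) - (2:ℝ) • (Pi.single v 1 : Fin n → ℝ) with hx0
    have hq := hPSD.dotProduct_mulVec_nonneg x0
    have hstar : star x0 = x0 := by simp
    rw [hstar] at hq
    set M : Matrix (Fin n) (Fin n) ℝ := Matrix.of fun i j => A i j ^ α with hM
    have hmv : ∀ i, (M *ᵥ x0) i = M i u + M i w - 2 * M i v := by
      intro i
      show (fun j => M i j) ⬝ᵥ x0 = _
      rw [hx0, dotProduct_sub, dotProduct_add, dotProduct_single,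
        dotProduct_single, dotProduct_smul, dotProduct_single]
      simp only [smul_eq_mul]
      ring
    have hdp : x0 ⬝ᵥ (M *ᵥ x0)
        = ((M *ᵥ x0) u) + ((M *ᵥ x0) w) - 2 * ((M *ᵥ x0) v) := by
      rw [hx0, sub_dotProduct, add_dotProduct, single_dotProduct,
        single_dotProduct, smul_dotProduct, single_dotProduct]
      simp only [smul_eq_mul]
      ring
    have hMapp : ∀ i j, M i j = A i j ^ α := fun i j => rfl
    have hMsymm : ∀ i j, M i j = M j i := by
      intro i j
      rw [hMapp, hMapp]
      congr 1
      have h1 := (psd_vecMulVec y).add (psd_vecMulVec z)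
      have := congrFun (congrFun h1.1.symm i) j
      simpa [Matrix.conjTranspose_apply, hAdef] using this
    have hval : x0 ⬝ᵥ (M *ᵥ x0) = 2 * (2 * s ^ 2) ^ α - 4 * (s ^ 2) ^ α := by
      rw [hdp, hmv u, hmv w, hmv v]
      rw [hMsymm w u, hMsymm v u, hMsymm w v]
      rw [hMapp, hMapp, hMapp, hMapp, hMapp, hMapp]
      rw [hAuu, hAww, hAvv, hAuv, hAvw, hAuw, Real.zero_rpow hαne]
      ring
    rw [hval] at hq
    have h2s : 2 * s ^ 2 = ε := by rw [hs2]; ring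
    have hs2' : s ^ 2 = ε / 2 := hs2
    rw [h2s, hs2'] at hq
    have h2a : (2:ℝ) ^ α < 2 := by
      have := Real.rpow_lt_rpow_of_exponent_lt (by norm_num : (1:ℝ) < 2) hα1
      rwa [Real.rpow_one] at this
    have hεα : 0 < ε ^ α := Real.rpow_pos_of_pos hεpos α
    have h2αpos : (0:ℝ) < 2 ^ α := Real.rpow_pos_of_pos (by norm_num) α
    rw [Real.div_rpow hεpos.le (by norm_num)] at hq
    have hq2 : 0 ≤ (2 * ε ^ α - 4 * (ε ^ α / 2 ^ α)) * 2 ^ α := mul_nonneg hq h2αpos.le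
    have hq3 : ε ^ α / 2 ^ α * 2 ^ α = ε ^ α := div_mul_cancel₀ _ (ne_of_gt h2αpos)
    nlinarith [hq2, hq3, hεα, h2a, h2αpos]

lemma edgeless_psd (G : SimpleGraph (Fin n)) (hbot : ∀ i j : Fin n, ¬G.Adj i j)
    (A : Matrix (Fin n) (Fin n) ℝ) (hnn : ∀ i j, 0 ≤ A i j) (hsp : sparsePattern G A)
    (α : ℝ) (hα : 1 ≤ α) : (Matrix.of fun i j => A i j ^ α).PosSemidef := by
  have heq : (Matrix.of fun i j => A i j ^ α) = Matrix.diagonal (fun i => A i i ^ α) := by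
    ext i j
    by_cases hij : i = j
    · subst hij; simp
    · rw [Matrix.of_apply, Matrix.diagonal_apply_ne _ hij, hsp i j hij (hbot i j),
        Real.zero_rpow (by linarith)]
  rw [heq]
  exact Matrix.PosSemidef.diagonal (fun i => Real.rpow_nonneg (hnn i i) α)

lemma main_psd (α : ℝ) (hα : 1 ≤ α) :
    ∀ (m : ℕ) (G : SimpleGraph (Fin n)), G.IsAcyclic → G.edgeFinset.card ≤ m →
    ∀ A : Matrix (Fin n) (Fin n) ℝ, A.PosSemidef → (∀ i j, 0 ≤ A i j) → sparsePattern G A →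
    (Matrix.of fun i j => A i j ^ α).PosSemidef := by
  intro m
  induction m with
  | zero =>
    intro G hac hcard A hA hnn hsp
    refine edgeless_psd G ?_ A hnn hsp α hα
    intro i j hadj
    have hmem : s(i, j) ∈ G.edgeFinset := by rw [mem_edgeFinset]; exact hadj
    have := Finset.card_pos.mpr ⟨_, hmem⟩
    omega
  | succ m ih =>
    intro G hac hcard A hA hnn hsp
    by_cases hbot : G = ⊥
    · refine edgeless_psd G ?_ A hnn hsp α hα
      subst hbot; simp
    · obtain ⟨e, he⟩ := SimpleGraph.edgeSet_nonempty.mpr hbot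
      obtain ⟨a, b, hab⟩ : ∃ a b : Fin n, G.Adj a b := by
        revert he
        refine Sym2.ind (fun a b he => ?_) e
        exact ⟨a, b, (SimpleGraph.mem_edgeSet G).mp he⟩
      obtain ⟨u, x, hux, huniq⟩ := exists_leaf_s11 G hac hab
      set G' := G.deleteEdges {s(u, x)} with hG'
      have hle : G' ≤ G := SimpleGraph.deleteEdges_le _
      have hac' : G'.IsAcyclic := acyclic_mono hle hac
      have hnadj' : ¬ G'.Adj u x := by simp [hG']
      have hcard' : G'.edgeFinset.card ≤ m := by
        have hss : G'.edgeFinset ⊂ G.edgeFinset := by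
          refine (Finset.ssubset_iff_of_subset (edgeFinset_subset_edgeFinset.mpr hle)).mpr ?_
          refine ⟨s(u, x), ?_, ?_⟩
          · rw [mem_edgeFinset, SimpleGraph.mem_edgeSet]; exact hux
          · rw [mem_edgeFinset, SimpleGraph.mem_edgeSet]; exact hnadj'
        have := Finset.card_lt_card hss
        omega
      have hs : ∀ i j, A i j = A j i := symm_of_psd A hA.1
      have hADJ : ∀ i, i ≠ u → i ≠ x → A i u = 0 := fun i hiu hix =>
        hsp i u hiu (fun hadj => hix (huniq i hadj.symm))
      have hG'adj : ∀ i j, i ≠ u → j ≠ u → ¬ G'.Adj i j → ¬ G.Adj i j := by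
        intro i j hiu hju hnadj hGadj
        apply hnadj
        rw [hG', SimpleGraph.deleteEdges_adj]
        refine ⟨hGadj, ?_⟩
        rw [Set.mem_singleton_iff, Sym2.eq_iff]
        rintro (⟨rfl, rfl⟩ | ⟨rfl, rfl⟩)
        · exact hiu rfl
        · exact hju rfl
      by_cases hd : A u u = 0
      · have hux0 : A u x = 0 := by
          have h1 := minor_of_psd A hA u x
          have hxx := diag_nonneg_of_psd A hA x
          nlinarith [h1, sq_nonneg (A u x)]
        have hsp' : sparsePattern G' A := by
          intro i j hij hnadj
          by_cases hGadj : G.Adj i j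
          · have : s(i, j) ∈ ({s(u, x)} : Set (Sym2 (Fin n))) := by
              by_contra hcon
              exact hnadj (by rw [hG', SimpleGraph.deleteEdges_adj]; exact ⟨hGadj, hcon⟩)
            rw [Set.mem_singleton_iff, Sym2.eq_iff] at this
            rcases this with ⟨rfl, rfl⟩ | ⟨rfl, rfl⟩
            · exact hux0
            · rw [hs]; exact hux0
          · exact hsp i j hij hGadj
        exact ih G' hac' (by convert hcard') A hA hnn hsp'
      · have hd' : 0 < A u u := lt_of_le_of_ne (diag_nonneg_of_psd A hA u) (Ne.symm hd)
        set c : Fin n → ℝ := fun i => A i u with hc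
        set A' := A - (A u u)⁻¹ • Matrix.vecMulVec c c with hA'def
        have hA' : A'.PosSemidef := schur_psd A hA u hd'
        have hA'app : ∀ i j, A' i j = A i j - (A u u)⁻¹ * (A i u * A j u) := by
          intro i j
          rw [hA'def]
          simp [Matrix.sub_apply, Matrix.smul_apply, Matrix.vecMulVec_apply, hc, smul_eq_mul]
        have hrow : ∀ j, A' u j = 0 := by
          intro j
          rw [hA'app, hs u j]
          field_simp
          ring
        have hcol : ∀ i, A' i u = 0 := by
          intro i
          rw [hA'app]
          field_simp
          ring
        have heq : ∀ i j, i ≠ u → j ≠ u → (i ≠ x ∨ j ≠ x) → A' i j = A i j := by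
          intro i j hiu hju hox
          rw [hA'app]
          rcases hox with hix | hjx
          · rw [hADJ i hiu hix]; ring
          · rw [hADJ j hju hjx]; ring
        set t : ℝ := (A u u)⁻¹ * (A x u * A x u) with htdef
        have hxx' : A' x x = A x x - t := hA'app x x
        have hxu : u ≠ x := hux.ne
        have ht : 0 ≤ t := by
          rw [htdef]
          exact mul_nonneg (inv_nonneg.mpr hd'.le) (mul_self_nonneg _)
        have htle : t ≤ A x x := by
          have h2 : A x u * A x u ≤ A x x * A u u := by
            nlinarith [minor_of_psd A hA x u]
          calc t = (A u u)⁻¹ * (A x u * A x u) := htdef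
            _ ≤ (A u u)⁻¹ * (A x x * A u u) :=
              mul_le_mul_of_nonneg_left h2 (inv_nonneg.mpr hd'.le)
            _ = A x x := by field_simp
        have hnn' : ∀ i j, 0 ≤ A' i j := by
          intro i j
          by_cases hiu : i = u
          · subst hiu; rw [hrow]
          · by_cases hju : j = u
            · subst hju; rw [hcol]
            · by_cases hix : i = x
              · by_cases hjx : j = x
                · subst hix; subst hjx; rw [hxx']; linarith
                · rw [heq i j hiu hju (Or.inr hjx)]; exact hnn i j
              · rw [heq i j hiu hju (Or.inl hix)]; exact hnn i j
        have hsp' : sparsePattern G' A' := by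
          intro i j hij hnadj
          by_cases hiu : i = u
          · subst hiu; exact hrow j
          · by_cases hju : j = u
            · subst hju; exact hcol i
            · have hij' : A' i j = A i j := by
                apply heq i j hiu hju
                by_contra hcon
                push_neg at hcon
                obtain ⟨rfl, rfl⟩ := hcon
                exact hij rfl
              rw [hij']
              exact hsp i j hij (hG'adj i j hiu hju hnadj)
        have hB := ih G' hac' (by convert hcard') A' hA' hnn' hsp'
        set K : Matrix (Fin n) (Fin n) ℝ := Matrix.of (fun i j => A i j ^ α - A' i j ^ α)
          with hK
        have hα0 : α ≠ 0 := by linarith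
        have hα0' : (0:ℝ) ≤ α := by linarith
        have hKuu : K u u = A u u ^ α := by
          simp only [hK, Matrix.of_apply, hrow u, Real.zero_rpow hα0, sub_zero]
        have hKux : K u x = A u x ^ α := by
          simp only [hK, Matrix.of_apply, hrow x, Real.zero_rpow hα0, sub_zero]
        have hKxx : K x x = A x x ^ α - (A x x - t) ^ α := by
          simp only [hK, Matrix.of_apply, hxx']
        have hsuper : t ^ α ≤ A x x ^ α - (A x x - t) ^ α := by
          have := real_superadd ht (by linarith : (0:ℝ) ≤ A x x - t) hα
          have heq2 : t + (A x x - t) = A x x := by ring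
          rw [heq2] at this
          linarith
        have hKpsd : K.PosSemidef := by
          apply psd_two hxu
          · intro i j hor
            simp only [hK, Matrix.of_apply]
            rcases hor with ⟨hiu, hix⟩ | ⟨hju, hjx⟩
            · by_cases hju : j = u
              · rw [hju, hcol i, hADJ i hiu hix]
                simp [Real.zero_rpow hα0]
              · rw [heq i j hiu hju (Or.inl hix)]; exact sub_self _
            · by_cases hiu : i = u
              · rw [hiu, hrow j, hs u j, hADJ j hju hjx]
                simp [Real.zero_rpow hα0]
              · rw [heq i j hiu hju (Or.inr hjx)]; exact sub_self _
          · intro i j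
            simp only [hK, Matrix.of_apply]
            rw [hs i j, symm_of_psd A' hA'.1 i j]
          · rw [hKuu]; exact Real.rpow_nonneg hd'.le α
          · rw [hKxx]
            have := Real.rpow_le_rpow (show (0:ℝ) ≤ A x x - t by linarith)
              (show A x x - t ≤ A x x by linarith) hα0'
            linarith
          · rw [hKuu, hKux, hKxx]
            have hAux : 0 ≤ A u x := hnn u x
            have h1 : (A u x ^ α) ^ 2 = (A u x * A u x) ^ α := by
              rw [sq, ← Real.mul_rpow hAux hAux]
            have hdt : A u x * A u x = A u u * t := by
              rw [htdef, hs x u]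
              field_simp
            rw [h1, hdt, Real.mul_rpow hd'.le ht]
            exact mul_le_mul_of_nonneg_left hsuper (Real.rpow_nonneg hd'.le α)
        have hsum : (Matrix.of fun i j => A i j ^ α)
            = (Matrix.of fun i j => A' i j ^ α) + K := by
          ext i j
          simp only [hK, Matrix.of_apply, Matrix.add_apply]
          ring
        rw [hsum]
        exact hB.add hKpsd

theorem stmt11 {n : ℕ} (hn : 3 ≤ n) (G : SimpleGraph (Fin n)) (hG : G.IsTree) :
    (∀ α : ℝ, 1 ≤ α → ∀ A : Matrix (Fin n) (Fin n) ℝ, memPG G (Set.Ici 0) A →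
      memPG G Set.univ (Matrix.of fun i j => A i j ^ α)) ∧
    (∀ α : ℝ, 0 < α → α < 1 → ∀ R : ℝ≥0∞, 0 < R →
      ∃ A : Matrix (Fin n) (Fin n) ℝ,
        memPG G {x : ℝ | 0 ≤ x ∧ ENNReal.ofReal x < R} A ∧
        ¬ (Matrix.of fun i j => A i j ^ α : Matrix (Fin n) (Fin n) ℝ).PosSemidef) := by
  constructor
  · intro α hα A hA
    obtain ⟨hpsd, hent, hsp⟩ := hA
    refine ⟨?_, fun i j => trivial, ?_⟩
    · exact main_psd α hα G.edgeFinset.card G hG.IsAcyclic le_rfl A hpsd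
        (fun i j => Set.mem_Ici.mp (hent i j)) hsp
    · intro i j hij hnadj
      show (A i j) ^ α = 0
      rw [hsp i j hij hnadj, Real.zero_rpow (by linarith)]
  · intro α hα0 hα1 R hR
    obtain ⟨v, u, w, huw, hvu, hvw⟩ := exists_cherry G hn hG.isConnected
    obtain ⟨A, ⟨hpsd, hmem, hsp⟩, hnpsd⟩ := part_b G huw hvu hvw α hα0 hα1 R hR
    exact ⟨A, ⟨hpsd, hmem, hsp⟩, hnpsd⟩
end

section
/- Fix 1 < r < s < ∞, a measurable set B ⊆ (r,s), and a_r, a_s > 0. Let μ be a finite nonnegative measure on B with μ(B) > 0, and let h : B → ℝ be a bounded measurable function. Define f(x) = a_r x^r + a_s x^s + ∫_B h(β) x^β dμ(β) for x ≥ 0. Then there exists ν > 0 such that whenever h(β) > −ν for all β ∈ B, the function f is nonnegative and superadditive on [0,∞), i.e. f(x) ≥ 0 and f(x+y) ≥ f(x) + f(y) for all x, y ≥ 0. -/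
open MeasureTheory

/-- The function `f(x) = a_r x^r + a_s x^s + ∫_B h(β) x^β dμ(β)`. -/
noncomputable def fMix (ar as r s : ℝ) (B : Set ℝ) (μ : Measure ℝ) (h : ℝ → ℝ) (x : ℝ) : ℝ :=
  ar * x ^ r + as * x ^ s + ∫ β in B, h β * x ^ β ∂μ

private lemma rpow_le_add' {x p q β : ℝ} (hx : 0 < x) (hpb : p ≤ β) (hbq : β ≤ q) :
    x ^ β ≤ x ^ p + x ^ q := by
  rcases le_total x 1 with hx1 | hx1
  · have h1 : x ^ β ≤ x ^ p := Real.rpow_le_rpow_of_exponent_ge hx hx1 hpb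
    have h2 : 0 ≤ x ^ q := Real.rpow_nonneg hx.le q
    linarith
  · have h1 : x ^ β ≤ x ^ q := Real.rpow_le_rpow_of_exponent_le hx1 hbq
    have h2 : 0 ≤ x ^ p := Real.rpow_nonneg hx.le p
    linarith

private lemma rpow_le_add {x p q β : ℝ} (hx : 0 ≤ x) (hp : 0 < p) (hpb : p ≤ β) (hbq : β ≤ q) :
    x ^ β ≤ x ^ p + x ^ q := by
  rcases eq_or_lt_of_le hx with h0 | h0
  · rw [← h0, Real.zero_rpow (by linarith), Real.zero_rpow (by linarith : p ≠ 0),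
      Real.zero_rpow (by linarith : q ≠ 0)]
    norm_num
  · exact rpow_le_add' h0 hpb hbq

/-- Superadditivity of `x ^ β` for `β ≥ 1`. -/
private lemma superadd_rpow {x y β : ℝ} (hx : 0 ≤ x) (hy : 0 ≤ y) (hβ : 1 ≤ β) :
    x ^ β + y ^ β ≤ (x + y) ^ β := by
  rcases eq_or_lt_of_le hx with h0 | h0
  · rw [← h0, Real.zero_rpow (by linarith), zero_add, zero_add]
  rcases eq_or_lt_of_le hy with h0' | h0'
  · rw [← h0', Real.zero_rpow (by linarith), add_zero, add_zero]
  have hxy : 0 < x + y := by linarith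
  have e1 : x ^ β = x * x ^ (β - 1) := by
    rw [← Real.rpow_one_add' (by linarith) (by linarith)]; ring_nf
  have e2 : y ^ β = y * y ^ (β - 1) := by
    rw [← Real.rpow_one_add' (by linarith) (by linarith)]; ring_nf
  have e3 : (x + y) ^ β = (x + y) * (x + y) ^ (β - 1) := by
    rw [← Real.rpow_one_add' (by linarith) (by linarith)]; ring_nf
  have b1 : x ^ (β - 1) ≤ (x + y) ^ (β - 1) :=
    Real.rpow_le_rpow hx (by linarith) (by linarith)
  have b2 : y ^ (β - 1) ≤ (x + y) ^ (β - 1) :=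
    Real.rpow_le_rpow hy (by linarith) (by linarith)
  calc x ^ β + y ^ β = x * x ^ (β - 1) + y * y ^ (β - 1) := by rw [e1, e2]
    _ ≤ x * (x + y) ^ (β - 1) + y * (x + y) ^ (β - 1) := by
        gcongr
    _ = (x + y) ^ β := by rw [e3]; ring

/-- Key interpolation inequality for differences of powers. -/
private lemma pow_diff_le {p q γ t w : ℝ} (hp : 0 < p) (hγ1 : p ≤ γ) (hγ2 : γ ≤ q)
    (ht : 0 ≤ t) (htw : t ≤ w) :
    w ^ γ - t ^ γ ≤ (q / p) * ((w ^ p - t ^ p) + (w ^ q - t ^ q)) := by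
  set ψ : ℝ → ℝ := fun u => q / p * (u ^ p + u ^ q) - u ^ γ with hψ
  have hγ0 : 0 < γ := lt_of_lt_of_le hp hγ1
  have hq0 : 0 < q := lt_of_lt_of_le hγ0 hγ2
  have hderiv : ∀ u : ℝ, 0 < u →
      HasDerivAt ψ (q / p * (p * u ^ (p - 1) + q * u ^ (q - 1)) - γ * u ^ (γ - 1)) u := by
    intro u hu
    exact (((Real.hasDerivAt_rpow_const (p := p) (Or.inl hu.ne')).add
      (Real.hasDerivAt_rpow_const (p := q) (Or.inl hu.ne'))).const_mul (q / p)).sub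
      (Real.hasDerivAt_rpow_const (p := γ) (Or.inl hu.ne'))
  have hmono : MonotoneOn ψ (Set.Ici 0) := by
    apply monotoneOn_of_deriv_nonneg (convex_Ici 0)
    · intro u hu
      apply ContinuousWithinAt.sub
      apply ContinuousWithinAt.mul continuousWithinAt_const
      apply ContinuousWithinAt.add
      · exact (Real.continuousAt_rpow_const u p (Or.inr hp.le)).continuousWithinAt
      · exact (Real.continuousAt_rpow_const u q (Or.inr hq0.le)).continuousWithinAt
      · exact (Real.continuousAt_rpow_const u γ (Or.inr hγ0.le)).continuousWithinAt
    · rw [interior_Ici]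
      intro u hu
      exact (hderiv u hu).differentiableAt.differentiableWithinAt
    · rw [interior_Ici]
      intro u hu
      rw [(hderiv u hu).deriv]
      have h1 : u ^ (γ - 1) ≤ u ^ (p - 1) + u ^ (q - 1) :=
        rpow_le_add' hu (by linarith) (by linarith)
      have h2 : 0 ≤ u ^ (p - 1) := Real.rpow_nonneg hu.le _
      have h3 : 0 ≤ u ^ (q - 1) := Real.rpow_nonneg hu.le _
      have h4 : q / p * p = q := div_mul_cancel₀ q hp.ne'
      have h5 : q ≤ q / p * q := by
        have : (1 : ℝ) ≤ q / p := (one_le_div hp).2 (le_trans hγ1 hγ2)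
        nlinarith
      nlinarith [mul_le_mul_of_nonneg_left h1 hγ0.le]
  have := hmono (Set.mem_Ici.2 ht) (Set.mem_Ici.2 (le_trans ht htw)) htw
  simp only [hψ] at this
  linarith

/-- Key inequality: superadditivity defect at `β ∈ [r,s]` is dominated by those at `r` and `s`. -/
private lemma key_ineq_s12 {r s β x y : ℝ} (hr : 1 < r) (hβ1 : r ≤ β) (hβ2 : β ≤ s)
    (hx : 0 ≤ x) (hy : 0 ≤ y) :
    (x + y) ^ β - x ^ β - y ^ β ≤ (s * (s - 1) / (r * (r - 1))) *
      (((x + y) ^ r - x ^ r - y ^ r) + ((x + y) ^ s - x ^ s - y ^ s)) := by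
  set C : ℝ := s * (s - 1) / (r * (r - 1)) with hC
  have hs1 : 1 < s := lt_of_lt_of_le (lt_of_lt_of_le hr hβ1) hβ2
  set G : ℝ → ℝ := fun u =>
    C * (((u + y) ^ r - u ^ r - y ^ r) + ((u + y) ^ s - u ^ s - y ^ s)) -
      ((u + y) ^ β - u ^ β - y ^ β) with hG
  have hderiv : ∀ u : ℝ, 0 < u →
      HasDerivAt G (C * ((r * (u + y) ^ (r - 1) - r * u ^ (r - 1)) +
        (s * (u + y) ^ (s - 1) - s * u ^ (s - 1))) -
        (β * (u + y) ^ (β - 1) - β * u ^ (β - 1))) u := by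
    intro u hu
    have huy : 0 < u + y := by linarith
    have hcomp : ∀ γ : ℝ, HasDerivAt (fun v : ℝ => (v + y) ^ γ) (γ * (u + y) ^ (γ - 1)) u := by
      intro γ
      have h1 : HasDerivAt (fun v : ℝ => v + y) 1 u := (hasDerivAt_id u).add_const y
      have h2 := (Real.hasDerivAt_rpow_const (x := u + y) (p := γ) (Or.inl huy.ne')).comp u h1
      simpa [Function.comp_def] using h2
    have hpow : ∀ γ : ℝ, HasDerivAt (fun v : ℝ => v ^ γ) (γ * u ^ (γ - 1)) u := fun γ =>
      Real.hasDerivAt_rpow_const (Or.inl hu.ne')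
    exact ((((((hcomp r).sub (hpow r)).sub_const (y ^ r)).add
      ((((hcomp s).sub (hpow s)).sub_const (y ^ s)))).const_mul C).sub
      ((((hcomp β).sub (hpow β)).sub_const (y ^ β))))
  have hmono : MonotoneOn G (Set.Ici 0) := by
    apply monotoneOn_of_deriv_nonneg (convex_Ici 0)
    · -- continuity
      have hc : ∀ γ : ℝ, 0 < γ → ContinuousOn (fun u : ℝ => (u + y) ^ γ - u ^ γ - y ^ γ)
          (Set.Ici 0) := by
        intro γ hγ
        intro u hu
        apply ContinuousWithinAt.sub
        apply ContinuousWithinAt.sub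
        · have hadd : ContinuousAt (fun v : ℝ => v + y) u :=
            (continuous_id.add continuous_const).continuousAt
          exact (hadd.rpow continuousAt_const (Or.inr hγ)).continuousWithinAt
        · exact (Real.continuousAt_rpow_const u γ (Or.inr hγ.le)).continuousWithinAt
        · exact continuousWithinAt_const
      exact (continuousOn_const.mul ((hc r (by linarith)).add (hc s (by linarith)))).sub
        (hc β (by linarith))
    · rw [interior_Ici]
      intro u hu
      exact (hderiv u hu).differentiableAt.differentiableWithinAt
    · rw [interior_Ici]
      intro u hu
      rw [(hderiv u hu).deriv]
      have huy : u ≤ u + y := by linarith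
      have hβ0 : 0 < β := by linarith
      have hkey := pow_diff_le (p := r - 1) (q := s - 1) (γ := β - 1) (t := u) (w := u + y)
        (by linarith) (by linarith) (by linarith) hu.le huy
      have hA : 0 ≤ (u + y) ^ (r - 1) - u ^ (r - 1) := by
        have := Real.rpow_le_rpow hu.le huy (by linarith : (0:ℝ) ≤ r - 1)
        linarith
      have hB : 0 ≤ (u + y) ^ (s - 1) - u ^ (s - 1) := by
        have := Real.rpow_le_rpow hu.le huy (by linarith : (0:ℝ) ≤ s - 1)
        linarith
      have hX : 0 ≤ (u + y) ^ (β - 1) - u ^ (β - 1) := by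
        have := Real.rpow_le_rpow hu.le huy (by linarith : (0:ℝ) ≤ β - 1)
        linarith
      -- β * X ≤ s * X ≤ s * ((s-1)/(r-1)) * (A + B) ≤ C * (r * A + s * B)
      have h1 : β * ((u + y) ^ (β - 1) - u ^ (β - 1)) ≤
          s * ((s - 1) / (r - 1) * (((u + y) ^ (r - 1) - u ^ (r - 1)) +
            ((u + y) ^ (s - 1) - u ^ (s - 1)))) := by
        have hβs : β * ((u + y) ^ (β - 1) - u ^ (β - 1)) ≤
            s * ((u + y) ^ (β - 1) - u ^ (β - 1)) := by nlinarith
        have := mul_le_mul_of_nonneg_left hkey (by linarith : (0:ℝ) ≤ s)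
        linarith
      have hr1 : (0:ℝ) < r - 1 := by linarith
      have hrr : (0:ℝ) < r * (r - 1) := by nlinarith
      have hK : (s - 1) / (r - 1) * (r - 1) = s - 1 := div_mul_cancel₀ _ hr1.ne'
      have hCval : C * (r * (r - 1)) = s * (s - 1) := by
        rw [hC]; exact div_mul_cancel₀ _ hrr.ne'
      have hC0 : 0 < C := by
        rw [hC]; apply div_pos (by nlinarith) hrr
      have hCr : C * r = s * ((s - 1) / (r - 1)) := by
        apply mul_right_cancel₀ hr1.ne'
        calc C * r * (r - 1) = C * (r * (r - 1)) := by ring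
          _ = s * (s - 1) := hCval
          _ = s * ((s - 1) / (r - 1) * (r - 1)) := by rw [hK]
          _ = s * ((s - 1) / (r - 1)) * (r - 1) := by ring
      have hCs : s * ((s - 1) / (r - 1)) ≤ C * s := by
        rw [← hCr]
        have : r ≤ s := le_trans hβ1 hβ2
        nlinarith
      have h2 : s * ((s - 1) / (r - 1)) * (((u + y) ^ (r - 1) - u ^ (r - 1)) +
            ((u + y) ^ (s - 1) - u ^ (s - 1))) ≤
          C * (r * ((u + y) ^ (r - 1) - u ^ (r - 1)) + s * ((u + y) ^ (s - 1) - u ^ (s - 1))) := by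
        have e1 : C * (r * ((u + y) ^ (r - 1) - u ^ (r - 1))) =
            s * ((s - 1) / (r - 1)) * ((u + y) ^ (r - 1) - u ^ (r - 1)) := by
          rw [← mul_assoc, hCr]
        have e2 : s * ((s - 1) / (r - 1)) * ((u + y) ^ (s - 1) - u ^ (s - 1)) ≤
            C * (s * ((u + y) ^ (s - 1) - u ^ (s - 1))) := by
          rw [← mul_assoc]
          exact mul_le_mul_of_nonneg_right hCs hB
        linarith [e2, e1.ge, e1.le]
      nlinarith [h1, h2]
  have h0 : G 0 = 0 := by
    simp only [hG, zero_add, Real.zero_rpow (by linarith : r ≠ 0),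
      Real.zero_rpow (by linarith : s ≠ 0), Real.zero_rpow (by linarith : β ≠ 0)]
    ring
  have := hmono (Set.mem_Ici.2 le_rfl) (Set.mem_Ici.2 hx) hx
  rw [h0] at this
  simp only [hG] at this
  linarith

theorem stmt12 (r s : ℝ) (hr : 1 < r) (hrs : r < s)
    (B : Set ℝ) (hBmeas : MeasurableSet B) (hBsub : B ⊆ Set.Ioo r s)
    (ar as : ℝ) (har : 0 < ar) (has : 0 < as)
    (μ : Measure ℝ) [IsFiniteMeasure μ] (hμB : 0 < μ B)
    (h : ℝ → ℝ) (hmeas : Measurable h) (hbd : ∃ C : ℝ, ∀ β ∈ B, |h β| ≤ C) :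
    ∃ ν > (0 : ℝ), (∀ β ∈ B, -ν < h β) →
      (∀ x : ℝ, 0 ≤ x → 0 ≤ fMix ar as r s B μ h x) ∧
      (∀ x y : ℝ, 0 ≤ x → 0 ≤ y →
        fMix ar as r s B μ h x + fMix ar as r s B μ h y ≤ fMix ar as r s B μ h (x + y)) := by
  obtain ⟨Ch, hCh⟩ := hbd
  set C : ℝ := s * (s - 1) / (r * (r - 1)) with hCdef
  have hs1 : 1 < s := lt_trans hr hrs
  have hC1 : 1 ≤ C := by
    rw [hCdef, le_div_iff₀ (by nlinarith)]
    nlinarith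
  have hC0 : 0 < C := lt_of_lt_of_le one_pos hC1
  set m : ℝ := (μ B).toReal with hm
  have hm0 : 0 < m := ENNReal.toReal_pos hμB.ne' (measure_ne_top μ B)
  set ν : ℝ := min ar as / (C * m) with hν
  have hν0 : 0 < ν := div_pos (lt_min har has) (mul_pos hC0 hm0)
  refine ⟨ν, hν0, ?_⟩
  intro hh
  have hνCm : ν * (C * m) = min ar as := div_mul_cancel₀ _ (by positivity)
  have hνm : ν * m ≤ min ar as := by
    nlinarith [mul_nonneg (mul_nonneg hν0.le hm0.le) (by linarith : (0:ℝ) ≤ C - 1)]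
  -- integrability
  have hint : ∀ x : ℝ, 0 ≤ x → IntegrableOn (fun β => h β * x ^ β) B μ := by
    intro x hx
    apply Integrable.mono' (g := fun _ => |Ch| * (x ^ r + x ^ s))
      (integrable_const _)
    · have hmx : Measurable (fun β : ℝ => x ^ β) := by
        rcases eq_or_lt_of_le hx with h0 | h0
        · have he : (fun β : ℝ => x ^ β) = fun β => if β = 0 then 1 else 0 := by
            funext β
            rcases eq_or_ne β 0 with hb | hb
            · simp [hb, Real.rpow_zero]
            · simp [hb, ← h0, Real.zero_rpow hb]
          rw [he]
          exact Measurable.ite (measurableSet_eq_fun measurable_id measurable_const)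
            measurable_const measurable_const
        · have he : (fun β : ℝ => x ^ β) = fun β => Real.exp (Real.log x * β) := by
            funext β
            exact Real.rpow_def_of_pos h0 β
          rw [he]
          exact Real.measurable_exp.comp (measurable_id.const_mul _)
      exact (hmeas.mul hmx).aestronglyMeasurable
    · rw [ae_restrict_iff' hBmeas]
      filter_upwards with β hβ
      obtain ⟨hβ1, hβ2⟩ := hBsub hβ
      have hb0 : 0 ≤ x ^ β := Real.rpow_nonneg hx β
      have hble : x ^ β ≤ x ^ r + x ^ s :=
        rpow_le_add hx (by linarith) hβ1.le hβ2.le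
      have : |h β * x ^ β| = |h β| * x ^ β := by
        rw [abs_mul, abs_of_nonneg hb0]
      rw [Real.norm_eq_abs, this]
      have h1 : |h β| ≤ |Ch| := le_trans (hCh β hβ) (le_abs_self Ch)
      nlinarith [abs_nonneg (h β), abs_nonneg Ch]
  have hconst : ∀ c : ℝ, ∫ _ in B, c ∂μ = m * c := by
    intro c
    rw [setIntegral_const, smul_eq_mul]; rfl
  constructor
  · -- nonnegativity
    intro x hx
    have hlow : m * (-(ν * (x ^ r + x ^ s))) ≤ ∫ β in B, h β * x ^ β ∂μ := by
      rw [← hconst]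
      apply setIntegral_mono_on (integrable_const _) (hint x hx) hBmeas
      intro β hβ
      obtain ⟨hβ1, hβ2⟩ := hBsub hβ
      have hb0 : 0 ≤ x ^ β := Real.rpow_nonneg hx β
      have hble : x ^ β ≤ x ^ r + x ^ s :=
        rpow_le_add hx (by linarith) hβ1.le hβ2.le
      have h1 : -ν * x ^ β ≤ h β * x ^ β :=
        mul_le_mul_of_nonneg_right (hh β hβ).le hb0
      nlinarith [hν0.le]
    have hxr : 0 ≤ x ^ r := Real.rpow_nonneg hx r
    have hxs : 0 ≤ x ^ s := Real.rpow_nonneg hx s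
    have h1 : ν * m ≤ ar := le_trans hνm (min_le_left _ _)
    have h2 : ν * m ≤ as := le_trans hνm (min_le_right _ _)
    unfold fMix
    have e : m * (-(ν * (x ^ r + x ^ s))) = -((ν * m) * x ^ r + (ν * m) * x ^ s) := by ring
    have b1 : (ν * m) * x ^ r ≤ ar * x ^ r := mul_le_mul_of_nonneg_right h1 hxr
    have b2 : (ν * m) * x ^ s ≤ as * x ^ s := mul_le_mul_of_nonneg_right h2 hxs
    linarith [hlow, e.le, e.ge]
  · -- superadditivity
    intro x y hx hy
    have hxy : 0 ≤ x + y := by linarith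
    set Dr : ℝ := (x + y) ^ r - x ^ r - y ^ r with hDr
    set Ds : ℝ := (x + y) ^ s - x ^ s - y ^ s with hDs
    have hDr0 : 0 ≤ Dr := by
      have := superadd_rpow hx hy hr.le; rw [hDr]; linarith
    have hDs0 : 0 ≤ Ds := by
      have := superadd_rpow hx hy hs1.le; rw [hDs]; linarith
    have hsplit : (∫ β in B, h β * (x + y) ^ β ∂μ) - (∫ β in B, h β * x ^ β ∂μ) -
        (∫ β in B, h β * y ^ β ∂μ) =
        ∫ β in B, h β * ((x + y) ^ β - x ^ β - y ^ β) ∂μ := by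
      have i1 : IntegrableOn (fun β => h β * (x + y) ^ β - h β * x ^ β) B μ :=
        (hint (x + y) hxy).sub (hint x hx)
      have e1 : ∫ β in B, (h β * (x + y) ^ β - h β * x ^ β) ∂μ
          = (∫ β in B, h β * (x + y) ^ β ∂μ) - ∫ β in B, h β * x ^ β ∂μ :=
        integral_sub (hint (x + y) hxy) (hint x hx)
      have e2 : ∫ β in B, (h β * (x + y) ^ β - h β * x ^ β - h β * y ^ β) ∂μ
          = (∫ β in B, (h β * (x + y) ^ β - h β * x ^ β) ∂μ) - ∫ β in B, h β * y ^ β ∂μ :=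
        integral_sub i1 (hint y hy)
      have e3 : ∫ β in B, h β * ((x + y) ^ β - x ^ β - y ^ β) ∂μ
          = ∫ β in B, (h β * (x + y) ^ β - h β * x ^ β - h β * y ^ β) ∂μ := by
        congr 1
        funext β
        ring
      rw [e3, e2, e1]
    have hintD : IntegrableOn (fun β => h β * ((x + y) ^ β - x ^ β - y ^ β)) B μ := by
      have i1 : IntegrableOn (fun β => h β * (x + y) ^ β - h β * x ^ β) B μ :=
        (hint (x + y) hxy).sub (hint x hx)
      have i2 : IntegrableOn (fun β => h β * (x + y) ^ β - h β * x ^ β - h β * y ^ β) B μ :=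
        i1.sub (hint y hy)
      exact i2.congr (Filter.Eventually.of_forall fun β => by ring)
    have hlow : m * (-(ν * C * (Dr + Ds))) ≤
        ∫ β in B, h β * ((x + y) ^ β - x ^ β - y ^ β) ∂μ := by
      rw [← hconst]
      apply setIntegral_mono_on (integrable_const _) hintD hBmeas
      intro β hβ
      obtain ⟨hβ1, hβ2⟩ := hBsub hβ
      have hD0 : 0 ≤ (x + y) ^ β - x ^ β - y ^ β := by
        have := superadd_rpow hx hy (by linarith : 1 ≤ β); linarith
      have hDle : (x + y) ^ β - x ^ β - y ^ β ≤ C * (Dr + Ds) :=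
        key_ineq_s12 hr hβ1.le hβ2.le hx hy
      have h1 : -ν * ((x + y) ^ β - x ^ β - y ^ β) ≤
          h β * ((x + y) ^ β - x ^ β - y ^ β) :=
        mul_le_mul_of_nonneg_right (hh β hβ).le hD0
      nlinarith [hν0.le]
    have hmin1 : min ar as ≤ ar := min_le_left _ _
    have hmin2 : min ar as ≤ as := min_le_right _ _
    have hmm : m * (ν * C * (Dr + Ds)) = min ar as * (Dr + Ds) := by
      rw [← hνCm]; ring
    unfold fMix
    have e : m * (-(ν * C * (Dr + Ds))) = -(m * (ν * C * (Dr + Ds))) := by ring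
    have b1 : min ar as * Dr ≤ ar * Dr := mul_le_mul_of_nonneg_right hmin1 hDr0
    have b2 : min ar as * Ds ≤ as * Ds := mul_le_mul_of_nonneg_right hmin2 hDs0
    have er : ar * (x + y) ^ r - ar * x ^ r - ar * y ^ r = ar * Dr := by rw [hDr]; ring
    have es : as * (x + y) ^ s - as * x ^ s - as * y ^ s = as * Ds := by rw [hDs]; ring
    have emin : min ar as * (Dr + Ds) = min ar as * Dr + min ar as * Ds := by ring
    linarith [hlow, hsplit, e.le, e.ge, hmm.le, hmm.ge, er.le, er.ge, es.le, es.ge,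
      emin.le, emin.ge]
end

section
/- Let p(x) = Σ_{k=0}^n a_k x^k be a real polynomial of degree n ≥ 3 such that p(x) > 0 for every x > 0 and p(√(xy))² ≤ p(x)·p(y) for all x, y ∈ (0,∞). Then a_0 ≥ 0, a_1 ≥ 0, a_{n−1} ≥ 0, and a_n ≥ 0. -/
open Finset

lemma key15 (n : ℕ) (hn : 1 ≤ n) (a : ℕ → ℝ)
    (hpos : ∀ x : ℝ, 0 < x → 0 < ∑ k ∈ Finset.range (n + 1), a k * x ^ k)
    (hlc : ∀ x y : ℝ, 0 < x → 0 < y →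
      (∑ k ∈ Finset.range (n + 1), a k * Real.sqrt (x * y) ^ k) ^ 2 ≤
        (∑ k ∈ Finset.range (n + 1), a k * x ^ k) *
          (∑ k ∈ Finset.range (n + 1), a k * y ^ k)) :
    0 ≤ a 0 ∧ 0 ≤ a 1 := by
  set f : ℝ → ℝ := fun t => ∑ k ∈ Finset.range (n + 1), a k * t ^ k with hf
  have hfc : Continuous f := by
    apply continuous_finset_sum
    intro k _
    exact continuous_const.mul (continuous_pow k)
  have hf0 : f 0 = a 0 := by
    show (∑ k ∈ Finset.range (n + 1), a k * (0:ℝ) ^ k) = a 0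
    rw [Finset.sum_range_succ']
    simp
  have ha0 : 0 ≤ a 0 := by
    have htend : Filter.Tendsto f (nhdsWithin 0 (Set.Ioi 0)) (nhds (a 0)) := by
      rw [← hf0]
      exact (hfc.tendsto 0).mono_left nhdsWithin_le_nhds
    exact ge_of_tendsto htend (by
      filter_upwards [self_mem_nhdsWithin] with x hx
      exact (hpos x hx).le)
  refine ⟨ha0, ?_⟩
  rcases eq_or_lt_of_le ha0 with h0 | h0
  · -- a 0 = 0 case
    set g : ℝ → ℝ := fun t => ∑ j ∈ Finset.range n, a (j + 1) * t ^ j with hg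
    have hgc : Continuous g := by
      apply continuous_finset_sum
      intro k _
      exact continuous_const.mul (continuous_pow k)
    have hfg : ∀ t : ℝ, f t = t * g t := by
      intro t
      show (∑ k ∈ Finset.range (n + 1), a k * t ^ k)
        = t * ∑ j ∈ Finset.range n, a (j + 1) * t ^ j
      rw [Finset.sum_range_succ', Finset.mul_sum]
      simp [← h0, mul_comm, mul_assoc, pow_succ, mul_left_comm]
    have hg0 : g 0 = a 1 := by
      show (∑ j ∈ Finset.range n, a (j + 1) * (0:ℝ) ^ j) = a 1
      rw [Finset.sum_eq_single_of_mem 0 (Finset.mem_range.mpr (by omega))]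
      · norm_num
      · intro b _ hb
        simp [zero_pow hb]
    have htend : Filter.Tendsto g (nhdsWithin 0 (Set.Ioi 0)) (nhds (a 1)) := by
      rw [← hg0]
      exact (hgc.tendsto 0).mono_left nhdsWithin_le_nhds
    refine ge_of_tendsto htend ?_
    filter_upwards [self_mem_nhdsWithin] with x hx
    have hx' : (0:ℝ) < x := hx
    have h2 : 0 < x * g x := by
      rw [← hfg]
      exact hpos x hx'
    nlinarith
  · -- a 0 > 0 case
    have hderiv : HasDerivAt f (a 1) 0 := by
      have h1 : HasDerivAt f (∑ k ∈ Finset.range (n + 1), a k * (k * (0:ℝ) ^ (k - 1))) 0 := by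
        apply HasDerivAt.fun_sum
        intro k _
        exact (hasDerivAt_pow k 0).const_mul (a k)
      convert h1 using 1
      rw [Finset.sum_eq_single_of_mem 1 (Finset.mem_range.mpr (by omega))]
      · norm_num
      · intro b _ hb
        match b with
        | 0 => norm_num
        | 1 => exact absurd rfl hb
        | (m+2) => simp [zero_pow]
    set G : ℝ → ℝ := fun t => f (2 * t) * f (t / 2) - f t ^ 2 with hGdef
    have hG0 : G 0 = 0 := by
      show f (2 * 0) * f (0 / 2) - f 0 ^ 2 = 0
      norm_num
      ring
    have hGpos : ∀ t : ℝ, 0 < t → 0 ≤ G t := by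
      intro t ht
      have h1 : Real.sqrt (2 * t * (t / 2)) = t := by
        rw [show 2 * t * (t / 2) = t ^ 2 by ring, Real.sqrt_sq ht.le]
      have h2 := hlc (2 * t) (t / 2) (by linarith) (by linarith)
      rw [h1] at h2
      show (0:ℝ) ≤ f (2 * t) * f (t / 2) - f t ^ 2
      rw [sub_nonneg]
      exact h2
    have hGderiv : HasDerivAt G (a 0 * a 1 / 2) 0 := by
      have hderiv2 : HasDerivAt f (a 1) (2 * 0) := by norm_num; exact hderiv
      have hderiv3 : HasDerivAt f (a 1) (0 / 2) := by norm_num; exact hderiv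
      have hinner1 : HasDerivAt (fun t : ℝ => 2 * t) 2 0 := by
        simpa using (hasDerivAt_id (0:ℝ)).const_mul (2:ℝ)
      have hinner2 : HasDerivAt (fun t : ℝ => t / 2) (1/2) 0 := by
        simpa using (hasDerivAt_id (0:ℝ)).div_const (2:ℝ)
      have h1 : HasDerivAt (fun t : ℝ => f (2 * t)) (a 1 * 2) 0 := by
        have := hderiv2.comp 0 hinner1
        simpa [Function.comp_def] using this
      have h2 : HasDerivAt (fun t : ℝ => f (t / 2)) (a 1 * (1/2)) 0 := by
        have := hderiv3.comp 0 hinner2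
        simpa [Function.comp_def] using this
      have h3 : HasDerivAt (fun t : ℝ => f t ^ 2) (2 * f 0 ^ 1 * a 1) 0 := hderiv.pow 2
      have h4 := (h1.mul h2).sub h3
      convert h4 using 1
      show a 0 * a 1 / 2 = a 1 * 2 * f (0 / 2) + f (2 * 0) * (a 1 * (1/2)) - 2 * f 0 ^ 1 * a 1
      norm_num [hf0]
      ring
      all_goals rfl
    have hslope : Filter.Tendsto (fun t => G t / t) (nhdsWithin 0 (Set.Ioi 0)) (nhds (a 0 * a 1 / 2)) := by
      have h1 := hasDerivAt_iff_tendsto_slope.mp hGderiv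
      have h2 := h1.mono_left (nhdsWithin_mono 0
        (by intro x hx; exact ne_of_gt hx : Set.Ioi (0:ℝ) ⊆ {0}ᶜ))
      apply h2.congr'
      filter_upwards [self_mem_nhdsWithin] with x hx
      simp [slope, hG0, div_eq_inv_mul]
    have hd : 0 ≤ a 0 * a 1 / 2 := by
      refine ge_of_tendsto hslope ?_
      filter_upwards [self_mem_nhdsWithin] with x hx
      exact div_nonneg (hGpos x hx) (le_of_lt hx)
    nlinarith

theorem stmt15 (n : ℕ) (hn : 3 ≤ n) (a : ℕ → ℝ) (han : a n ≠ 0)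
    (hpos : ∀ x : ℝ, 0 < x → 0 < ∑ k ∈ Finset.range (n + 1), a k * x ^ k)
    (hlc : ∀ x y : ℝ, 0 < x → 0 < y →
      (∑ k ∈ Finset.range (n + 1), a k * Real.sqrt (x * y) ^ k) ^ 2 ≤
        (∑ k ∈ Finset.range (n + 1), a k * x ^ k) *
          (∑ k ∈ Finset.range (n + 1), a k * y ^ k)) :
    0 ≤ a 0 ∧ 0 ≤ a 1 ∧ 0 ≤ a (n - 1) ∧ 0 ≤ a n := by
  obtain ⟨h0, h1⟩ := key15 n (by omega) a hpos hlc
  set b : ℕ → ℝ := fun k => a (n - k) with hb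
  have hq : ∀ x : ℝ, 0 < x → (∑ k ∈ Finset.range (n + 1), b k * x ^ k)
      = x ^ n * ∑ k ∈ Finset.range (n + 1), a k * (1 / x) ^ k := by
    intro x hx
    rw [Finset.mul_sum, ← Finset.sum_range_reflect]
    apply Finset.sum_congr rfl
    intro k hk
    have hk' : k ≤ n := by
      have := Finset.mem_range.mp hk
      omega
    have h2 : n + 1 - 1 - k = n - k := by omega
    rw [h2, hb]
    simp only
    rw [Nat.sub_sub_self hk']
    have hxj : x ^ (n - k) = x ^ n * (1 / x) ^ k := by
      rw [one_div, inv_pow, pow_sub₀ _ hx.ne' hk']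
    rw [hxj]
    ring
  have qpos : ∀ x : ℝ, 0 < x → 0 < ∑ k ∈ Finset.range (n + 1), b k * x ^ k := by
    intro x hx
    rw [hq x hx]
    exact mul_pos (pow_pos hx n) (hpos (1 / x) (by positivity))
  have qlc : ∀ x y : ℝ, 0 < x → 0 < y →
      (∑ k ∈ Finset.range (n + 1), b k * Real.sqrt (x * y) ^ k) ^ 2 ≤
        (∑ k ∈ Finset.range (n + 1), b k * x ^ k) *
          (∑ k ∈ Finset.range (n + 1), b k * y ^ k) := by
    intro x y hx hy
    have hxy : 0 < x * y := mul_pos hx hy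
    have hs : 0 < Real.sqrt (x * y) := Real.sqrt_pos.mpr hxy
    rw [hq _ hs, hq x hx, hq y hy]
    have h1 : (1:ℝ) / Real.sqrt (x * y) = Real.sqrt ((1 / x) * (1 / y)) := by
      rw [one_div, one_div, one_div, ← mul_inv, Real.sqrt_inv]
    have h2 : (Real.sqrt (x * y) ^ n) ^ 2 = (x * y) ^ n := by
      rw [← pow_mul, mul_comm n 2, pow_mul, Real.sq_sqrt hxy.le]
    calc (Real.sqrt (x * y) ^ n * ∑ k ∈ Finset.range (n + 1),
            a k * (1 / Real.sqrt (x * y)) ^ k) ^ 2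
        = (x * y) ^ n * (∑ k ∈ Finset.range (n + 1),
            a k * Real.sqrt ((1 / x) * (1 / y)) ^ k) ^ 2 := by
          rw [mul_pow, h2, h1]
      _ ≤ (x * y) ^ n * ((∑ k ∈ Finset.range (n + 1), a k * (1 / x) ^ k) *
            (∑ k ∈ Finset.range (n + 1), a k * (1 / y) ^ k)) := by
          apply mul_le_mul_of_nonneg_left _ (pow_nonneg hxy.le n)
          exact hlc (1 / x) (1 / y) (by positivity) (by positivity)
      _ = (x ^ n * ∑ k ∈ Finset.range (n + 1), a k * (1 / x) ^ k) *
            (y ^ n * ∑ k ∈ Finset.range (n + 1), a k * (1 / y) ^ k) := by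
          rw [mul_pow]
          ring
  obtain ⟨hbn, hbn1⟩ := key15 n (by omega) b qpos qlc
  refine ⟨h0, h1, hbn1, ?_⟩
  simpa [hb] using hbn
end

section
/- For every n ≥ 2, there exists an n×n real positive semidefinite matrix A such that N_k(A) ≠ ∅ for every k = 1, …, n−1. -/
open Matrix
open scoped Classical

/-- The `m`-th entrywise (Hadamard) power of `A`; for `m = 0` it is the matrix
whose `(i,j)` entry is `1` if `A i j ≠ 0` and `0` if `A i j = 0`. -/
noncomputable def hadPow {n : ℕ} (A : Matrix (Fin n) (Fin n) ℝ) (m : ℕ) :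
    Matrix (Fin n) (Fin n) ℝ :=
  if m = 0 then Matrix.of (fun i j => if A i j = 0 then 0 else 1)
  else Matrix.of (fun i j => A i j ^ m)

/-- `N_k(A)`: vectors `β` with `βᵀ A^{∘m} β = 0` for all `0 ≤ m ≤ k−1`
and `βᵀ A^{∘k} β > 0`. -/
noncomputable def Nset {n : ℕ} (A : Matrix (Fin n) (Fin n) ℝ) (k : ℕ) : Set (Fin n → ℝ) :=
  {β | (∀ m < k, β ⬝ᵥ (hadPow A m).mulVec β = 0) ∧ 0 < β ⬝ᵥ (hadPow A k).mulVec β}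

open Finset in
/-- Iterated forward differences of `x ↦ (x+c)^m`. -/
lemma fwdDiff_pow (k : ℕ) : ∀ m ≤ k, ∀ c : ℝ,
    (fwdDiff (1:ℝ))^[k] (fun x => (x + c) ^ m) =
      fun _ => if m = k then (k.factorial : ℝ) else 0 := by
  induction k with
  | zero =>
    intro m hm c
    interval_cases m
    simp
  | succ k ih =>
    intro m hm c
    rw [Function.iterate_succ_apply]
    rcases Nat.eq_zero_or_pos m with hm0 | hm0
    · subst hm0
      have h1 : (fun x : ℝ => (x + c) ^ 0) = fun _ : ℝ => (1:ℝ) := by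
        funext x; simp
      rw [h1, fwdDiff_const]
      rw [Function.iterate_fixed (by funext x; simp [fwdDiff] : fwdDiff (1:ℝ) (fun _ => (0:ℝ)) = fun _ => 0) k]
      funext x
      simp [(by omega : ¬ (0 = k + 1))]
    · obtain ⟨m', rfl⟩ := Nat.exists_eq_add_of_le hm0
      -- m = 1 + m'
      have hexp : fwdDiff (1:ℝ) (fun x => (x + c) ^ (1 + m')) =
          ∑ j ∈ range (1 + m'), ((1 + m').choose j : ℝ) • (fun x : ℝ => (x + c) ^ j) := by
        funext x
        have := add_pow (x + c) (1:ℝ) (1 + m')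
        simp only [fwdDiff, one_pow, mul_one] at this ⊢
        rw [show x + 1 + c = (x + c) + 1 by ring, this, Finset.sum_range_succ]
        simp [Finset.sum_apply, mul_comm]
      rw [hexp, fwdDiff_iter_finset_sum]
      simp only [fwdDiff_iter_const_smul]
      have hij : ∀ j ∈ range (1 + m'), j ≤ k := by
        intro j hj; simp only [Finset.mem_range] at hj; omega
      funext x
      rw [Finset.sum_apply]
      simp only [Pi.smul_apply]
      rcases eq_or_ne (1 + m') (k + 1) with hcase | hcase
      · have hm'k : m' = k := by omega
        subst hm'k
        rw [if_pos hcase, Finset.sum_eq_single m']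
        · rw [ih m' le_rfl c]
          simp only [Pi.smul_apply, smul_eq_mul, if_pos rfl]
          rw [Nat.add_comm 1 m', Nat.choose_succ_self_right, Nat.factorial_succ]
          push_cast
          ring
        · intro j hj hjne
          have hjk : j ≤ m' := hij j hj
          rw [ih j hjk c]
          simp [hjne]
        · intro h
          exact absurd (by rw [Nat.add_comm]; exact Finset.self_mem_range_succ m') h
      · have : ∀ j ∈ range (1 + m'), ((1 + m').choose j : ℝ) •
            ((fwdDiff (1:ℝ))^[k] (fun x : ℝ => (x + c) ^ j)) x = 0 := by
          intro j hj
          have hjk : j ≤ k := hij j hj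
          have hjk' : j ≠ k := by simp only [Finset.mem_range] at hj; omega
          rw [ih j hjk c]
          simp [hjk']
        rw [Finset.sum_congr rfl this]
        simp [hcase]

open Finset in
/-- The key alternating-binomial sum identity. -/
lemma alt_sum_pow (k m : ℕ) (hm : m ≤ k) :
    ∑ i ∈ range (k + 1), ((-1:ℝ)) ^ (k - i) * (k.choose i : ℝ) * ((i:ℝ) + 1) ^ m =
      if m = k then (k.factorial : ℝ) else 0 := by
  have h := fwdDiff_iter_eq_sum_shift (1:ℝ) (fun x => (x + 1) ^ m) k 0
  rw [fwdDiff_pow k m hm 1] at h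
  have h' : (if m = k then (k.factorial : ℝ) else 0) =
      ∑ i ∈ range (k + 1), ((-1:ℤ) ^ (k - i) * (k.choose i : ℤ)) •
        ((0:ℝ) + i • (1:ℝ) + 1) ^ m := h
  rw [h']
  apply Finset.sum_congr rfl
  intro i _
  simp only [zsmul_eq_mul, nsmul_eq_mul, mul_one, zero_add]
  push_cast
  ring

theorem stmt16 (n : ℕ) (hn : 2 ≤ n) :
    ∃ A : Matrix (Fin n) (Fin n) ℝ, A.PosSemidef ∧
      ∀ k : ℕ, 1 ≤ k → k ≤ n - 1 → (Nset A k).Nonempty := by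
  set u : Fin n → ℝ := fun i => (i : ℝ) + 1 with hu
  have hupos : ∀ i, 0 < u i := fun i => by positivity
  refine ⟨Matrix.of (fun i j => u i * u j), ?_, ?_⟩
  · rw [Matrix.posSemidef_iff_dotProduct_mulVec]; constructor
    · ext i j
      simp [Matrix.conjTranspose, mul_comm]
    · intro x
      have : dotProduct (star x) ((Matrix.of fun i j => u i * u j) *ᵥ x) =
          (∑ i, u i * x i) ^ 2 := by
        simp only [dotProduct, Matrix.mulVec, star, Matrix.of_apply, Pi.star_apply,
          star_trivial]
        rw [sq, Finset.sum_mul]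
        apply Finset.sum_congr rfl
        intro i _
        rw [Finset.mul_sum, Finset.mul_sum]
        apply Finset.sum_congr rfl
        intro j _
        ring
      rw [this]
      positivity
  · intro k hk1 hkn
    set β : Fin n → ℝ := fun i => (-1:ℝ) ^ (k - (i:ℕ)) * (k.choose i : ℝ) with hβ
    -- quadratic form is a square of the power sum
    have hpow : ∀ m, (hadPow (Matrix.of (fun i j => u i * u j)) m) =
        Matrix.of (fun i j => u i ^ m * u j ^ m) := by
      intro m
      rcases Nat.eq_zero_or_pos m with rfl | hm
      · ext i j
        have hi := (hupos i).ne'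
        have hj := (hupos j).ne'
        simp [hadPow, hi, hj]
      · ext i j
        simp only [hadPow, Matrix.of_apply]
        rw [if_neg hm.ne']
        simp [mul_pow]
    have hquad : ∀ m, β ⬝ᵥ (hadPow (Matrix.of (fun i j => u i * u j)) m).mulVec β =
        (∑ i, β i * u i ^ m) ^ 2 := by
      intro m
      rw [hpow m]
      simp only [dotProduct, Matrix.mulVec, Matrix.of_apply]
      rw [sq, Finset.sum_mul]
      apply Finset.sum_congr rfl
      intro i _
      rw [Finset.mul_sum, Finset.mul_sum]
      apply Finset.sum_congr rfl
      intro j _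
      ring
    -- power sums via the alternating binomial identity
    have hkn' : k + 1 ≤ n := by omega
    have hsum : ∀ m ≤ k, (∑ i, β i * u i ^ m) =
        if m = k then (k.factorial : ℝ) else 0 := by
      intro m hm
      have h1 : (∑ i, β i * u i ^ m) =
          ∑ i ∈ Finset.range n, (-1:ℝ) ^ (k - i) * (k.choose i : ℝ) * ((i:ℝ) + 1) ^ m := by
        rw [← Fin.sum_univ_eq_sum_range
          (fun j => (-1:ℝ) ^ (k - j) * (k.choose j : ℝ) * ((j:ℝ) + 1) ^ m) n]
      have h2 : ∑ i ∈ Finset.range n, (-1:ℝ) ^ (k - i) * (k.choose i : ℝ) * ((i:ℝ) + 1) ^ m =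
          ∑ i ∈ Finset.range (k + 1), (-1:ℝ) ^ (k - i) * (k.choose i : ℝ) * ((i:ℝ) + 1) ^ m := by
        symm
        apply Finset.sum_subset (Finset.range_subset_range.mpr hkn')
        intro i _ hi
        have : k.choose i = 0 := Nat.choose_eq_zero_of_lt (by
          simp only [Finset.mem_range, not_lt] at hi; omega)
        simp [this]
      rw [h1, h2, alt_sum_pow k m hm]
    refine ⟨β, ?_, ?_⟩
    · intro m hm
      rw [hquad m, hsum m (le_of_lt hm), if_neg (Nat.ne_of_lt hm)]
      norm_num
    · rw [hquad k, hsum k le_rfl, if_pos rfl]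
      have : (0:ℝ) < (k.factorial : ℝ) := by positivity
      positivity
end
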